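/- arXiv:1410.4532 — 13 statements merged into one kernel-verified Lean document; each statement's English description precedes it below -/
import Mathlib

section
/- Let (a_i)_{i=1}^n be a sequence of positive integers and let b be a positive integer such that gcd(a_i, b) ≤ g for all 1 ≤ i ≤ n. Then the set of residues modulo b attained by the subset sums {∑_{i∈I} a_i : I ⊆ [n]} has cardinality at least min(b/g, n). -/
/-- The set of residues mod `b` attained by subset sums of `a` has size at least
`min (b/g) n`, when each `gcd (a i) b ≤ g`. -/
theorem stmt0 (n : ℕ) (a : Fin n → ℕ) (ha : ∀ i, 0 < a i) (b g : ℕ) (hb : 0 < b)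
    (hg : 0 < g) (hgcd : ∀ i, Nat.gcd (a i) b ≤ g) :
    min ((b : ℝ) / g) n ≤
      ((Finset.univ.powerset.image (fun I : Finset (Fin n) => (∑ i ∈ I, a i) % b)).card : ℝ) := by
  haveI : NeZero b := ⟨hb.ne'⟩
  set N : Finset ℕ := Finset.univ.powerset.image (fun I : Finset (Fin n) => (∑ i ∈ I, a i) % b)
    with hN
  set f : Finset (Fin n) → ZMod b := fun I => ∑ i ∈ I, (a i : ZMod b) with hf
  set T : ℕ → Finset (ZMod b) :=
    fun k => ((Finset.univ.filter (fun i : Fin n => i.val < k)).powerset).image f with hT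
  have hmono : ∀ {k l : ℕ}, k ≤ l → T k ⊆ T l := by
    intro k l hkl
    apply Finset.image_subset_image
    apply Finset.powerset_mono.2
    intro i hi
    simp only [Finset.mem_filter] at hi ⊢
    exact ⟨hi.1, hi.2.trans_le hkl⟩
  have hzero : ∀ k, (0 : ZMod b) ∈ T k := by
    intro k
    refine Finset.mem_image.2 ⟨∅, ?_, ?_⟩
    · exact Finset.mem_powerset.2 (Finset.empty_subset _)
    · simp [hf]
  -- final cardinality comparison
  have hcard : (T n).card ≤ N.card := by
    have hfilter : (Finset.univ.filter (fun i : Fin n => i.val < n)) = Finset.univ := by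
      apply Finset.filter_true_of_mem
      intro i _; exact i.isLt
    have : T n = N.image (fun x : ℕ => (x : ZMod b)) := by
      simp only [hT, hN]
      rw [hfilter, Finset.image_image]
      apply Finset.image_congr
      intro I _
      simp only [Function.comp_apply, hf]
      rw [ZMod.natCast_mod]
      push_cast
      rfl
    rw [this]
    exact Finset.card_image_le
  have hmain : min ((b : ℝ) / g) n ≤ ((T n).card : ℝ) := by
    by_cases hstab : ∃ k, ∃ hk : k < n, T (k + 1) ⊆ T k
    · obtain ⟨k, hk, hsub⟩ := hstab
      set c : ZMod b := ((a ⟨k, hk⟩ : ℕ) : ZMod b) with hc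
      have hclosed : ∀ x ∈ T k, x + c ∈ T k := by
        intro x hx
        obtain ⟨I, hI, rfl⟩ := Finset.mem_image.1 hx
        rw [Finset.mem_powerset] at hI
        have hknotmem : (⟨k, hk⟩ : Fin n) ∉ I := by
          intro hmem
          have := hI hmem
          simp at this
        apply hsub
        refine Finset.mem_image.2 ⟨insert ⟨k, hk⟩ I, ?_, ?_⟩
        · rw [Finset.mem_powerset]
          intro i hi
          simp only [Finset.mem_insert] at hi
          rcases hi with rfl | hi
          · simp
          · have := hI hi
            simp only [Finset.mem_filter] at this ⊢
            exact ⟨this.1, this.2.trans (Nat.lt_succ_self k)⟩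
        · rw [hf]
          simp only
          rw [Finset.sum_insert hknotmem, add_comm]
      have hnsmul : ∀ m : ℕ, m • c ∈ T k := by
        intro m
        induction m with
        | zero => simpa using hzero k
        | succ m ih =>
          rw [succ_nsmul]
          exact hclosed _ ih
      have hsubgrp : ((AddSubgroup.zmultiples c : AddSubgroup (ZMod b)) : Set (ZMod b))
          ⊆ ↑(T k) := by
        intro x hx
        rw [SetLike.mem_coe, ← mem_multiples_iff_mem_zmultiples] at hx
        obtain ⟨m, rfl⟩ := (AddSubmonoid.mem_multiples_iff _ _).mp hx
        exact hnsmul m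
      have hord : addOrderOf c ≤ (T k).card := by
        calc addOrderOf c = Nat.card (AddSubgroup.zmultiples c) := (Nat.card_zmultiples c).symm
          _ = ((AddSubgroup.zmultiples c : AddSubgroup (ZMod b)) : Set (ZMod b)).ncard :=
              Nat.card_coe_set_eq _
          _ ≤ ((T k : Set (ZMod b))).ncard := Set.ncard_le_ncard hsubgrp (Finset.finite_toSet _)
          _ = (T k).card := Set.ncard_coe_finset _
      have hordeq : addOrderOf c = b / Nat.gcd b (a ⟨k, hk⟩) :=
        ZMod.addOrderOf_coe _ hb.ne'
      have hd : 0 < Nat.gcd b (a ⟨k, hk⟩) := Nat.gcd_pos_of_pos_left _ hb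
      have hdvd : Nat.gcd b (a ⟨k, hk⟩) ∣ b := Nat.gcd_dvd_left _ _
      have hreal : ((b : ℝ) / g) ≤ ((b / Nat.gcd b (a ⟨k, hk⟩) : ℕ) : ℝ) := by
        rw [Nat.cast_div hdvd (by exact_mod_cast hd.ne')]
        apply div_le_div_of_nonneg_left (by positivity) (by exact_mod_cast hd)
        have := hgcd ⟨k, hk⟩
        rw [Nat.gcd_comm] at this
        exact_mod_cast this
      calc min ((b : ℝ) / g) n ≤ (b : ℝ) / g := min_le_left _ _
        _ ≤ ((b / Nat.gcd b (a ⟨k, hk⟩) : ℕ) : ℝ) := hreal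
        _ ≤ ((T k).card : ℝ) := by exact_mod_cast hordeq ▸ hord
        _ ≤ ((T n).card : ℝ) := by exact_mod_cast Finset.card_le_card (hmono hk.le)
    · push_neg at hstab
      have hgrow : ∀ k, k ≤ n → k + 1 ≤ (T k).card := by
        intro k
        induction k with
        | zero =>
          intro _
          exact Finset.card_pos.2 ⟨0, hzero 0⟩
        | succ k ih =>
          intro hk1
          have hk : k < n := hk1
          have hss : T k ⊂ T (k + 1) :=
            ⟨hmono (Nat.le_succ k), fun h => hstab k hk h⟩
          have := Finset.card_lt_card hss
          have := ih hk.le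
          omega
      have hfin : n + 1 ≤ (T n).card := hgrow n le_rfl
      calc min ((b : ℝ) / g) n ≤ (n : ℝ) := min_le_right _ _
        _ ≤ ((T n).card : ℝ) := by exact_mod_cast le_trans (Nat.le_succ n) hfin
  calc min ((b : ℝ) / g) n ≤ ((T n).card : ℝ) := hmain
    _ ≤ (N.card : ℝ) := by exact_mod_cast hcard
end

section
/- Let a = (a_i)_{i=1}^n be a sequence of positive integers, let b, k be positive integers, and suppose gcd(a_i, b) ≤ g for all i. Then the set S(a, k∘b) of integers expressible as ∑_{i∈I} a_i + jb with I ⊆ [n] and 0 ≤ j ≤ k has cardinality at least k · min(b/g, n). -/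
open Finset

lemma step_lemma {b : ℕ} [NeZero b] (A : Finset (ZMod b)) (hA : A.Nonempty) (x : ZMod b) :
    min (addOrderOf x) (A.card + 1) ≤ (A ∪ A.image (x + ·)).card := by
  by_cases h : A.image (x + ·) = A
  · have hclosed : ∀ y ∈ A, x + y ∈ A := by
      intro y hy
      rw [← h]; exact mem_image_of_mem _ hy
    obtain ⟨a, ha⟩ := hA
    have hmem : ∀ j : ℕ, j • x + a ∈ A := by
      intro j
      induction j with
      | zero => simpa using ha
      | succ j ih =>
        have : (j + 1) • x + a = x + (j • x + a) := by
          rw [succ_nsmul']; ring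
        rw [this]; exact hclosed _ ih
    have hinj : Set.InjOn (fun j : ℕ => j • x + a) (Finset.range (addOrderOf x) : Finset ℕ) := by
      intro i hi j hj hij
      simp only [coe_range, Set.mem_Iio] at hi hj
      have : i • x = j • x := by
        have := hij
        simpa using add_right_cancel this
      exact nsmul_injOn_Iio_addOrderOf hi hj this
    have hcard := Finset.card_le_card_of_injOn (t := A ∪ A.image (x + ·))
      (fun j : ℕ => j • x + a)
      (fun j hj => Finset.mem_union_left _ (hmem j)) hinj
    simp only [card_range] at hcard
    exact le_trans (min_le_left _ _) hcard
  · have hcardim : (A.image (x + ·)).card = A.card :=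
      card_image_of_injective _ (add_right_injective x)
    have hnsub : ¬ (A.image (x + ·) ⊆ A) := by
      intro hsub
      exact h (eq_of_subset_of_card_le hsub (by rw [hcardim]))
    obtain ⟨y, hy, hyA⟩ := not_subset.mp hnsub
    have : insert y A ⊆ A ∪ A.image (x + ·) := by
      intro z hz
      rcases mem_insert.mp hz with rfl | hz
      · exact mem_union_right _ hy
      · exact mem_union_left _ hz
    calc min (addOrderOf x) (A.card + 1) ≤ A.card + 1 := min_le_right _ _
      _ = (insert y A).card := (card_insert_of_notMem hyA).symm
      _ ≤ _ := card_le_card this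

lemma residues_lemma {ι : Type*} [DecidableEq ι] {b c : ℕ} [NeZero b] (a : ι → ℕ)
    (h : ∀ i, c ≤ addOrderOf ((a i : ℕ) : ZMod b)) (s : Finset ι) :
    min c (s.card + 1) ≤
      (s.powerset.image (fun I => ((∑ i ∈ I, a i : ℕ) : ZMod b))).card := by
  classical
  induction s using Finset.induction_on with
  | empty =>
    simp only [powerset_empty, image_singleton, card_singleton, card_empty]
    omega
  | @insert x s hx ih =>
    set f : Finset ι → ZMod b := fun I => ((∑ i ∈ I, a i : ℕ) : ZMod b) with hf
    have key : (insert x s).powerset.image f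
        = s.powerset.image f ∪ (s.powerset.image f).image (((a x : ℕ) : ZMod b) + ·) := by
      rw [powerset_insert, image_union, image_image, image_image]
      congr 1
      apply image_congr
      intro I hI
      simp only [mem_coe, mem_powerset] at hI
      have hxI : x ∉ I := fun hc => hx (hI hc)
      simp only [Function.comp, hf]
      rw [Finset.sum_insert hxI]
      push_cast
      ring
    rw [key]
    have hne : (s.powerset.image f).Nonempty :=
      ⟨f ∅, mem_image_of_mem _ (empty_mem_powerset s)⟩
    have h1 := step_lemma (s.powerset.image f) hne ((a x : ℕ) : ZMod b)
    have h2 := ih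
    have h3 := h x
    rw [card_insert_of_notMem hx]
    omega

/-- `|S(a, k∘b)| ≥ k · min (b/g) n`. -/
theorem stmt1 (n : ℕ) (a : Fin n → ℕ) (ha : ∀ i, 0 < a i) (b k g : ℕ) (hb : 0 < b)
    (hk : 0 < k) (hg : 0 < g) (hgcd : ∀ i, Nat.gcd (a i) b ≤ g) :
    (k : ℝ) * min ((b : ℝ) / g) n ≤
      ((((Finset.univ : Finset (Finset (Fin n))) ×ˢ Finset.range (k + 1)).image
        (fun p => (∑ i ∈ p.1, a i) + p.2 * b)).card : ℝ) := by
  classical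
  haveI : NeZero b := ⟨hb.ne'⟩
  set S := (((Finset.univ : Finset (Finset (Fin n))) ×ˢ Finset.range (k + 1)).image
      (fun p => (∑ i ∈ p.1, a i) + p.2 * b)) with hS
  set c := Nat.ceil ((b : ℝ) / g) with hcdef
  -- order bound
  have hc : ∀ i : Fin n, c ≤ addOrderOf ((a i : ℕ) : ZMod b) := by
    intro i
    rw [ZMod.addOrderOf_coe _ hb.ne']
    have hd : Nat.gcd b (a i) ∣ b := Nat.gcd_dvd_left _ _
    have hdpos : 0 < Nat.gcd b (a i) := Nat.gcd_pos_of_pos_left _ hb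
    have hdg : Nat.gcd b (a i) ≤ g := by rw [Nat.gcd_comm]; exact hgcd i
    rw [hcdef, Nat.ceil_le]
    have hcast : ((b / Nat.gcd b (a i) : ℕ) : ℝ) = (b : ℝ) / (Nat.gcd b (a i) : ℝ) := by
      rw [Nat.cast_div hd (by exact_mod_cast hdpos.ne')]
    rw [hcast]
    exact div_le_div_of_nonneg_left (by positivity) (by exact_mod_cast hdpos) (by exact_mod_cast hdg)
  -- residue count
  set A := (Finset.univ : Finset (Finset (Fin n))).image
      (fun I : Finset (Fin n) => ((∑ i ∈ I, a i : ℕ) : ZMod b)) with hA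
  have hAcard : min c (n + 1) ≤ A.card := by
    have := residues_lemma a hc (Finset.univ : Finset (Fin n))
    rwa [powerset_univ, card_univ, Fintype.card_fin] at this
  -- representatives
  set rep : ZMod b → ℕ := fun r =>
    if h : ∃ I : Finset (Fin n), ((∑ i ∈ I, a i : ℕ) : ZMod b) = r
    then ∑ i ∈ h.choose, a i else 0 with hrepdef
  have hrep : ∀ r ∈ A, ((rep r : ℕ) : ZMod b) = r ∧
      ∃ I : Finset (Fin n), rep r = ∑ i ∈ I, a i := by
    intro r hr
    rw [hA, mem_image] at hr
    obtain ⟨I, -, hI⟩ := hr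
    have hex : ∃ I : Finset (Fin n), ((∑ i ∈ I, a i : ℕ) : ZMod b) = r := ⟨I, hI⟩
    rw [hrepdef]
    simp only [hex, dif_pos]
    exact ⟨hex.choose_spec, hex.choose, rfl⟩
  -- counting
  have hcount : A.card * k ≤ S.card := by
    have hmaps : ∀ p ∈ A ×ˢ Finset.range k, rep p.1 + p.2 * b ∈ S := by
      intro p hp
      rw [mem_product, mem_range] at hp
      obtain ⟨I, hI⟩ := (hrep p.1 hp.1).2
      rw [hS, mem_image]
      exact ⟨(I, p.2), by
        simp only [mem_product, mem_range]
        exact ⟨mem_univ _, by omega⟩, by simp [hI.symm]⟩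
    have hinj : Set.InjOn (fun p : ZMod b × ℕ => rep p.1 + p.2 * b)
        (A ×ˢ Finset.range k : Finset (ZMod b × ℕ)) := by
      intro p hp q hq hpq
      simp only [mem_coe, mem_product, mem_range] at hp hq
      simp only at hpq
      have h1 : p.1 = q.1 := by
        have := congrArg (fun m : ℕ => (m : ZMod b)) hpq
        push_cast at this
        rw [ZMod.natCast_self] at this
        simp only [mul_zero, add_zero] at this
        rwa [(hrep p.1 hp.1).1, (hrep q.1 hq.1).1] at this
      have h2 : p.2 = q.2 := by
        rw [h1] at hpq
        have : p.2 * b = q.2 * b := by omega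
        exact Nat.eq_of_mul_eq_mul_right hb this
      exact Prod.ext h1 h2
    have := Finset.card_le_card_of_injOn _ hmaps hinj
    rwa [card_product, card_range] at this
  -- final arithmetic
  have hSR : (A.card * k : ℝ) ≤ (S.card : ℝ) := by exact_mod_cast hcount
  rcases le_or_gt ((b : ℝ) / g) (n : ℝ) with hmn | hmn
  · rw [min_eq_left hmn]
    have hcn : c ≤ n + 1 := by
      rw [hcdef, Nat.ceil_le]
      push_cast
      linarith
    have hAc : c ≤ A.card := le_trans (by omega : c ≤ min c (n+1)) hAcard
    have hbg : (b : ℝ) / g ≤ c := Nat.le_ceil _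
    calc (k : ℝ) * ((b : ℝ) / g) ≤ (k : ℝ) * c := by
          apply mul_le_mul_of_nonneg_left hbg (by positivity)
      _ ≤ (A.card : ℝ) * k := by
          rw [mul_comm]
          apply mul_le_mul_of_nonneg_right _ (by positivity)
          exact_mod_cast hAc
      _ ≤ (S.card : ℝ) := hSR
  · rw [min_eq_right hmn.le]
    have hcn : n + 1 ≤ c := by
      rw [hcdef]
      have : (n : ℕ) < Nat.ceil ((b : ℝ) / g) := Nat.lt_ceil.mpr hmn
      omega
    have hAc : n + 1 ≤ A.card := le_trans (by omega : n + 1 ≤ min c (n+1)) hAcard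
    calc (k : ℝ) * n ≤ (A.card : ℝ) * k := by
          rw [mul_comm]
          apply mul_le_mul_of_nonneg_right _ (by positivity)
          have : (n : ℝ) ≤ (A.card : ℝ) := by exact_mod_cast (by omega : n ≤ A.card)
          exact this
      _ ≤ (S.card : ℝ) := hSR
end

section
/- Let a, b, k, l be positive integers with gcd(a, b) ≤ g. Then the set {ax + by : 0 ≤ x ≤ k, 0 ≤ y ≤ l} has cardinality at least k · min(a/g, l). -/
/-- `|S(k∘a, l∘b)| ≥ k · min (a/g) l` when `gcd(a,b) ≤ g`. -/
theorem stmt2 (a b k l g : ℕ) (ha : 0 < a) (hb : 0 < b) (hk : 0 < k) (hl : 0 < l)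
    (hg : 0 < g) (hgcd : Nat.gcd a b ≤ g) :
    (k : ℝ) * min ((a : ℝ) / g) l ≤
      (((Finset.range (k + 1) ×ˢ Finset.range (l + 1)).image
        (fun p => a * p.1 + b * p.2)).card : ℝ) := by
  set d := Nat.gcd a b with hd
  have hdpos : 0 < d := Nat.gcd_pos_of_pos_left _ ha
  set a' := a / d with ha'def
  set b' := b / d with hb'def
  have hda : d ∣ a := Nat.gcd_dvd_left a b
  have hdb : d ∣ b := Nat.gcd_dvd_right a b
  have ha'pos : 0 < a' := Nat.div_pos (Nat.le_of_dvd ha hda) hdpos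
  have hcop : Nat.Coprime a' b' := Nat.coprime_div_gcd_div_gcd hdpos
  set t := min a' l with ht
  have htl : t ≤ l := min_le_right _ _
  have hsub : (Finset.range k ×ˢ Finset.range t) ⊆
      Finset.range (k + 1) ×ˢ Finset.range (l + 1) := by
    apply Finset.product_subset_product <;> intro x hx <;>
      simp only [Finset.mem_range] at hx ⊢ <;> omega
  have hinj : Set.InjOn (fun p : ℕ × ℕ => a * p.1 + b * p.2)
      ((Finset.range k ×ˢ Finset.range t : Finset (ℕ × ℕ)) : Set (ℕ × ℕ)) := by
    rintro ⟨x1, y1⟩ h1 ⟨x2, y2⟩ h2 heq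
    simp only [Finset.coe_product, Set.mem_prod, Finset.mem_coe, Finset.mem_range] at h1 h2
    simp only at heq
    have hmul : d * (a' * x1 + b' * y1) = d * (a' * x2 + b' * y2) := by
      rw [mul_add, mul_add, ← mul_assoc, ← mul_assoc, ← mul_assoc, ← mul_assoc,
        Nat.mul_div_cancel' hda, Nat.mul_div_cancel' hdb]
      exact heq
    have heq' : a' * x1 + b' * y1 = a' * x2 + b' * y2 :=
      Nat.eq_of_mul_eq_mul_left hdpos hmul
    have heqZ : (a' : ℤ) * x1 + b' * y1 = a' * x2 + b' * y2 := by exact_mod_cast heq'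
    have hz : (a' : ℤ) * ((x1 : ℤ) - x2) = (b' : ℤ) * ((y2 : ℤ) - y1) := by
      linear_combination heqZ
    have hdvd : (a' : ℤ) ∣ (b' : ℤ) * ((y2 : ℤ) - y1) := ⟨(x1 : ℤ) - x2, hz.symm⟩
    have hcopZ : IsCoprime (a' : ℤ) (b' : ℤ) := by
      rw [Int.isCoprime_iff_gcd_eq_one]
      simpa [Int.gcd_natCast_natCast] using hcop
    have hdvd' : (a' : ℤ) ∣ (y2 : ℤ) - y1 := hcopZ.dvd_of_dvd_mul_left hdvd
    have hy : y1 = y2 := by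
      have hlt : ((y2 : ℤ) - y1).natAbs < (a' : ℤ).natAbs := by
        have hy1 : y1 < t := h1.2
        have hy2 : y2 < t := h2.2
        omega
      have := Int.eq_zero_of_dvd_of_natAbs_lt_natAbs hdvd' hlt
      omega
    subst hy
    have hx : x1 = x2 := by
      have : a' * x1 = a' * x2 := by omega
      exact Nat.eq_of_mul_eq_mul_left ha'pos this
    simp [hx]
  have hcard : k * t ≤ ((Finset.range (k + 1) ×ˢ Finset.range (l + 1)).image
      (fun p => a * p.1 + b * p.2)).card := by
    calc k * t = (Finset.range k ×ˢ Finset.range t).card := by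
          simp [Finset.card_product]
      _ = ((Finset.range k ×ˢ Finset.range t).image
            (fun p => a * p.1 + b * p.2)).card :=
          (Finset.card_image_of_injOn hinj).symm
      _ ≤ _ := Finset.card_le_card (Finset.image_subset_image hsub)
  have hcast : ((a' : ℕ) : ℝ) = (a : ℝ) / d := by
    rw [ha'def, Nat.cast_div hda (by exact_mod_cast hdpos.ne')]
  have hmin : min ((a : ℝ) / g) l ≤ (t : ℝ) := by
    rw [ht, Nat.cast_min, hcast]
    apply min_le_min _ le_rfl
    apply div_le_div_of_nonneg_left (by positivity) (by exact_mod_cast hdpos)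
    exact_mod_cast hgcd
  calc (k : ℝ) * min ((a : ℝ) / g) l ≤ (k : ℝ) * t := by
        apply mul_le_mul_of_nonneg_left hmin (by positivity)
    _ = ((k * t : ℕ) : ℝ) := by push_cast; ring
    _ ≤ _ := by exact_mod_cast hcard
end

section
/- There exists a constant c > 0 such that for every finite set A of positive integers and every positive integer b ≥ 2 with max(A) < b^3/16, the product set A·[b] = {a·j : a ∈ A, 1 ≤ j ≤ b} satisfies |A·[b]| ≥ c·|A|·b/log b. -/
lemma myL1 (n : ℕ) (hn : 0 < n) :
    Nat.centralBinom n ≤ (2*n) ^ ((2*n+1).primesBelow.card) := by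
  calc Nat.centralBinom n
      = ∏ p ∈ Finset.range (2*n+1), p ^ (Nat.centralBinom n).factorization p :=
        (Nat.prod_pow_factorization_centralBinom n).symm
    _ = ∏ p ∈ (2*n+1).primesBelow, p ^ (Nat.centralBinom n).factorization p := by
        rw [Nat.primesBelow]
        refine (Finset.prod_filter_of_ne ?_).symm
        intro p _ h
        by_contra hp
        rw [Nat.factorization_eq_zero_of_not_prime _ hp, pow_zero] at h
        exact h rfl
    _ ≤ ∏ _p ∈ (2*n+1).primesBelow, (2*n) := by
        refine Finset.prod_le_prod' ?_
        intro p _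
        exact Nat.pow_factorization_choose_le (by omega)
    _ = (2*n) ^ ((2*n+1).primesBelow.card) := Finset.prod_const _



lemma myL2 (b : ℕ) (hb : 16 ≤ b) :
    ((b:ℝ) - 1) * Real.log 2 ≤ (((b+1).primesBelow.card : ℝ) + 1) * Real.log b := by
  set n := b / 2 with hn
  have hn4 : 4 ≤ n := by omega
  set k' := (2*n+1).primesBelow.card with hk'
  have h1 : 4 ^ n < n * Nat.centralBinom n := Nat.four_pow_lt_mul_centralBinom n hn4
  have h2 : n * Nat.centralBinom n ≤ n * (2*n) ^ k' := by
    exact Nat.mul_le_mul_left n (myL1 n (by omega))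
  have h3 : n * (2*n) ^ k' ≤ b ^ (k' + 1) := by
    rw [pow_succ, mul_comm]
    exact Nat.mul_le_mul (Nat.pow_le_pow_left (by omega) _) (by omega)
  have hnat : 4 ^ n ≤ b ^ (k'+1) := by omega
  have hreal : (4:ℝ) ^ n ≤ (b:ℝ) ^ (k'+1) := by exact_mod_cast hnat
  have hlog : (n : ℝ) * Real.log 4 ≤ ((k':ℝ)+1) * Real.log b := by
    have := Real.log_le_log (by positivity) hreal
    rw [Real.log_pow, Real.log_pow] at this
    exact_mod_cast this
  have h4 : Real.log 4 = 2 * Real.log 2 := by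
    rw [show (4:ℝ) = 2^2 by norm_num, Real.log_pow]; push_cast; ring
  have hbn : ((b:ℝ) - 1) ≤ 2 * n := by
    have : b - 1 ≤ 2 * n := by omega
    have h2 : (1:ℝ) ≤ b := by exact_mod_cast (by omega : 1 ≤ b)
    calc ((b:ℝ) - 1) = ((b - 1 : ℕ) : ℝ) := by
          push_cast [Nat.cast_sub (by omega : 1 ≤ b)]; ring
      _ ≤ ((2*n : ℕ) : ℝ) := by exact_mod_cast this
      _ = 2 * n := by push_cast; ring
  have hmono : k' ≤ (b+1).primesBelow.card := by
    apply Finset.card_le_card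
    unfold Nat.primesBelow
    exact Finset.filter_subset_filter _ (Finset.range_subset_range.2 (by omega))
  have hlog2 : (0:ℝ) < Real.log 2 := Real.log_pos (by norm_num)
  have hlogb : (0:ℝ) ≤ Real.log b := Real.log_nonneg (by exact_mod_cast (by omega : 1 ≤ b))
  calc ((b:ℝ) - 1) * Real.log 2 ≤ (2 * n) * Real.log 2 := by
        exact mul_le_mul_of_nonneg_right hbn hlog2.le
    _ = (n:ℝ) * Real.log 4 := by rw [h4]; ring
    _ ≤ ((k':ℝ)+1) * Real.log b := hlog
    _ ≤ (((b+1).primesBelow.card : ℝ) + 1) * Real.log b := by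
        apply mul_le_mul_of_nonneg_right _ hlogb
        have : (k':ℝ) ≤ ((b+1).primesBelow.card : ℝ) := by exact_mod_cast hmono
        linarith



lemma myL3 (b : ℕ) (hb : 10000 ≤ b) :
    (b:ℝ) / (8 * Real.log b) ≤
      (((Finset.Icc 1 b).filter (fun p => Nat.Prime p ∧ b < p*p)).card : ℝ) := by
  set P := (Finset.Icc 1 b).filter (fun p => Nat.Prime p ∧ b < p*p) with hP
  -- card primesBelow (b+1) ≤ card P + sqrt b
  have hsplit : (b+1).primesBelow.card ≤ P.card + Nat.sqrt b := by
    have hsub : (b+1).primesBelow ⊆ P ∪ Finset.Icc 1 (Nat.sqrt b) := by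
      intro p hp
      have hpp := Nat.prime_of_mem_primesBelow hp
      have hplt := Nat.lt_of_mem_primesBelow hp
      rcases lt_or_ge b (p*p) with h | h
      · exact Finset.mem_union_left _ (Finset.mem_filter.2
          ⟨Finset.mem_Icc.2 ⟨hpp.one_lt.le, by omega⟩, hpp, h⟩)
      · exact Finset.mem_union_right _ (Finset.mem_Icc.2
          ⟨hpp.one_lt.le, Nat.le_sqrt.2 h⟩)
    calc (b+1).primesBelow.card ≤ (P ∪ Finset.Icc 1 (Nat.sqrt b)).card :=
          Finset.card_le_card hsub
      _ ≤ P.card + (Finset.Icc 1 (Nat.sqrt b)).card := Finset.card_union_le _ _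
      _ = P.card + Nat.sqrt b := by rw [Nat.card_Icc]; omega
  -- real analysis
  have hb1 : (1:ℝ) ≤ b := by exact_mod_cast (by omega : 1 ≤ b)
  have hb10000 : (10000:ℝ) ≤ b := by exact_mod_cast hb
  set x := Real.sqrt (Real.sqrt b) with hx
  have hbnn : (0:ℝ) ≤ b := by linarith
  have hsq : Real.sqrt b ^ 2 = b := Real.sq_sqrt hbnn
  have hx2 : x ^ 2 = Real.sqrt b := Real.sq_sqrt (Real.sqrt_nonneg _)
  have hx4 : x ^ 4 = b := by
    have : x ^ 4 = (x^2)^2 := by ring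
    rw [this, hx2, hsq]
  have hx10 : (10:ℝ) ≤ x := by
    have h1 : (100:ℝ) ≤ Real.sqrt b := by
      rw [show (100:ℝ) = Real.sqrt (100^2) by rw [Real.sqrt_sq]; norm_num]
      exact Real.sqrt_le_sqrt (by exact_mod_cast (by omega : 100^2 ≤ b))
    rw [show (10:ℝ) = Real.sqrt (10^2) by rw [Real.sqrt_sq]; norm_num]
    exact Real.sqrt_le_sqrt (by norm_num; linarith)
  have hxpos : (0:ℝ) < x := by linarith
  have hlogb4x : Real.log b ≤ 4 * x := by
    have : Real.log b = 4 * Real.log x := by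
      rw [← hx4, Real.log_pow]; push_cast; ring
    rw [this]
    have := Real.log_le_sub_one_of_pos hxpos
    linarith
  have hlogbpos : (0:ℝ) < Real.log b := Real.log_pos (by linarith)
  have hsqrtb : (Nat.sqrt b : ℝ) ≤ x ^ 2 := by
    rw [hx2]
    have h1 : (Nat.sqrt b : ℝ)^2 ≤ b := by
      exact_mod_cast Nat.sqrt_le' b
    rw [show ((Nat.sqrt b : ℝ)) ≤ Real.sqrt b ↔ ((Nat.sqrt b : ℝ))^2 ≤ b from Real.le_sqrt (by positivity) hbnn]
    exact h1
  have hlog2 : (0.6931471803:ℝ) < Real.log 2 := Real.log_two_gt_d9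
  -- main chain
  have hmain := myL2 b (by omega)
  have hcard : ((b+1).primesBelow.card : ℝ) ≤ (P.card : ℝ) + Nat.sqrt b := by
    exact_mod_cast hsplit
  have key : ((b:ℝ) - 1) * Real.log 2 ≤ ((P.card:ℝ) + x^2 + 1) * Real.log b := by
    calc ((b:ℝ) - 1) * Real.log 2 ≤ (((b+1).primesBelow.card : ℝ) + 1) * Real.log b := hmain
      _ ≤ ((P.card:ℝ) + x^2 + 1) * Real.log b := by
          apply mul_le_mul_of_nonneg_right _ hlogbpos.le
          linarith [hsqrtb, hcard]
  -- want: b / (8 log b) ≤ P.card, i.e. b ≤ P.card * (8 * log b)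
  rw [div_le_iff₀ (by positivity)]
  have hPlog : (b:ℝ) - 1 ≤ 0 ∨ True := Or.inr trivial
  have h5 : (P.card:ℝ) * Real.log b ≥ ((b:ℝ)-1) * Real.log 2 - (x^2+1) * Real.log b := by
    nlinarith [key]
  have h6 : (x^2+1) * Real.log b ≤ (x^2+1) * (4*x) := by
    apply mul_le_mul_of_nonneg_left hlogb4x (by positivity)
  have h7 : (P.card:ℝ) * Real.log b ≥ 0.6931471803 * (x^4 - 1) - (4*x^3 + 4*x) := by
    have hb1' : (0:ℝ) ≤ (b:ℝ) - 1 := by linarith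
    nlinarith [h5, h6, hx4]
  nlinarith [h7, hx10, hx4, hxpos]



lemma fiber_le (A : Finset ℕ) (b : ℕ) (hb : 2 ≤ b) (hApos : ∀ a ∈ A, 0 < a)
    (hlt : ∀ a ∈ A, (a : ℝ) < (b : ℝ) ^ 3 / 16) (m : ℕ)
    (hm : m ∈ (A ×ˢ ((Finset.Icc 1 b).filter (fun p => Nat.Prime p ∧ b < p*p))).image
      (fun p => p.1 * p.2)) :
    ((A ×ˢ ((Finset.Icc 1 b).filter (fun p => Nat.Prime p ∧ b < p*p))).filter
      (fun x => x.1 * x.2 = m)).card ≤ 7 := by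
  set P := (Finset.Icc 1 b).filter (fun p => Nat.Prime p ∧ b < p*p) with hP
  set F := (A ×ˢ P).filter (fun x => x.1 * x.2 = m) with hF
  set Q := P.filter (· ∣ m) with hQ
  -- m bounds
  obtain ⟨⟨a₀, p₀⟩, hmem, hprod⟩ := Finset.mem_image.1 hm
  have hmem' := Finset.mem_product.1 hmem
  have ha₀ : a₀ ∈ A := hmem'.1
  have hp₀ := Finset.mem_filter.1 hmem'.2
  have hp₀b : p₀ ≤ b := (Finset.mem_Icc.1 hp₀.1).2
  have hmpos : 0 < m := by
    rw [← hprod]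
    exact Nat.mul_pos (hApos _ ha₀) hp₀.2.1.pos
  have h16a : 16 * a₀ < b ^ 3 := by
    have := hlt _ ha₀
    have h : (16:ℝ) * a₀ < (b:ℝ)^3 := by
      have h2 : ((a₀:ℝ)) < (b:ℝ)^3 / 16 := this
      linarith [h2]
    exact_mod_cast h
  have hm16 : 16 * m < b ^ 4 := by
    calc 16 * m = 16 * a₀ * p₀ := by rw [← hprod]; ring
      _ ≤ 16 * a₀ * b := Nat.mul_le_mul_left _ hp₀b
      _ < b^3 * b := by
          apply Nat.mul_lt_mul_of_lt_of_le h16a (le_refl b) (by omega)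
      _ = b^4 := by ring
  -- F injects into Q via snd
  have hFQ : F.card ≤ Q.card := by
    apply Finset.card_le_card_of_injOn Prod.snd
    · intro x hx
      have hx' := Finset.mem_filter.1 hx
      have hx'' := Finset.mem_product.1 hx'.1
      refine Finset.mem_filter.2 ⟨hx''.2, ⟨x.1, ?_⟩⟩
      rw [← hx'.2]; ring
    · intro x hx y hy hxy
      have hx' := Finset.mem_filter.1 hx
      have hy' := Finset.mem_filter.1 hy
      have hx'' := Finset.mem_product.1 hx'.1
      have hppos : 0 < x.2 := (Finset.mem_filter.1 hx''.2).2.1.pos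
      have : x.1 * x.2 = y.1 * y.2 := by rw [hx'.2, hy'.2]
      rw [← hxy] at this
      have : x.1 = y.1 := Nat.eq_of_mul_eq_mul_right hppos this
      exact Prod.ext this hxy
  -- Q.card ≤ 7
  have hQ7 : Q.card ≤ 7 := by
    by_contra hcon
    push_neg at hcon
    obtain ⟨Q', hQ'sub, hQ'card⟩ := Finset.exists_subset_card_eq (s := Q) (n := 8) (by omega)
    have hmemQ : ∀ p ∈ Q', p ∈ P ∧ p ∣ m := fun p hp => by
      have := Finset.mem_filter.1 (hQ'sub hp); exact ⟨this.1, this.2⟩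
    have hdvd : (∏ p ∈ Q', p) ∣ m := by
      apply Finset.prod_primes_dvd
      · intro p hp; exact (Finset.mem_filter.1 (hmemQ p hp).1).2.1.prime
      · intro p hp; exact (hmemQ p hp).2
    have hle : (∏ p ∈ Q', p) ≤ m := Nat.le_of_dvd hmpos hdvd
    have hlow : (Nat.sqrt b + 1) ^ 8 ≤ ∏ p ∈ Q', p := by
      rw [← hQ'card]
      apply Finset.pow_card_le_prod
      intro p hp
      have hpP := Finset.mem_filter.1 (hmemQ p hp).1
      have h2 : b < p ^ 2 := by have := hpP.2.2; nlinarith [hpP.2.2]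
      have := Nat.sqrt_lt'.2 h2
      omega
    have hbig : b ^ 4 < (Nat.sqrt b + 1) ^ 8 := by
      have h1 : b < (Nat.sqrt b + 1) ^ 2 := by
        have h := Nat.lt_succ_sqrt' b
        calc b < Nat.succ (Nat.sqrt b) ^ 2 := h
          _ = (Nat.sqrt b + 1)^2 := by rw [Nat.succ_eq_add_one]
      calc b ^ 4 < ((Nat.sqrt b + 1) ^ 2) ^ 4 :=
            Nat.pow_lt_pow_left h1 (by norm_num)
        _ = (Nat.sqrt b + 1) ^ 8 := by ring
    omega
  omega


/-- If every element of `A` is less than `b^3/16`, then `|A·[b]| ≫ |A| b / log b`. -/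
theorem stmt3 : ∃ c : ℝ, 0 < c ∧ ∀ (A : Finset ℕ) (b : ℕ), A.Nonempty → (∀ a ∈ A, 0 < a) →
    2 ≤ b → (∀ a ∈ A, (a : ℝ) < (b : ℝ) ^ 3 / 16) →
    c * A.card * b / Real.log b ≤
      (((A ×ˢ Finset.Icc 1 b).image (fun p => p.1 * p.2)).card : ℝ) := by
  refine ⟨min (1/56) (Real.log 2 / 10000), lt_min (by norm_num)
    (by positivity), ?_⟩
  intro A b hA hApos hb2 hlt
  set c := min (1/56 : ℝ) (Real.log 2 / 10000) with hc
  set I := (A ×ˢ Finset.Icc 1 b).image (fun p => p.1 * p.2) with hI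
  have hlogb : (0:ℝ) < Real.log b := Real.log_pos (by exact_mod_cast hb2)
  have hcardA : (0:ℝ) ≤ A.card := Nat.cast_nonneg _
  rcases lt_or_ge b 10000 with hbs | hbl
  · -- small b
    have hAI : A.card ≤ I.card := by
      apply Finset.card_le_card
      intro a ha
      refine Finset.mem_image.2 ⟨(a, 1), Finset.mem_product.2
        ⟨ha, Finset.mem_Icc.2 ⟨le_refl 1, by omega⟩⟩, by simp⟩
    have hAI' : (A.card : ℝ) ≤ I.card := by exact_mod_cast hAI
    rw [div_le_iff₀ hlogb]
    have hcb : c * b ≤ Real.log b := by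
      have h1 : c ≤ Real.log 2 / 10000 := min_le_right _ _
      have h2 : (b:ℝ) ≤ 10000 := by exact_mod_cast hbs.le
      have h3 : Real.log 2 ≤ Real.log b := Real.log_le_log (by norm_num)
        (by exact_mod_cast hb2)
      have hcpos : 0 < c := lt_min (by norm_num) (by positivity)
      calc c * b ≤ (Real.log 2 / 10000) * 10000 := by
            apply mul_le_mul h1 h2 (by positivity) (by positivity)
        _ = Real.log 2 := by ring
        _ ≤ Real.log b := h3
    calc c * A.card * b = A.card * (c * b) := by ring
      _ ≤ A.card * Real.log b := by
          apply mul_le_mul_of_nonneg_left hcb hcardA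
      _ ≤ I.card * Real.log b := mul_le_mul_of_nonneg_right hAI' hlogb.le
  · -- large b
    set P := (Finset.Icc 1 b).filter (fun p => Nat.Prime p ∧ b < p*p) with hP
    have hsubI : (A ×ˢ P).image (fun p => p.1 * p.2) ⊆ I := by
      apply Finset.image_subset_image
      exact Finset.product_subset_product_right (Finset.filter_subset _ _)
    have hcount : A.card * P.card ≤ 7 * I.card := by
      calc A.card * P.card = (A ×ˢ P).card := (Finset.card_product _ _).symm
        _ ≤ 7 * ((A ×ˢ P).image (fun p => p.1 * p.2)).card :=
            Finset.card_le_mul_card_image _ 7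
              (fun m hm => fiber_le A b hb2 hApos hlt m hm)
        _ ≤ 7 * I.card := by
            exact Nat.mul_le_mul_left 7 (Finset.card_le_card hsubI)
    have hcount' : (A.card : ℝ) * P.card ≤ 7 * I.card := by exact_mod_cast hcount
    have hPb := myL3 b hbl
    -- goal: c * A.card * b / log b ≤ I.card
    rw [div_le_iff₀ hlogb]
    have hc56 : c ≤ 1/56 := min_le_left _ _
    have h1 : (A.card : ℝ) * ((b:ℝ) / (8 * Real.log b)) ≤ A.card * P.card :=
      mul_le_mul_of_nonneg_left hPb hcardA
    have hb0 : (0:ℝ) < b := by positivity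
    -- c * A.card * b ≤ (1/56) * A.card * b = (A.card * (b/(8 log b))) * log b / 7
    have key : (1/56 : ℝ) * A.card * b = (A.card * ((b:ℝ) / (8 * Real.log b))) * Real.log b / 7 := by
      field_simp
      ring
    calc c * A.card * b ≤ (1/56) * A.card * b := by
          apply mul_le_mul_of_nonneg_right _ hb0.le
          exact mul_le_mul_of_nonneg_right hc56 hcardA
      _ = (A.card * ((b:ℝ) / (8 * Real.log b))) * Real.log b / 7 := key
      _ ≤ (A.card * P.card) * Real.log b / 7 := by
          apply div_le_div_of_nonneg_right _ (by norm_num)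
          exact mul_le_mul_of_nonneg_right h1 hlogb.le
      _ ≤ (7 * I.card) * Real.log b / 7 := by
          apply div_le_div_of_nonneg_right _ (by norm_num)
          exact mul_le_mul_of_nonneg_right hcount' hlogb.le
      _ = I.card * Real.log b := by ring
end

section
/- Let a, b, d, k be positive integers and for 0 ≤ i < k set f_i = gcd(a, b - i·d). Then the product ∏_{i=0}^{k-1} f_i divides a·d^k·∏_{q < k} q^{⌈k/q⌉}, where the product is over all prime powers q less than k. -/
open Finset

lemma countCong {k M : ℕ} (hM : 0 < M) (S : Finset ℕ) (hS : S ⊆ range k)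
    (hcong : ∀ i ∈ S, ∀ j ∈ S, i % M = j % M) : S.card ≤ ⌈(k:ℝ)/(M:ℝ)⌉₊ := by
  have hinj : Set.InjOn (fun i => i / M) ↑S := by
    intro i hi j hj hij
    simp only at hij
    have h3 := hcong i hi j hj
    have h1 := Nat.div_add_mod i M
    rw [hij] at h1
    have h2 := Nat.div_add_mod j M
    omega
  have h := Finset.card_le_card_of_injOn (fun i => i / M)
    (s := S) (t := range ⌈(k:ℝ)/(M:ℝ)⌉₊)
    (fun i hi => by
      have hik : i < k := mem_range.mp (hS hi)
      rw [Finset.mem_coe, mem_range, Nat.lt_ceil, lt_div_iff₀ (by exact_mod_cast hM)]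
      have h4 : i / M * M ≤ i := Nat.div_mul_le_self i M
      exact_mod_cast lt_of_le_of_lt (by exact_mod_cast h4) (by exact_mod_cast hik)) hinj
  simpa using h


-- step 4: congruence bound on N j
lemma NjBound (b d k p j δ : ℕ) (hd : 0 < d) (hp : p.Prime)
    (hδ : δ = d.factorization p) (hj : δ < j) :
    ((range k).filter (fun i : ℕ => (p:ℤ)^j ∣ (b:ℤ) - (i:ℤ)*(d:ℤ))).card ≤ ⌈(k:ℝ)/((p^(j-δ):ℕ):ℝ)⌉₊ := by
  set d' := d / p ^ δ with hd'
  have hdd : p ^ δ * d' = d := by rw [hδ, hd', hδ]; exact Nat.ordProj_mul_ordCompl_eq_self d p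
  have hpd' : ¬ p ∣ d' := by rw [hd', hδ]; exact Nat.not_dvd_ordCompl hp hd.ne'
  apply countCong (Nat.pow_pos hp.pos) _ (filter_subset _ _)
  intro i1 h1 i2 h2
  rw [mem_filter] at h1 h2
  have hdvd : (p:ℤ)^j ∣ ((i2:ℤ) - i1) * d := by
    have := dvd_sub h1.2 h2.2
    have he : ((b:ℤ) - i1*d) - ((b:ℤ) - i2*d) = ((i2:ℤ) - i1) * d := by ring
    rwa [he] at this
  have hdvd2 : (p:ℤ)^(j-δ) ∣ ((i2:ℤ) - i1) * d' := by
    have hcast : (d:ℤ) = (p:ℤ)^δ * (d':ℤ) := by exact_mod_cast congrArg (Nat.cast : ℕ → ℤ) hdd.symm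
    have hpj : (p:ℤ)^j = (p:ℤ)^(j-δ) * (p:ℤ)^δ := by
      rw [← pow_add]; congr 1; omega
    rw [hcast, hpj] at hdvd
    have hne : ((p:ℤ)^δ) ≠ 0 := by
      have : (0:ℤ) < (p:ℤ)^δ := pow_pos (by exact_mod_cast hp.pos) δ
      omega
    rw [show ((i2:ℤ) - i1) * ((p:ℤ)^δ * d') = (((i2:ℤ) - i1) * d') * (p:ℤ)^δ by ring] at hdvd
    exact (mul_dvd_mul_iff_right hne).mp hdvd
  have hcop : IsCoprime ((p:ℤ)^(j-δ)) (d':ℤ) := by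
    rw [Int.isCoprime_iff_gcd_eq_one]
    have : ((p:ℤ)^(j-δ)).gcd (d':ℤ) = (p^(j-δ)).gcd d' := by
      rw [← Int.gcd_natCast_natCast]; norm_cast
    rw [this]
    exact Nat.Coprime.pow_left _ ((hp.coprime_iff_not_dvd).mpr hpd')
  have hfin : ((p^(j-δ):ℕ):ℤ) ∣ (i2:ℤ) - i1 := by
    push_cast
    exact hcop.dvd_of_dvd_mul_right hdvd2
  exact Nat.modEq_iff_dvd.mpr hfin

lemma factCard {p n B : ℕ} (hp : p.Prime) (hn : n ≠ 0) (hB : n.factorization p ≤ B) :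
    n.factorization p = ((Finset.Icc 1 B).filter (fun j => p ^ j ∣ n)).card := by
  have h : (Finset.Icc 1 B).filter (fun j => p ^ j ∣ n) = Finset.Icc 1 (n.factorization p) := by
    ext j
    simp only [mem_filter, mem_Icc, hp.pow_dvd_iff_le_factorization hn]
    omega
  rw [h, Nat.card_Icc]
  omega

lemma keyLemma (a b d k p : ℕ) (ha : 0 < a) (hd : 0 < d) (hk : 0 < k) (hp : p.Prime) :
    ∑ i ∈ range k, (Int.gcd (a:ℤ) ((b:ℤ) - i * d)).factorization p ≤
      a.factorization p + k * d.factorization p +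
        ∑ q ∈ (range k).filter IsPrimePow, ⌈(k:ℝ)/(q:ℝ)⌉₊ * q.factorization p := by
  set α := a.factorization p with hα
  set δ := d.factorization p with hδ
  set g : ℕ → ℕ := fun i => Int.gcd (a:ℤ) ((b:ℤ) - i * d) with hg
  have hg0 : ∀ i, g i ≠ 0 := by
    intro i h
    rw [hg, Int.gcd_eq_zero_iff] at h
    exact absurd (by exact_mod_cast h.1) ha.ne'
  have hga : ∀ i, g i ∣ a := by
    intro i
    have h : ((g i : ℕ) : ℤ) ∣ (a : ℤ) := Int.gcd_dvd_left _ _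
    exact Int.natCast_dvd_natCast.mp h
  have hgα : ∀ i, (g i).factorization p ≤ α :=
    fun i => (Nat.factorization_le_iff_dvd (hg0 i) ha.ne').mpr (hga i) p
  -- step 1&2: rewrite as double sum and swap
  have step1 : ∀ i, (g i).factorization p
      = ∑ j ∈ Icc 1 α, if p ^ j ∣ g i then 1 else 0 := by
    intro i
    rw [factCard hp (hg0 i) (hgα i), Finset.card_filter]
  set N : ℕ → ℕ := fun j => ((range k).filter (fun i : ℕ => (p:ℤ)^j ∣ (b:ℤ) - (i:ℤ)*(d:ℤ))).card
    with hN
  have step2 : ∑ i ∈ range k, (g i).factorization p ≤ ∑ j ∈ Icc 1 α, N j := by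
    calc ∑ i ∈ range k, (g i).factorization p
        = ∑ i ∈ range k, ∑ j ∈ Icc 1 α, if p ^ j ∣ g i then 1 else 0 := by
          exact Finset.sum_congr rfl (fun i _ => step1 i)
      _ = ∑ j ∈ Icc 1 α, ∑ i ∈ range k, if p ^ j ∣ g i then 1 else 0 := Finset.sum_comm
      _ = ∑ j ∈ Icc 1 α, ((range k).filter (fun i => p ^ j ∣ g i)).card := by
          exact Finset.sum_congr rfl (fun j _ => (Finset.card_filter _ _).symm)
      _ ≤ ∑ j ∈ Icc 1 α, N j := by
          apply Finset.sum_le_sum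
          intro j _
          apply Finset.card_le_card
          intro i hi
          rw [mem_filter] at hi ⊢
          refine ⟨hi.1, ?_⟩
          have h1 : ((p^j : ℕ) : ℤ) ∣ (g i : ℤ) := by exact_mod_cast hi.2
          have h2 : ((g i : ℕ) : ℤ) ∣ (b:ℤ) - (i:ℤ)*(d:ℤ) := Int.gcd_dvd_right _ _
          have := h1.trans h2
          push_cast at this ⊢
          exact this
  -- bounds on N
  have hNk : ∀ j, N j ≤ k := fun j => le_trans (Finset.card_filter_le _ _) (by simp)
  have hNc : ∀ j, δ < j → N j ≤ ⌈(k:ℝ)/((p^(j-δ):ℕ):ℝ)⌉₊ :=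
    fun j hj => NjBound b d k p j δ hd hp hδ hj
  refine le_trans step2 ?_
  rw [← Finset.sum_filter_add_sum_filter_not (Icc 1 α) (fun j => j ≤ δ) N]
  have h1 : ∑ j ∈ (Icc 1 α).filter (fun j => j ≤ δ), N j ≤ δ * k := by
    calc ∑ j ∈ (Icc 1 α).filter (fun j => j ≤ δ), N j
        ≤ ∑ _j ∈ (Icc 1 α).filter (fun j => j ≤ δ), k := Finset.sum_le_sum (fun j _ => hNk j)
      _ = ((Icc 1 α).filter (fun j => j ≤ δ)).card * k := by rw [Finset.sum_const, smul_eq_mul]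
      _ ≤ δ * k := by
          apply Nat.mul_le_mul_right
          have hsub : (Icc 1 α).filter (fun j => j ≤ δ) ⊆ Icc 1 δ := by
            intro j hj; rw [mem_filter, mem_Icc] at hj; rw [mem_Icc]; omega
          calc ((Icc 1 α).filter (fun j => j ≤ δ)).card
              ≤ (Icc 1 δ).card := Finset.card_le_card hsub
            _ = δ := by rw [Nat.card_Icc]; omega
  have hE : (Icc 1 α).filter (fun j => ¬ j ≤ δ) = Icc (δ+1) α := by
    ext j; simp only [mem_filter, mem_Icc]; omega
  have h2 : ∑ j ∈ (Icc 1 α).filter (fun j => ¬ j ≤ δ), N j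
      ≤ ∑ m ∈ Icc 1 (α - δ), ⌈(k:ℝ)/((p^m:ℕ):ℝ)⌉₊ := by
    rw [hE]
    calc ∑ j ∈ Icc (δ+1) α, N j
        ≤ ∑ j ∈ Icc (δ+1) α, ⌈(k:ℝ)/((p^(j-δ):ℕ):ℝ)⌉₊ := by
          apply Finset.sum_le_sum
          intro j hj
          rw [mem_Icc] at hj
          exact hNc j (by omega)
      _ = ∑ m ∈ Icc 1 (α - δ), ⌈(k:ℝ)/((p^m:ℕ):ℝ)⌉₊ := by
          apply Finset.sum_nbij' (fun j => j - δ) (fun m => m + δ)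
          · intro j hj; rw [mem_Icc] at hj ⊢; omega
          · intro m hm; rw [mem_Icc] at hm ⊢; omega
          · intro j hj; rw [mem_Icc] at hj; omega
          · intro m hm; omega
          · intro j hj; rfl
  have hppos : 0 < p := hp.pos
  have h3 : ∑ m ∈ Icc 1 (α - δ), ⌈(k:ℝ)/((p^m:ℕ):ℝ)⌉₊
      ≤ α + ∑ q ∈ (range k).filter IsPrimePow, ⌈(k:ℝ)/(q:ℝ)⌉₊ * q.factorization p := by
    rw [← Finset.sum_filter_add_sum_filter_not (Icc 1 (α - δ)) (fun m => p ^ m < k)]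
    have hT2 : ∑ m ∈ (Icc 1 (α-δ)).filter (fun m => ¬ p ^ m < k), ⌈(k:ℝ)/((p^m:ℕ):ℝ)⌉₊ ≤ α := by
      calc ∑ m ∈ (Icc 1 (α-δ)).filter (fun m => ¬ p ^ m < k), ⌈(k:ℝ)/((p^m:ℕ):ℝ)⌉₊
          ≤ ∑ _m ∈ (Icc 1 (α-δ)).filter (fun m => ¬ p ^ m < k), 1 := by
            apply Finset.sum_le_sum
            intro m hm
            rw [mem_filter] at hm
            apply Nat.ceil_le.mpr
            rw [Nat.cast_one, div_le_one (by exact_mod_cast pow_pos hppos m)]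
            exact_mod_cast Nat.le_of_not_lt hm.2
        _ = ((Icc 1 (α-δ)).filter (fun m => ¬ p ^ m < k)).card := by simp
        _ ≤ (Icc 1 (α-δ)).card := Finset.card_le_card (filter_subset _ _)
        _ ≤ α := by rw [Nat.card_Icc]; omega
    have hT1 : ∑ m ∈ (Icc 1 (α-δ)).filter (fun m => p ^ m < k), ⌈(k:ℝ)/((p^m:ℕ):ℝ)⌉₊
        ≤ ∑ q ∈ (range k).filter IsPrimePow, ⌈(k:ℝ)/(q:ℝ)⌉₊ * q.factorization p := by
      calc ∑ m ∈ (Icc 1 (α-δ)).filter (fun m => p ^ m < k), ⌈(k:ℝ)/((p^m:ℕ):ℝ)⌉₊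
          ≤ ∑ m ∈ (Icc 1 (α-δ)).filter (fun m => p ^ m < k),
              ⌈(k:ℝ)/((p^m:ℕ):ℝ)⌉₊ * (p^m).factorization p := by
            apply Finset.sum_le_sum
            intro m hm
            rw [mem_filter, mem_Icc] at hm
            have : (p^m).factorization p = m := by simp [hp.factorization_pow]
            rw [this]
            exact Nat.le_mul_of_pos_right _ (by omega)
        _ = ∑ q ∈ ((Icc 1 (α-δ)).filter (fun m => p ^ m < k)).image (fun m => p ^ m),
              ⌈(k:ℝ)/(q:ℝ)⌉₊ * q.factorization p := by
            rw [Finset.sum_image]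
            intro x _ y _ hxy
            exact Nat.pow_right_injective hp.two_le hxy
        _ ≤ ∑ q ∈ (range k).filter IsPrimePow, ⌈(k:ℝ)/(q:ℝ)⌉₊ * q.factorization p := by
            apply Finset.sum_le_sum_of_subset
            intro q hq
            rw [Finset.mem_image] at hq
            obtain ⟨m, hm, rfl⟩ := hq
            rw [mem_filter, mem_Icc] at hm
            rw [mem_filter, mem_range]
            exact ⟨hm.2, ⟨p, m, hp.prime, by omega, rfl⟩⟩
    omega
  have hcomm : δ * k = k * δ := Nat.mul_comm _ _
  omega

/-- `∏_{i<k} gcd(a, b - i d)` divides `a d^k ∏_{q<k prime power} q^{⌈k/q⌉}`. -/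
theorem stmt5 (a b d k : ℕ) (ha : 0 < a) (hb : 0 < b) (hd : 0 < d) (hk : 0 < k) :
    (∏ i ∈ Finset.range k, Int.gcd (a : ℤ) ((b : ℤ) - i * d)) ∣
      a * d ^ k * ∏ q ∈ (Finset.range k).filter IsPrimePow, q ^ ⌈(k : ℝ) / (q : ℝ)⌉₊ := by
  have ha' : a ≠ 0 := ha.ne'
  have hdk : d ^ k ≠ 0 := pow_ne_zero _ hd.ne'
  have hg0 : ∀ i ∈ Finset.range k, Int.gcd (a:ℤ) ((b:ℤ) - i * d) ≠ 0 := by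
    intro i _ h
    rw [Int.gcd_eq_zero_iff] at h
    exact absurd (by exact_mod_cast h.1) ha'
  have hP0 : (∏ i ∈ Finset.range k, Int.gcd (a : ℤ) ((b : ℤ) - i * d)) ≠ 0 :=
    Finset.prod_ne_zero_iff.mpr hg0
  have hqne : ∀ q ∈ (Finset.range k).filter IsPrimePow, q ^ ⌈(k : ℝ) / (q : ℝ)⌉₊ ≠ 0 := by
    intro q hq
    rw [Finset.mem_filter] at hq
    exact pow_ne_zero _ hq.2.pos.ne'
  have hQ0 : (∏ q ∈ (Finset.range k).filter IsPrimePow, q ^ ⌈(k : ℝ) / (q : ℝ)⌉₊) ≠ 0 :=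
    Finset.prod_ne_zero_iff.mpr hqne
  have hR0 : a * d ^ k * ∏ q ∈ (Finset.range k).filter IsPrimePow, q ^ ⌈(k : ℝ) / (q : ℝ)⌉₊ ≠ 0 :=
    mul_ne_zero (mul_ne_zero ha' hdk) hQ0
  rw [← Nat.factorization_le_iff_dvd hP0 hR0, Finsupp.le_def]
  intro p
  by_cases hp : p.Prime
  · have hL : (∏ i ∈ Finset.range k, Int.gcd (a : ℤ) ((b : ℤ) - i * d)).factorization p
        = ∑ i ∈ Finset.range k, (Int.gcd (a:ℤ) ((b:ℤ) - i * d)).factorization p := by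
      rw [Nat.factorization_prod hg0, Finset.sum_apply']
    have hR : (a * d ^ k * ∏ q ∈ (Finset.range k).filter IsPrimePow,
          q ^ ⌈(k : ℝ) / (q : ℝ)⌉₊).factorization p
        = a.factorization p + k * d.factorization p
          + ∑ q ∈ (Finset.range k).filter IsPrimePow, ⌈(k:ℝ)/(q:ℝ)⌉₊ * q.factorization p := by
      rw [Nat.factorization_mul (mul_ne_zero ha' hdk) hQ0,
          Nat.factorization_mul ha' hdk, Nat.factorization_pow, Nat.factorization_prod hqne]
      simp [Finset.sum_apply', Finsupp.add_apply, Finsupp.smul_apply, smul_eq_mul,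
        Nat.factorization_pow]
    rw [hL, hR]
    exact keyLemma a b d k p ha hd hk hp
  · rw [Nat.factorization_eq_zero_of_not_prime _ hp]
    exact Nat.zero_le _
end

section
/- There exists a constant C > 0 such that for all positive integers a, b, d, k: min over 0 ≤ i < k of gcd(a, b - i·d) ≤ C · a^{1/k} · d · k^2. -/
open Finset
theorem key_count (a b d k p : ℕ) (ha : 0 < a) (hd : 0 < d) (hp : p.Prime) :
    ∑ i ∈ range k, (Int.gcd (a : ℤ) ((b : ℤ) - i * d)).factorization p ≤
      a.factorization p + k * d.factorization p + (k.factorial).factorization p := by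
  haveI : Fact p.Prime := ⟨hp⟩
  set g : ℕ → ℕ := fun i => Int.gcd (a : ℤ) ((b : ℤ) - i * d) with hgdef
  have hg0 : ∀ i, g i ≠ 0 := by
    intro i h
    rw [hgdef, Int.gcd_eq_zero_iff] at h
    exact_mod_cast absurd h.1 (by exact_mod_cast ha.ne')
  have hga : ∀ i, g i ∣ a := by
    intro i
    have := Int.gcd_dvd_left (a := (a : ℤ)) (b := (b : ℤ) - i * d)
    exact Int.natCast_dvd_natCast.mp this
  set v := a.factorization p with hv
  set t := d.factorization p with ht
  have hfa : ∀ i, (g i).factorization p ≤ v :=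
    fun i => (Nat.factorization_le_iff_dvd (hg0 i) ha.ne').2 (hga i) p
  have hB : ∀ i, (g i).factorization p =
      ((Icc 1 v).filter (fun j => p ^ j ∣ g i)).card := by
    intro i
    have : (Icc 1 v).filter (fun j => p ^ j ∣ g i) = Icc 1 ((g i).factorization p) := by
      ext j
      simp only [mem_filter, mem_Icc,
        Nat.Prime.pow_dvd_iff_le_factorization hp (hg0 i)]
      have := hfa i; omega
    rw [this, Nat.card_Icc]; omega
  have hC : ∑ i ∈ range k, (g i).factorization p =
      ∑ j ∈ Icc 1 v, ((range k).filter (fun i => p ^ j ∣ g i)).card := by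
    simp only [hB, Finset.card_filter]
    rw [Finset.sum_comm]
  rw [hC]
  set N : ℕ → ℕ := fun j => ((range k).filter (fun i => p ^ j ∣ g i)).card with hN
  have hNk : ∀ j, N j ≤ k := by
    intro j
    exact (Finset.card_filter_le _ _).trans_eq (card_range k)
  -- Step E
  have hE : ∀ j, t < j → N j ≤ k / p ^ (j - t) + 1 := by
    intro j hj
    set q := p ^ (j - t) with hq
    have hq0 : 0 < q := pow_pos hp.pos _
    set S := (range k).filter (fun i => p ^ j ∣ g i) with hS
    rcases S.eq_empty_or_nonempty with h | h
    · show S.card ≤ k / q + 1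
      rw [h, card_empty]
      exact Nat.zero_le _
    obtain ⟨i₀, hi₀, hmin⟩ := S.exists_min_image id h
    simp only [id] at hmin
    have hgd : ∀ m ∈ S, (p : ℤ) ^ j ∣ ((b : ℤ) - m * d) := by
      intro m hm
      have h1 : ((p ^ j : ℕ) : ℤ) ∣ (g m : ℤ) :=
        Int.natCast_dvd_natCast.mpr (mem_filter.mp hm).2
      push_cast at h1
      exact h1.trans (Int.gcd_dvd_right (a := (a : ℤ)) (b := (b : ℤ) - m * d))
    have hdvd : ∀ i ∈ S, q ∣ i - i₀ := by
      intro i hi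
      rcases eq_or_ne i i₀ with rfl | hne
      · simp
      have hii₀ : i₀ ≤ i := hmin i hi
      have h2 : (p : ℤ) ^ j ∣ ((i : ℤ) - i₀) * d := by
        have h := dvd_sub (hgd i₀ hi₀) (hgd i hi)
        have e : ((i : ℤ) - i₀) * d = ((b : ℤ) - i₀ * d) - ((b : ℤ) - i * d) := by ring
        rw [e]; exact h
      have h3 : p ^ j ∣ (i - i₀) * d := by
        have he : ((i : ℤ) - i₀) * d = (((i - i₀) * d : ℕ) : ℤ) := by
          push_cast [Nat.cast_sub hii₀]; ring
        rw [he] at h2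
        exact_mod_cast h2
      have hsub0 : i - i₀ ≠ 0 := by omega
      have h4 : j ≤ ((i - i₀) * d).factorization p :=
        (Nat.Prime.pow_dvd_iff_le_factorization hp
          (mul_ne_zero hsub0 hd.ne')).mp h3
      have h5 : j ≤ (i - i₀).factorization p + t := by
        rw [Nat.factorization_mul hsub0 hd.ne'] at h4
        simpa using h4
      exact (Nat.Prime.pow_dvd_iff_le_factorization hp hsub0).mpr (by omega)
    have hcard : S.card ≤ (range (k / q + 1)).card := by
      apply Finset.card_le_card_of_injOn (fun i => (i - i₀) / q)
      · intro i hi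
        have hik : i < k := mem_range.mp (mem_filter.mp hi).1
        have : (i - i₀) / q ≤ k / q := Nat.div_le_div_right (by omega)
        exact mem_range.mpr (by dsimp only; omega)
      · intro i hi i' hi' heq
        have h1 := Nat.div_mul_cancel (hdvd i hi)
        have h2 := Nat.div_mul_cancel (hdvd i' hi')
        have hm1 := hmin i hi
        have hm2 := hmin i' hi'
        simp only at heq
        rw [heq] at h1
        omega
    show S.card ≤ k / q + 1
    simpa using hcard
  -- Step F
  set F := (k.factorial).factorization p with hF
  set B := max (v + 1) (Nat.log p k + 1) with hBdef
  have hFeq : F = ∑ m ∈ Ico 1 B, k / p ^ m := by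
    rw [hF, Nat.factorization_def _ hp]
    exact padicValNat_factorial (by omega)
  have hsplit := Finset.sum_filter_add_sum_filter_not (Icc 1 v) (fun j => j ≤ t) N
  rw [← hsplit]
  have h1 : ∑ j ∈ (Icc 1 v).filter (fun j => j ≤ t), N j ≤ k * t := by
    calc ∑ j ∈ (Icc 1 v).filter (fun j => j ≤ t), N j
        ≤ ((Icc 1 v).filter (fun j => j ≤ t)).card * k := by
          have := Finset.sum_le_card_nsmul ((Icc 1 v).filter (fun j => j ≤ t)) N k
            (fun j _ => hNk j)
          simpa using this
      _ ≤ k * t := by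
          rw [Nat.mul_comm]
          apply Nat.mul_le_mul_left
          have hsub : (Icc 1 v).filter (fun j => j ≤ t) ⊆ Icc 1 t := by
            intro j hj
            simp only [mem_filter, mem_Icc] at hj ⊢
            omega
          have := Finset.card_le_card hsub
          simpa [Nat.card_Icc] using this
  have h2 : ∑ j ∈ (Icc 1 v).filter (fun j => ¬ j ≤ t), N j ≤ v + F := by
    set T := (Icc 1 v).filter (fun j => ¬ j ≤ t) with hT
    have hTmem : ∀ j ∈ T, 1 ≤ j ∧ j ≤ v ∧ t < j := by
      intro j hj
      simp only [hT, mem_filter, mem_Icc] at hj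
      omega
    calc ∑ j ∈ T, N j ≤ ∑ j ∈ T, (k / p ^ (j - t) + 1) :=
          Finset.sum_le_sum (fun j hj => hE j (hTmem j hj).2.2)
      _ = ∑ j ∈ T, k / p ^ (j - t) + T.card := by
          rw [Finset.sum_add_distrib, sum_const, smul_eq_mul, mul_one]
      _ ≤ F + v := by
          apply add_le_add
          · have himg : ∑ j ∈ T, k / p ^ (j - t) = ∑ m ∈ T.image (fun j => j - t), k / p ^ m := by
              rw [Finset.sum_image]
              intro x hx y hy hxy
              have := hTmem x hx; have := hTmem y hy
              simp only at hxy
              omega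
            rw [himg, hFeq]
            apply Finset.sum_le_sum_of_subset
            intro m hm
            obtain ⟨j, hj, rfl⟩ := Finset.mem_image.mp hm
            have := hTmem j hj
            simp only [mem_Ico]
            omega
          · have : T ⊆ Icc 1 v := filter_subset _ _
            have := Finset.card_le_card this
            simpa [Nat.card_Icc] using this
      _ = v + F := by ring
  omega

theorem prod_gcd_dvd (a b d k : ℕ) (ha : 0 < a) (hd : 0 < d) :
    (∏ i ∈ range k, Int.gcd (a : ℤ) ((b : ℤ) - i * d)) ∣ a * d ^ k * k.factorial := by
  have hg0 : ∀ i : ℕ, Int.gcd (a : ℤ) ((b : ℤ) - i * d) ≠ 0 := by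
    intro i h
    rw [Int.gcd_eq_zero_iff] at h
    exact_mod_cast absurd h.1 (by exact_mod_cast ha.ne')
  have hP0 : (∏ i ∈ range k, Int.gcd (a : ℤ) ((b : ℤ) - i * d)) ≠ 0 :=
    Finset.prod_ne_zero_iff.mpr (fun i _ => hg0 i)
  have hR0 : a * d ^ k * k.factorial ≠ 0 := by positivity
  rw [← Nat.factorization_le_iff_dvd hP0 hR0]
  rw [Nat.factorization_prod (fun i _ => hg0 i)]
  rw [Finsupp.le_def]
  intro p
  rcases em p.Prime with hp | hp
  · have hL : (∑ i ∈ range k, (Int.gcd (a : ℤ) ((b : ℤ) - i * d)).factorization) p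
        = ∑ i ∈ range k, (Int.gcd (a : ℤ) ((b : ℤ) - i * d)).factorization p := by
      simp [Finset.sum_apply']
    rw [hL]
    have hR : (a * d ^ k * k.factorial).factorization p
        = a.factorization p + k * d.factorization p + (k.factorial).factorization p := by
      rw [Nat.factorization_mul (by positivity) k.factorial_ne_zero,
        Nat.factorization_mul ha.ne' (by positivity), Nat.factorization_pow]
      simp
    rw [hR]
    exact key_count a b d k p ha hd hp
  · have : (a * d ^ k * k.factorial).factorization p = 0 :=
      Nat.factorization_eq_zero_of_not_prime _ hp
    rw [this]
    have : (∑ i ∈ range k, (Int.gcd (a : ℤ) ((b : ℤ) - i * d)).factorization) p = 0 := by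
      simp [Finset.sum_apply', Nat.factorization_eq_zero_of_not_prime _ hp]
    omega

/-- `min_{0 ≤ i < k} gcd(a, b - i d) ≪ a^{1/k} d k^2`. -/
theorem stmt6 : ∃ C : ℝ, 0 < C ∧ ∀ a b d k : ℕ, 0 < a → 0 < b → 0 < d → 0 < k →
    ∃ i < k, (Int.gcd (a : ℤ) ((b : ℤ) - i * d) : ℝ) ≤
      C * (a : ℝ) ^ ((1 : ℝ) / k) * d * k ^ 2 := by
  refine ⟨1, one_pos, fun a b d k ha hb hd hk => ?_⟩
  set g : ℕ → ℕ := fun i => Int.gcd (a : ℤ) ((b : ℤ) - i * d) with hgdef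
  obtain ⟨i, hik, hmin⟩ := (range k).exists_min_image g ⟨0, mem_range.mpr hk⟩
  refine ⟨i, mem_range.mp hik, ?_⟩
  have h1 : g i ^ k ≤ ∏ j ∈ range k, g j := by
    calc g i ^ k = ∏ _j ∈ range k, g i := by rw [prod_const, card_range]
      _ ≤ ∏ j ∈ range k, g j := Finset.prod_le_prod' hmin
  have h2 : ∏ j ∈ range k, g j ≤ a * d ^ k * k.factorial :=
    Nat.le_of_dvd (by positivity) (prod_gcd_dvd a b d k ha hd)
  have h3 : g i ^ k ≤ a * (d * k) ^ k := by
    calc g i ^ k ≤ a * d ^ k * k.factorial := h1.trans h2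
      _ ≤ a * d ^ k * k ^ k := Nat.mul_le_mul_left _ k.factorial_le_pow
      _ = a * (d * k) ^ k := by rw [mul_pow, mul_assoc]
  -- now to the reals
  have hk0 : (k : ℝ) ≠ 0 := Nat.cast_ne_zero.mpr hk.ne'
  have hR : ((g i : ℝ)) ^ (k : ℕ) ≤ (a : ℝ) * ((d : ℝ) * k) ^ (k : ℕ) := by
    exact_mod_cast h3
  have hgle : (g i : ℝ) ≤ (a : ℝ) ^ ((1 : ℝ) / k) * ((d : ℝ) * k) := by
    have e1 : (g i : ℝ) = (((g i : ℝ)) ^ (k : ℕ)) ^ ((1 : ℝ) / k) := by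
      rw [← Real.rpow_natCast (g i : ℝ) k, ← Real.rpow_mul (by positivity),
        mul_one_div, div_self hk0, Real.rpow_one]
    rw [e1]
    have h4 := Real.rpow_le_rpow (by positivity) hR (by positivity :
      (0:ℝ) ≤ 1 / k)
    refine h4.trans_eq ?_
    rw [Real.mul_rpow (by positivity) (by positivity),
      ← Real.rpow_natCast ((d : ℝ) * k) k, ← Real.rpow_mul (by positivity),
      mul_one_div, div_self hk0, Real.rpow_one]
  refine hgle.trans ?_
  have hk1 : (1 : ℝ) ≤ (k : ℝ) := by exact_mod_cast hk
  have ha0 : (0 : ℝ) ≤ (a : ℝ) ^ ((1 : ℝ) / k) := Real.rpow_nonneg (by positivity) _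
  have hd0 : (0 : ℝ) ≤ (d : ℝ) := by positivity
  nlinarith [mul_nonneg ha0 hd0]
end

section
/- There exists a constant C > 0 such that for all positive integers a, b, d, k with a ≠ b: min over 0 ≤ i < k of gcd(a - i·d, b - i·d) ≤ C · |a - b|^{1/k} · d · k^2. -/
open Finset

lemma aux_card_bound (k q : ℕ) (s : Finset ℕ) (hs : s ⊆ Finset.range k)
    (hcong : ∀ i ∈ s, ∀ j ∈ s, i ≤ j → q ∣ j - i) : s.card ≤ (k - 1) / q + 1 := by
  rcases s.eq_empty_or_nonempty with h | hne
  · simp [h]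
  set i₀ := s.min' hne with hi₀
  have hi₀s : i₀ ∈ s := s.min'_mem hne
  have hcard : s.card ≤ (Finset.range ((k - 1) / q + 1)).card := by
    apply Finset.card_le_card_of_injOn (fun i => (i - i₀) / q)
    · intro i hi
      simp only [Finset.mem_range, Finset.coe_range, Set.mem_Iio]
      have hik : i < k := Finset.mem_range.mp (hs hi)
      have h1 : i - i₀ ≤ k - 1 := by omega
      have := Nat.div_le_div_right (c := q) h1
      omega
    · intro i hi j hj hij
      have h1 : i₀ ≤ i := s.min'_le i hi
      have h2 : i₀ ≤ j := s.min'_le j hj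
      have d1 : q ∣ i - i₀ := hcong i₀ hi₀s i hi h1
      have d2 : q ∣ j - i₀ := hcong i₀ hi₀s j hj h2
      have e1 : (i - i₀) / q * q = i - i₀ := Nat.div_mul_cancel d1
      have e2 : (j - i₀) / q * q = j - i₀ := Nat.div_mul_cancel d2
      simp only at hij
      rw [hij] at e1
      omega
  simpa using hcard

/-- For `a ≠ b`, `min_{0 ≤ i < k} gcd(a - i d, b - i d) ≪ |a - b|^{1/k} d k^2`. -/
theorem stmt7 : ∃ C : ℝ, 0 < C ∧ ∀ a b d k : ℕ, 0 < a → 0 < b → 0 < d → 0 < k → a ≠ b →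
    ∃ i < k, (Int.gcd ((a : ℤ) - i * d) ((b : ℤ) - i * d) : ℝ) ≤
      C * (((a : ℤ) - b).natAbs : ℝ) ^ ((1 : ℝ) / k) * d * k ^ 2 := by
  refine ⟨1, one_pos, ?_⟩
  intro a b d k ha hb hd hk hab
  set n : ℕ := ((a : ℤ) - b).natAbs with hn
  have hn0 : n ≠ 0 := by
    simp only [hn, ne_eq, Int.natAbs_eq_zero, sub_eq_zero]
    exact_mod_cast hab
  set g : ℕ → ℕ := fun i => Int.gcd ((a : ℤ) - i * d) ((b : ℤ) - i * d) with hgdef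
  have hg0 : ∀ i, g i ≠ 0 := by
    intro i hgi
    rw [hgdef] at hgi
    simp only [Int.gcd_eq_zero_iff, sub_eq_zero] at hgi
    exact hab (by exact_mod_cast hgi.1.trans hgi.2.symm)
  have hgn : ∀ i, g i ∣ n := by
    intro i
    have h1 : (g i : ℤ) ∣ (a : ℤ) - i * d := Int.gcd_dvd_left _ _
    have h2 : (g i : ℤ) ∣ (b : ℤ) - i * d := Int.gcd_dvd_right _ _
    have h3 : (g i : ℤ) ∣ (a : ℤ) - b := by
      have := dvd_sub h1 h2
      simpa using this
    have h4 : (g i : ℤ) ∣ ((((a : ℤ) - b).natAbs : ℕ) : ℤ) := Int.dvd_natAbs.mpr h3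
    rw [hn]
    exact Int.natCast_dvd_natCast.mp h4
  set h : ℕ → ℕ := fun i => g i / Nat.gcd (g i) d with hhdef
  have hgcd_dvd : ∀ i, Nat.gcd (g i) d ∣ g i := fun i => Nat.gcd_dvd_left _ _
  have hh_mul : ∀ i, h i * Nat.gcd (g i) d = g i := fun i =>
    Nat.div_mul_cancel (hgcd_dvd i)
  have hh_dvd : ∀ i, h i ∣ g i := fun i => ⟨Nat.gcd (g i) d, (hh_mul i).symm⟩
  have hh0 : ∀ i, h i ≠ 0 := by
    intro i hi
    have := hh_mul i
    rw [hi, zero_mul] at this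
    exact hg0 i this.symm
  have hhn : ∀ i, h i ∣ n := fun i => (hh_dvd i).trans (hgn i)
  have hg_le : ∀ i, g i ≤ d * h i := by
    intro i
    calc g i = h i * Nat.gcd (g i) d := (hh_mul i).symm
    _ ≤ h i * d := Nat.mul_le_mul_left _ (Nat.gcd_le_right _ hd)
    _ = d * h i := Nat.mul_comm _ _
  -- key valuation fact
  have key : ∀ p : ℕ, p.Prime → ∀ m, 1 ≤ m → ∀ i, m ≤ (h i).factorization p →
      p ^ (m + d.factorization p) ∣ g i := by
    intro p hp m hm i hmi
    have hfac : (h i).factorization p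
        = (g i).factorization p - min ((g i).factorization p) (d.factorization p) := by
      rw [hhdef]
      simp only
      rw [Nat.factorization_div (hgcd_dvd i), Nat.factorization_gcd (hg0 i) hd.ne']
      simp [Finsupp.inf_apply]
    rw [hfac] at hmi
    have : m + d.factorization p ≤ (g i).factorization p := by omega
    exact (Nat.Prime.pow_dvd_iff_le_factorization hp (hg0 i)).mpr this
  -- congruence fact
  have cong : ∀ p : ℕ, p.Prime → ∀ m, 1 ≤ m → ∀ i j : ℕ,
      m ≤ (h i).factorization p → m ≤ (h j).factorization p → i ≤ j → p ^ m ∣ j - i := by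
    intro p hp m hm i j hi hj hij
    rcases Nat.eq_or_lt_of_le hij with rfl | hlt
    · simp
    have hdi := key p hp m hm i hi
    have hdj := key p hp m hm j hj
    set f := d.factorization p with hf
    have h1 : ((p : ℤ)) ^ (m + f) ∣ (b : ℤ) - i * d := by
      have := Int.natCast_dvd_natCast.mpr hdi
      push_cast at this
      exact this.trans (Int.gcd_dvd_right _ _)
    have h2 : ((p : ℤ)) ^ (m + f) ∣ (b : ℤ) - j * d := by
      have := Int.natCast_dvd_natCast.mpr hdj
      push_cast at this
      exact this.trans (Int.gcd_dvd_right _ _)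
    have h3 : ((p : ℤ)) ^ (m + f) ∣ (((j - i) * d : ℕ) : ℤ) := by
      have := dvd_sub h2 h1
      have heq : ((b : ℤ) - j * d) - ((b : ℤ) - i * d) = -((((j - i) * d : ℕ)) : ℤ) := by
        push_cast [Nat.cast_sub hij]
        ring
      rw [heq] at this
      exact (dvd_neg.mp this)
    have h4 : p ^ (m + f) ∣ (j - i) * d := by exact_mod_cast h3
    have hji0 : j - i ≠ 0 := by omega
    have h5 : m + f ≤ ((j - i) * d).factorization p :=
      (Nat.Prime.pow_dvd_iff_le_factorization hp (by positivity)).mp h4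
    rw [Nat.factorization_mul hji0 hd.ne'] at h5
    simp only [Finsupp.add_apply, ← hf] at h5
    exact (Nat.Prime.pow_dvd_iff_le_factorization hp hji0).mpr (by omega)
  -- product bound
  have prod_dvd : (∏ i ∈ range k, h i) ∣ n * Nat.factorial (k - 1) := by
    have hx : (∏ i ∈ range k, h i) ≠ 0 := by
      apply Finset.prod_ne_zero_iff.mpr
      intro i _; exact hh0 i
    have hy : n * Nat.factorial (k - 1) ≠ 0 := Nat.mul_ne_zero hn0 (Nat.factorial_ne_zero _)
    rw [← Nat.factorization_le_iff_dvd hx hy]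
    rw [Finsupp.le_def]
    intro p
    by_cases hp : p.Prime
    · haveI : Fact p.Prime := ⟨hp⟩
      set V := n.factorization p with hV
      have hhV : ∀ i, (h i).factorization p ≤ V := by
        intro i
        have := (Nat.factorization_le_iff_dvd (hh0 i) hn0).mpr (hhn i)
        exact this p
      -- LHS = sum of valuations
      rw [Nat.factorization_prod (fun i _ => hh0 i)]
      rw [Finset.sum_apply']
      -- RHS
      rw [Nat.factorization_mul hn0 (Nat.factorial_ne_zero _), Finsupp.add_apply]
      -- rewrite each valuation as a count
      have hcount : ∀ i ∈ range k, (h i).factorization p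
          = ((Icc 1 V).filter (fun m => m ≤ (h i).factorization p)).card := by
        intro i _
        have : (Icc 1 V).filter (fun m => m ≤ (h i).factorization p)
            = Icc 1 ((h i).factorization p) := by
          ext m
          simp only [mem_filter, mem_Icc]
          have := hhV i
          omega
        rw [this, Nat.card_Icc]
        omega
      calc ∑ i ∈ range k, (h i).factorization p
          = ∑ i ∈ range k, ((Icc 1 V).filter (fun m => m ≤ (h i).factorization p)).card :=
            Finset.sum_congr rfl hcount
        _ = ∑ i ∈ range k, ∑ m ∈ Icc 1 V, if m ≤ (h i).factorization p then 1 else 0 :=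
            Finset.sum_congr rfl (fun i _ => Finset.card_filter _ _)
        _ = ∑ m ∈ Icc 1 V, ∑ i ∈ range k, if m ≤ (h i).factorization p then 1 else 0 :=
            Finset.sum_comm
        _ = ∑ m ∈ Icc 1 V, ((range k).filter (fun i => m ≤ (h i).factorization p)).card :=
            Finset.sum_congr rfl (fun m _ => (Finset.card_filter _ _).symm)
        _ ≤ ∑ m ∈ Icc 1 V, ((k - 1) / p ^ m + 1) := by
            apply Finset.sum_le_sum
            intro m hm
            have hm1 : 1 ≤ m := (mem_Icc.mp hm).1
            apply aux_card_bound
            · exact Finset.filter_subset _ _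
            · intro i hi j hj hij
              simp only [mem_filter] at hi hj
              exact cong p hp m hm1 i j hi.2 hj.2 hij
        _ = (∑ m ∈ Icc 1 V, (k - 1) / p ^ m) + V := by
            rw [Finset.sum_add_distrib]
            simp [Nat.card_Icc]
        _ ≤ (Nat.factorial (k - 1)).factorization p + V := by
            gcongr
            rw [Nat.factorization_def _ hp]
            have hb : Nat.log p (k - 1) < max (V + 1) (Nat.log p (k - 1) + 1) := by
              simp [Nat.lt_succ_iff]
            rw [padicValNat_factorial hb]
            apply Finset.sum_le_sum_of_subset
            intro m hm
            simp only [mem_Icc, mem_Ico] at hm ⊢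
            omega
        _ = V + (Nat.factorial (k - 1)).factorization p := by omega
    · simp [Nat.factorization_eq_zero_of_not_prime _ hp]
  -- choose minimizer
  obtain ⟨i₀, hi₀k, hmin⟩ := Finset.exists_min_image (range k) h ⟨0, by simp [hk]⟩
  have hi₀ : i₀ < k := Finset.mem_range.mp hi₀k
  refine ⟨i₀, hi₀, ?_⟩
  have hpow : h i₀ ^ k ≤ n * k ^ k := by
    calc h i₀ ^ k = h i₀ ^ (range k).card := by rw [Finset.card_range]
      _ ≤ ∏ i ∈ range k, h i := Finset.pow_card_le_prod _ _ _ (fun i hi => hmin i hi)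
      _ ≤ n * Nat.factorial (k - 1) := Nat.le_of_dvd (by positivity) prod_dvd
      _ ≤ n * k ^ k := by
          apply Nat.mul_le_mul_left
          calc Nat.factorial (k - 1) ≤ Nat.factorial k := Nat.factorial_le (by omega)
            _ ≤ k ^ k := Nat.factorial_le_pow k
  -- real arithmetic
  have hk0 : (k : ℝ) ≠ 0 := by positivity
  have hH : (h i₀ : ℝ) ≤ (n : ℝ) ^ ((1 : ℝ) / k) * k := by
    have h1 : (h i₀ : ℝ) = ((h i₀ : ℝ) ^ k) ^ ((k : ℝ)⁻¹) :=
      (Real.pow_rpow_inv_natCast (by positivity) hk.ne').symm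
    rw [h1, one_div]
    calc ((h i₀ : ℝ) ^ k) ^ ((k : ℝ)⁻¹)
        ≤ ((n : ℝ) * (k : ℝ) ^ k) ^ ((k : ℝ)⁻¹) := by
          apply Real.rpow_le_rpow (by positivity) _ (by positivity)
          exact_mod_cast hpow
      _ = (n : ℝ) ^ ((k : ℝ)⁻¹) * ((k : ℝ) ^ k) ^ ((k : ℝ)⁻¹) :=
          Real.mul_rpow (by positivity) (by positivity)
      _ = (n : ℝ) ^ ((k : ℝ)⁻¹) * k := by
          rw [Real.pow_rpow_inv_natCast (by positivity) hk.ne']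
  have hgR : (g i₀ : ℝ) ≤ (d : ℝ) * ((n : ℝ) ^ ((1 : ℝ) / k) * k) := by
    calc (g i₀ : ℝ) ≤ (d : ℝ) * (h i₀ : ℝ) := by exact_mod_cast hg_le i₀
      _ ≤ (d : ℝ) * ((n : ℝ) ^ ((1 : ℝ) / k) * k) := by
          apply mul_le_mul_of_nonneg_left hH (by positivity)
  have hkk : (k : ℝ) ≤ (k : ℝ) ^ 2 := by
    have : (1 : ℝ) ≤ k := by exact_mod_cast hk
    nlinarith
  have hrpow_nonneg : (0 : ℝ) ≤ (n : ℝ) ^ ((1 : ℝ) / k) := Real.rpow_nonneg (by positivity) _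
  calc (g i₀ : ℝ) ≤ (d : ℝ) * ((n : ℝ) ^ ((1 : ℝ) / k) * k) := hgR
    _ ≤ (d : ℝ) * ((n : ℝ) ^ ((1 : ℝ) / k) * (k : ℝ) ^ 2) := by
        apply mul_le_mul_of_nonneg_left _ (by positivity)
        exact mul_le_mul_of_nonneg_left hkk hrpow_nonneg
    _ = 1 * (n : ℝ) ^ ((1 : ℝ) / k) * d * (k : ℝ) ^ 2 := by ring
end

section
/- The product over prime powers q < k of q^{⌈k/q⌉} is at most k^{C·k} for some absolute constant C (in fact it equals k^{k + o(k)}, so is O(k^{2k}) for large k). -/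
open Finset Real

/-- telescoping bound `∑_{m=2}^k 1/m² ≤ 1 - 1/k`. -/
lemma aux_sq_sum : ∀ k : ℕ, 1 ≤ k → (∑ m ∈ Finset.Icc 2 k, ((m : ℝ))⁻¹ ^ 2) ≤ 1 - (k : ℝ)⁻¹ := by
  intro k hk
  induction k with
  | zero => omega
  | succ n ih =>
    rcases Nat.lt_or_ge n 1 with h | h
    · obtain rfl : n = 0 := by omega
      norm_num
    · have h0 : (0:ℝ) < n := by exact_mod_cast h
      have h1 : (0:ℝ) < (n:ℝ) + 1 := by positivity
      rw [Finset.sum_Icc_succ_top (by omega)]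
      have key : ((n:ℝ)+1)⁻¹ ^ 2 ≤ (n:ℝ)⁻¹ - ((n:ℝ)+1)⁻¹ := by
        rw [inv_sub_inv h0.ne' h1.ne', show (n:ℝ)+1-n = 1 by ring, pow_two, ← mul_inv,
          one_div]
        gcongr
        nlinarith
      have ih' := ih h
      push_cast
      push_cast at ih' key
      linarith

/-- geometric bound `∑_{j=2}^k x^j ≤ 2 x²` for `0 ≤ x ≤ 1/2`. -/
lemma aux_geom (k : ℕ) (x : ℝ) (hx0 : 0 ≤ x) (hx : x ≤ 1/2) :
    (∑ j ∈ Finset.Icc 2 k, x ^ j) ≤ 2 * x ^ 2 := by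
  have h1 : (∑ j ∈ Finset.Icc 2 k, x ^ j) = ∑ i ∈ Finset.range (k + 1 - 2), x ^ (2 + i) := by
    rw [← Finset.Ico_add_one_right_eq_Icc, Finset.sum_Ico_eq_sum_range]
  have h2 : (∑ i ∈ Finset.range (k + 1 - 2), x ^ (2 + i))
      = x ^ 2 * ∑ i ∈ Finset.range (k + 1 - 2), x ^ i := by
    rw [Finset.mul_sum]
    exact Finset.sum_congr rfl fun i _ => by rw [pow_add]
  rw [h1, h2, mul_comm (2:ℝ) (x^2)]
  gcongr x ^ 2 * ?_
  calc (∑ i ∈ Finset.range (k + 1 - 2), x ^ i)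
      ≤ ∑ i ∈ Finset.range (k + 1 - 2), (1/2 : ℝ) ^ i := by
        apply Finset.sum_le_sum
        intro i _
        exact pow_le_pow_left₀ hx0 hx i
    _ ≤ 2 := sum_geometric_two_le _

/-- The sum of `1/q` over non-prime prime powers `q < k` is at most `2`. -/
lemma aux_pp_sum (k : ℕ) :
    (∑ q ∈ (Finset.range k).filter (fun q => IsPrimePow q ∧ ¬ q.Prime), ((q : ℝ))⁻¹) ≤ 2 := by
  classical
  set S := (Finset.range k).filter (fun q => IsPrimePow q ∧ ¬ q.Prime) with hS
  set e : ℕ → ℕ × ℕ := fun q => (q.minFac, q.factorization q.minFac) with he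
  have key : ∀ q ∈ S, q.minFac.Prime ∧ 2 ≤ q.factorization q.minFac ∧
      q.minFac ^ (q.factorization q.minFac) = q := by
    intro q hq
    simp only [hS, Finset.mem_filter, Finset.mem_range] at hq
    obtain ⟨hqk, hpp, hnp⟩ := hq
    obtain ⟨p, j, hp, hj, rfl⟩ := (isPrimePow_nat_iff _).1 hpp
    have hmin : (p ^ j).minFac = p := hp.pow_minFac hj.ne'
    have hfac : (p ^ j).factorization ((p ^ j).minFac) = j := by
      rw [hmin, hp.factorization_pow, Finsupp.single_eq_same]
    refine ⟨?_, ?_, ?_⟩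
    · rw [hmin]; exact hp
    · rw [hfac]
      by_contra hcon
      push_neg at hcon
      interval_cases j
      exact hnp (by simpa using hp)
    · rw [hfac, hmin]
  have hinj : Set.InjOn e S := by
    intro a ha b hb hab
    obtain ⟨_, _, ha3⟩ := key a ha
    obtain ⟨_, _, hb3⟩ := key b hb
    simp only [he, Prod.mk.injEq] at hab
    rw [← ha3, ← hb3, hab.2, hab.1]
  have himg : S.image e ⊆ Finset.Icc 2 k ×ˢ Finset.Icc 2 k := by
    intro x hx
    simp only [Finset.mem_image] at hx
    obtain ⟨q, hq, rfl⟩ := hx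
    obtain ⟨hp, hj, hpow⟩ := key q hq
    simp only [hS, Finset.mem_filter, Finset.mem_range] at hq
    obtain ⟨hqk, hq2, _⟩ := hq
    have hq2' : 2 ≤ q := hq2.two_le
    have hpk : q.minFac ≤ k := le_trans (Nat.minFac_le (by omega)) (by omega)
    have hjk : q.factorization q.minFac ≤ k := by
      have hlt : q.factorization q.minFac < 2 ^ (q.factorization q.minFac) :=
        Nat.lt_two_pow_self
      have h2 : 2 ^ (q.factorization q.minFac) ≤ q := by
        calc 2 ^ (q.factorization q.minFac) ≤ q.minFac ^ (q.factorization q.minFac) :=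
          Nat.pow_le_pow_left hp.two_le _
        _ = q := hpow
      omega
    simp only [Finset.mem_product, Finset.mem_Icc, e]
    exact ⟨⟨hp.two_le, hpk⟩, ⟨hj, hjk⟩⟩
  have step1 : (∑ q ∈ S, ((q : ℝ))⁻¹)
      = ∑ x ∈ S.image e, ((x.1 : ℝ))⁻¹ ^ x.2 := by
    rw [Finset.sum_image hinj]
    apply Finset.sum_congr rfl
    intro q hq
    obtain ⟨hp, hj, hpow⟩ := key q hq
    simp only [he]
    conv_lhs => rw [← hpow]
    push_cast
    rw [← inv_pow]
  rw [step1]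
  calc (∑ x ∈ S.image e, ((x.1 : ℝ))⁻¹ ^ x.2)
      ≤ ∑ x ∈ Finset.Icc 2 k ×ˢ Finset.Icc 2 k, ((x.1 : ℝ))⁻¹ ^ x.2 := by
        apply Finset.sum_le_sum_of_subset_of_nonneg himg
        intro i _ _
        positivity
    _ = ∑ m ∈ Finset.Icc 2 k, ∑ j ∈ Finset.Icc 2 k, ((m : ℝ))⁻¹ ^ j := by
        rw [Finset.sum_product]
    _ ≤ ∑ m ∈ Finset.Icc 2 k, 2 * ((m : ℝ))⁻¹ ^ 2 := by
        apply Finset.sum_le_sum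
        intro m hm
        simp only [Finset.mem_Icc] at hm
        have hm2 : (2:ℝ) ≤ m := by exact_mod_cast hm.1
        apply aux_geom
        · positivity
        · rw [inv_le_comm₀ (by linarith) (by norm_num)]
          linarith
    _ = 2 * ∑ m ∈ Finset.Icc 2 k, ((m : ℝ))⁻¹ ^ 2 := by rw [Finset.mul_sum]
    _ ≤ 2 := by
        rcases Nat.lt_or_ge k 1 with h | h
        · obtain rfl : k = 0 := by omega
          norm_num
        · have h1 := aux_sq_sum k h
          have hk0 : (0:ℝ) < k := by exact_mod_cast h
          nlinarith [inv_pos.2 hk0]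

/-- Mertens-type bound: `∑_{p < k prime} log p / p ≤ 2 log k`. -/
lemma aux_mertens (k : ℕ) :
    (∑ p ∈ (Finset.range k).filter Nat.Prime, Real.log p / p) ≤ 2 * Real.log k := by
  classical
  rcases Nat.lt_or_ge k 2 with h | hk2
  · interval_cases k <;> simp [Finset.filter_singleton, Nat.not_prime_zero]
  have hk0 : (0:ℝ) < k := by exact_mod_cast (by omega : 0 < k)
  have hlogk : 0 ≤ Real.log k := Real.log_nonneg (by exact_mod_cast (by omega : 1 ≤ k))
  have hfact : (Nat.factorial k) ≠ 0 := Nat.factorial_ne_zero k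
  -- step 1 : `∑ ⌊k/p⌋ log p ≤ log k!`
  have hstep : (∑ p ∈ (Finset.range k).filter Nat.Prime, ((k / p : ℕ) : ℝ) * Real.log p)
      ≤ Real.log ((Nat.factorial k) : ℕ) := by
    rw [Real.log_nat_eq_sum_factorization, Finsupp.sum]
    calc (∑ p ∈ (Finset.range k).filter Nat.Prime, ((k / p : ℕ) : ℝ) * Real.log p)
        ≤ ∑ p ∈ (Finset.range k).filter Nat.Prime,
            (((Nat.factorial k).factorization p : ℕ) : ℝ) * Real.log p := by
          apply Finset.sum_le_sum
          intro p hp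
          simp only [Finset.mem_filter, Finset.mem_range] at hp
          obtain ⟨hpk, hp⟩ := hp
          have hle : k / p ≤ (Nat.factorial k).factorization p := by
            rw [← Nat.Prime.pow_dvd_iff_le_factorization hp hfact,
              Nat.Prime.pow_dvd_factorial_iff hp (Nat.lt_succ_self _)]
            have h1 : (1 : ℕ) ∈ Finset.Ico 1 (Nat.log p k + 1) := by
              simp only [Finset.mem_Ico]
              exact ⟨le_refl _, by
                have := Nat.log_pos hp.one_lt (le_of_lt hpk)
                omega⟩
            calc k / p = k / p ^ 1 := by rw [pow_one]
              _ ≤ ∑ i ∈ Finset.Ico 1 (Nat.log p k + 1), k / p ^ i :=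
                Finset.single_le_sum (f := fun i => k / p ^ i) (fun i _ => Nat.zero_le _) h1
          have hlog : 0 ≤ Real.log p := Real.log_nonneg (by exact_mod_cast hp.one_lt.le)
          gcongr
      _ ≤ ∑ p ∈ ((Nat.factorial k) : ℕ).factorization.support,
            (((Nat.factorial k).factorization p : ℕ) : ℝ) * Real.log p := by
          apply Finset.sum_le_sum_of_subset_of_nonneg
          · intro p hp
            simp only [Finset.mem_filter, Finset.mem_range] at hp
            rw [Nat.support_factorization, Nat.mem_primeFactors]
            exact ⟨hp.2, Nat.dvd_factorial hp.2.pos hp.1.le, hfact⟩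
          · intro p hp _
            have hpp : p.Prime := by
              rw [Nat.support_factorization] at hp
              exact Nat.prime_of_mem_primeFactors hp
            have : 0 ≤ Real.log p := Real.log_nonneg (by exact_mod_cast hpp.one_lt.le)
            positivity
  have hfactlog : Real.log ((Nat.factorial k) : ℕ) ≤ k * Real.log k := by
    calc Real.log ((Nat.factorial k) : ℕ) ≤ Real.log ((k ^ k : ℕ) : ℝ) := by
          have h1 : (0:ℝ) < ((Nat.factorial k) : ℕ) := by exact_mod_cast Nat.factorial_pos k
          rw [Real.log_le_log_iff h1 (by positivity)]
          exact_mod_cast Nat.factorial_le_pow k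
      _ = k * Real.log k := by push_cast; rw [Real.log_pow]
  have hsum2 : (∑ p ∈ (Finset.range k).filter Nat.Prime, Real.log p) ≤ k * Real.log k := by
    calc (∑ p ∈ (Finset.range k).filter Nat.Prime, Real.log p)
        ≤ ∑ p ∈ (Finset.range k).filter Nat.Prime, Real.log k := by
          apply Finset.sum_le_sum
          intro p hp
          simp only [Finset.mem_filter, Finset.mem_range] at hp
          have : (0:ℝ) < p := by exact_mod_cast hp.2.pos
          have : (p:ℝ) ≤ k := by exact_mod_cast hp.1.le
          gcongr
      _ = ((Finset.range k).filter Nat.Prime).card * Real.log k := by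
          rw [Finset.sum_const, nsmul_eq_mul]
      _ ≤ k * Real.log k := by
          gcongr
          exact_mod_cast (Finset.card_filter_le _ _).trans (by simp)
  -- combine
  have hmain : (k:ℝ) * ∑ p ∈ (Finset.range k).filter Nat.Prime, Real.log p / p
      ≤ 2 * ((k:ℝ) * Real.log k) := by
    rw [Finset.mul_sum]
    calc (∑ p ∈ (Finset.range k).filter Nat.Prime, (k:ℝ) * (Real.log p / p))
        ≤ ∑ p ∈ (Finset.range k).filter Nat.Prime,
            (((k / p : ℕ) : ℝ) * Real.log p + Real.log p) := by
          apply Finset.sum_le_sum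
          intro p hp
          simp only [Finset.mem_filter, Finset.mem_range] at hp
          have hp0 : (0:ℝ) < p := by exact_mod_cast hp.2.pos
          have hlog : 0 ≤ Real.log p := Real.log_nonneg (by exact_mod_cast hp.2.one_lt.le)
          have hdiv : (k:ℝ) / p ≤ ((k / p : ℕ) : ℝ) + 1 := by
            rw [div_le_iff₀ hp0]
            have h1 : p * (k / p) + k % p = k := Nat.div_add_mod k p
            have h2 : k % p < p := Nat.mod_lt _ hp.2.pos
            have h1' : (p:ℝ) * ((k / p : ℕ):ℝ) + ((k % p : ℕ):ℝ) = k := by exact_mod_cast h1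
            have h2' : ((k % p : ℕ):ℝ) < p := by exact_mod_cast h2
            nlinarith
          calc (k:ℝ) * (Real.log p / p) = ((k:ℝ) / p) * Real.log p := by ring
            _ ≤ (((k / p : ℕ) : ℝ) + 1) * Real.log p := by gcongr
            _ = ((k / p : ℕ) : ℝ) * Real.log p + Real.log p := by ring
      _ = (∑ p ∈ (Finset.range k).filter Nat.Prime, ((k / p : ℕ) : ℝ) * Real.log p)
          + ∑ p ∈ (Finset.range k).filter Nat.Prime, Real.log p := by
          rw [Finset.sum_add_distrib]
      _ ≤ k * Real.log k + k * Real.log k := add_le_add (hstep.trans hfactlog) hsum2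
      _ = 2 * ((k:ℝ) * Real.log k) := by ring
  have hmain' : (k:ℝ) * (∑ p ∈ (Finset.range k).filter Nat.Prime, Real.log p / p)
      ≤ (k:ℝ) * (2 * Real.log k) := by linarith [hmain]
  exact le_of_mul_le_mul_left hmain' hk0

/-- `∏_{q < k prime power} q^{⌈k/q⌉} ≤ k^{C k}` for an absolute constant `C`. -/
theorem stmt9 : ∃ C : ℝ, 0 < C ∧ ∀ k : ℕ, 1 ≤ k →
    (∏ q ∈ (Finset.range k).filter IsPrimePow, (q : ℝ) ^ ⌈(k : ℝ) / (q : ℝ)⌉₊) ≤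
      (k : ℝ) ^ (C * k) := by
  classical
  refine ⟨5, by norm_num, ?_⟩
  intro k hk
  rcases Nat.lt_or_ge k 2 with h | hk2
  · interval_cases k
    simp [Finset.range_one, Finset.filter_singleton, not_isPrimePow_zero, Real.one_rpow]
  have hk0 : (0:ℝ) < k := by exact_mod_cast (by omega : 0 < k)
  have hlogk : 0 ≤ Real.log k := Real.log_nonneg (by exact_mod_cast (by omega : 1 ≤ k))
  set S := (Finset.range k).filter IsPrimePow with hS
  have hpos : ∀ q ∈ S, (0:ℝ) < q := by
    intro q hq
    simp only [hS, Finset.mem_filter, Finset.mem_range] at hq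
    exact_mod_cast hq.2.pos
  have hprodpos : 0 < ∏ q ∈ S, (q:ℝ) ^ ⌈(k:ℝ)/(q:ℝ)⌉₊ :=
    Finset.prod_pos fun q hq => pow_pos (hpos q hq) _
  rw [← Real.log_le_log_iff hprodpos (Real.rpow_pos_of_pos hk0 _), Real.log_rpow hk0,
    Real.log_prod (fun q hq => (pow_pos (hpos q hq) _).ne')]
  -- bound each term
  have hterm : ∀ q ∈ S, Real.log ((q:ℝ) ^ ⌈(k:ℝ)/(q:ℝ)⌉₊)
      ≤ (k:ℝ) * (Real.log q / q) + Real.log q := by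
    intro q hq
    have hq0 : (0:ℝ) < q := hpos q hq
    have hlogq : 0 ≤ Real.log q := by
      simp only [hS, Finset.mem_filter, Finset.mem_range] at hq
      exact Real.log_nonneg (by exact_mod_cast hq.2.one_lt.le)
    rw [Real.log_pow]
    have hceil : (⌈(k:ℝ)/(q:ℝ)⌉₊ : ℝ) ≤ (k:ℝ)/q + 1 :=
      (Nat.ceil_lt_add_one (by positivity)).le
    calc (⌈(k:ℝ)/(q:ℝ)⌉₊ : ℝ) * Real.log q ≤ ((k:ℝ)/q + 1) * Real.log q := by gcongr
      _ = (k:ℝ) * (Real.log q / q) + Real.log q := by ring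
  -- the sum of log q / q over S
  have hsplit : (∑ q ∈ S, Real.log q / q) ≤ 4 * Real.log k := by
    rw [← Finset.sum_filter_add_sum_filter_not S Nat.Prime (fun q => Real.log q / q)]
    have h1 : (∑ q ∈ S.filter Nat.Prime, Real.log q / q) ≤ 2 * Real.log k := by
      refine le_trans ?_ (aux_mertens k)
      apply Finset.sum_le_sum_of_subset_of_nonneg
      · intro q hq
        simp only [hS, Finset.mem_filter, Finset.mem_range] at hq ⊢
        exact ⟨hq.1.1, hq.2⟩
      · intro q hq _
        simp only [Finset.mem_filter, Finset.mem_range] at hq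
        have h0 : (0:ℝ) < q := by exact_mod_cast hq.2.pos
        have : 0 ≤ Real.log q := Real.log_nonneg (by exact_mod_cast hq.2.one_lt.le)
        positivity
    have h2 : (∑ q ∈ S.filter (fun q => ¬ q.Prime), Real.log q / q) ≤ 2 * Real.log k := by
      have heq : S.filter (fun q => ¬ q.Prime)
          = (Finset.range k).filter (fun q => IsPrimePow q ∧ ¬ q.Prime) := by
        rw [hS, Finset.filter_filter]
      rw [heq]
      calc (∑ q ∈ (Finset.range k).filter (fun q => IsPrimePow q ∧ ¬ q.Prime),
              Real.log q / q)
          ≤ ∑ q ∈ (Finset.range k).filter (fun q => IsPrimePow q ∧ ¬ q.Prime),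
              Real.log k * ((q:ℝ))⁻¹ := by
            apply Finset.sum_le_sum
            intro q hq
            simp only [Finset.mem_filter, Finset.mem_range] at hq
            have hq0 : (0:ℝ) < q := by exact_mod_cast hq.2.1.pos
            have hqk : (q:ℝ) ≤ k := by exact_mod_cast hq.1.le
            rw [div_eq_mul_inv]
            gcongr
        _ = Real.log k * ∑ q ∈ (Finset.range k).filter (fun q => IsPrimePow q ∧ ¬ q.Prime),
              ((q:ℝ))⁻¹ := by rw [Finset.mul_sum]
        _ ≤ Real.log k * 2 := by
            apply mul_le_mul_of_nonneg_left (aux_pp_sum k) hlogk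
        _ = 2 * Real.log k := by ring
    linarith
  have hlogsum : (∑ q ∈ S, Real.log q) ≤ (k:ℝ) * Real.log k := by
    calc (∑ q ∈ S, Real.log q) ≤ ∑ q ∈ S, Real.log k := by
          apply Finset.sum_le_sum
          intro q hq
          simp only [hS, Finset.mem_filter, Finset.mem_range] at hq
          have h0 : (0:ℝ) < q := by exact_mod_cast hq.2.pos
          have : (q:ℝ) ≤ k := by exact_mod_cast hq.1.le
          gcongr
      _ = S.card * Real.log k := by rw [Finset.sum_const, nsmul_eq_mul]
      _ ≤ (k:ℝ) * Real.log k := by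
          gcongr
          exact_mod_cast (Finset.card_filter_le _ _).trans (by simp)
  calc (∑ q ∈ S, Real.log ((q:ℝ) ^ ⌈(k:ℝ)/(q:ℝ)⌉₊))
      ≤ ∑ q ∈ S, ((k:ℝ) * (Real.log q / q) + Real.log q) := Finset.sum_le_sum hterm
    _ = (k:ℝ) * (∑ q ∈ S, Real.log q / q) + ∑ q ∈ S, Real.log q := by
        rw [Finset.sum_add_distrib, Finset.mul_sum]
    _ ≤ (k:ℝ) * (4 * Real.log k) + (k:ℝ) * Real.log k := by
        gcongr
    _ = 5 * (k:ℝ) * Real.log k := by ring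
end

section
/- Let a_1, ..., a_n be positive integers with sum m, and let F(r, d) denote the r-uniform hypergraph on [n] whose edges are the r-element subsets I with ∑_{i∈I} a_i = d. If F(r, d) contains l edges, then there exist positive integers r' ≤ r and d' ≤ d such that F(r', d') contains a matching (a family of pairwise disjoint edges) of size at least l^{1/r}/r. -/
open Finset

private def Fs (n : ℕ) (a : Fin n → ℕ) (r d : ℕ) : Finset (Finset (Fin n)) :=
  Finset.univ.filter (fun I => I.card = r ∧ ∑ i ∈ I, a i = d)

private lemma mem_Fs {n : ℕ} {a : Fin n → ℕ} {r d : ℕ} {I : Finset (Fin n)} :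
    I ∈ Fs n a r d ↔ I.card = r ∧ ∑ i ∈ I, a i = d := by
  simp [Fs]

private lemma main (n : ℕ) (a : Fin n → ℕ) (ha : ∀ i, 0 < a i) :
    ∀ r : ℕ, ∀ d : ℕ, 0 < r → 0 < d →
    ∃ r' d' : ℕ, 0 < r' ∧ r' ≤ r ∧ 0 < d' ∧ d' ≤ d ∧
      ∃ M : Finset (Finset (Fin n)),
        (∀ I ∈ M, I.card = r' ∧ ∑ i ∈ I, a i = d') ∧
        (∀ I ∈ M, ∀ J ∈ M, I ≠ J → Disjoint I J) ∧
        ((Fs n a r d).card : ℝ) ^ ((1 : ℝ) / r) / r ≤ (M.card : ℝ) := by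
  intro r
  induction r with
  | zero => intro d h _; omega
  | succ r ih =>
    intro d _ hd
    by_cases hl0 : (Fs n a (r+1) d).card = 0
    · refine ⟨r+1, d, Nat.succ_pos r, le_refl _, hd, le_refl _, ∅, by simp, by simp, ?_⟩
      rw [hl0]
      push_cast
      rw [Real.zero_rpow (by positivity)]
      simp
    · set l := (Fs n a (r+1) d).card with hl
      have hl1 : 1 ≤ l := Nat.one_le_iff_ne_zero.mpr hl0
      obtain ⟨E₀, hE₀⟩ : (Fs n a (r+1) d).Nonempty := card_pos.mp (by omega)
      rcases Nat.eq_zero_or_pos r with rfl | hr1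
      · -- uniformity 1
        refine ⟨1, d, one_pos, le_refl _, hd, le_refl _, Fs n a 1 d, fun I hI => mem_Fs.mp hI,
          ?_, ?_⟩
        · intro I hI J hJ hne
          obtain ⟨x, rfl⟩ := Finset.card_eq_one.mp (mem_Fs.mp hI).1
          obtain ⟨y, rfl⟩ := Finset.card_eq_one.mp (mem_Fs.mp hJ).1
          simp only [Finset.disjoint_singleton]
          intro h; exact hne (by rw [h])
        · norm_num; exact hl.le
      · -- r ≥ 1
        have hE₀ne : E₀.Nonempty := card_pos.mp (by rw [(mem_Fs.mp hE₀).1]; omega)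
        have : Nonempty (Fin n) := ⟨hE₀ne.choose⟩
        obtain ⟨i₀, -, hmax⟩ := Finset.exists_max_image Finset.univ
          (fun v => ((Fs n a (r+1) d).filter (fun E => v ∈ E)).card) univ_nonempty
        set D := ((Fs n a (r+1) d).filter (fun E => i₀ ∈ E)).card with hD
        set T : ℝ := (l : ℝ) ^ (1 - 1/((r:ℝ)+1)) with hT
        have hrR : (0:ℝ) < (r:ℝ) := by exact_mod_cast hr1
        have hl0R : (0:ℝ) < (l:ℝ) := by exact_mod_cast hl1
        have hexp0 : (0:ℝ) ≤ 1 - 1/((r:ℝ)+1) := by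
          rw [sub_nonneg]
          rw [div_le_one (by positivity)]
          linarith
        have hT1 : (1:ℝ) ≤ T := Real.one_le_rpow (by exact_mod_cast hl1) hexp0
        rcases le_or_gt T (D:ℝ) with hcase | hcase
        · -- high degree case
          have hD1 : 1 ≤ D := by exact_mod_cast hT1.trans hcase
          obtain ⟨E, hE⟩ : ((Fs n a (r+1) d).filter (fun E => i₀ ∈ E)).Nonempty :=
            card_pos.mp (by omega)
          obtain ⟨hEF, hiE⟩ := mem_filter.mp hE
          have hsumE : a i₀ + ∑ j ∈ E.erase i₀, a j = d := by
            rw [Finset.add_sum_erase _ _ hiE]; exact (mem_Fs.mp hEF).2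
          have herase_card : (E.erase i₀).card = r := by
            rw [Finset.card_erase_of_mem hiE, (mem_Fs.mp hEF).1]; omega
          have herase_ne : (E.erase i₀).Nonempty := card_pos.mp (by omega)
          have hposE : 0 < ∑ j ∈ E.erase i₀, a j :=
            Finset.sum_pos (fun j _ => ha j) herase_ne
          have hd' : 0 < d - a i₀ := by omega
          have hlink : D ≤ (Fs n a r (d - a i₀)).card := by
            apply Finset.card_le_card_of_injOn (fun E => E.erase i₀)
            · intro E' hE'
              obtain ⟨hE'F, hiE'⟩ := mem_filter.mp hE'
              obtain ⟨hc, hs⟩ := mem_Fs.mp hE'F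
              have h1 : a i₀ + ∑ j ∈ E'.erase i₀, a j = d := by
                rw [Finset.add_sum_erase _ _ hiE']; exact hs
              refine mem_Fs.mpr ⟨?_, by beta_reduce; omega⟩
              rw [Finset.card_erase_of_mem hiE', hc]; omega
            · intro E1 h1 E2 h2 h
              have hi1 : i₀ ∈ E1 := (mem_filter.mp h1).2
              have hi2 : i₀ ∈ E2 := (mem_filter.mp h2).2
              have := congrArg (insert i₀) h
              rwa [Finset.insert_erase hi1, Finset.insert_erase hi2] at this
          obtain ⟨r', d', h1, h2, h3, h4, M, hM1, hM2, hM3⟩ := ih (d - a i₀) hr1 hd'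
          refine ⟨r', d', h1, h2.trans (Nat.le_succ r), h3, h4.trans (Nat.sub_le d _),
            M, hM1, hM2, ?_⟩
          have hTl1 : T ≤ ((Fs n a r (d - a i₀)).card : ℝ) :=
            hcase.trans (by exact_mod_cast hlink)
          have key : (l:ℝ) ^ ((1:ℝ)/((r:ℝ)+1)) ≤ ((Fs n a r (d - a i₀)).card : ℝ) ^ ((1:ℝ)/(r:ℝ)) := by
            have h0T : (0:ℝ) ≤ T := by linarith
            have hstep := Real.rpow_le_rpow h0T hTl1 (by positivity : (0:ℝ) ≤ 1/(r:ℝ))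
            have heq : T ^ ((1:ℝ)/(r:ℝ)) = (l:ℝ) ^ ((1:ℝ)/((r:ℝ)+1)) := by
              rw [hT, ← Real.rpow_mul (le_of_lt hl0R)]
              congr 1
              field_simp
              ring
            rw [← heq]; exact hstep
          push_cast
          calc (l:ℝ) ^ ((1:ℝ)/((r:ℝ)+1)) / ((r:ℝ)+1)
              ≤ (l:ℝ) ^ ((1:ℝ)/((r:ℝ)+1)) / (r:ℝ) :=
                div_le_div_of_nonneg_left (by positivity) hrR (by linarith)
            _ ≤ ((Fs n a r (d - a i₀)).card : ℝ) ^ ((1:ℝ)/(r:ℝ)) / (r:ℝ) := by gcongr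
            _ ≤ (M.card : ℝ) := hM3
        · -- low degree case: maximal matching in Fs (r+1) d
          set P := ((Fs n a (r+1) d).powerset).filter
            (fun M => ∀ I ∈ M, ∀ J ∈ M, I ≠ J → Disjoint I J) with hP
          have hPne : P.Nonempty := ⟨∅, by simp [hP]⟩
          obtain ⟨M, hMP, hMmax⟩ := Finset.exists_max_image P Finset.card hPne
          obtain ⟨hMsub, hMmatch⟩ := mem_filter.mp hMP
          rw [Finset.mem_powerset] at hMsub
          have hmeet : ∀ E ∈ Fs n a (r+1) d, ∃ J ∈ M, ¬ Disjoint E J := by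
            intro E hE
            by_contra hcon
            push_neg at hcon
            have hEM : E ∉ M := by
              intro hEM
              have h2 := hcon E hEM
              rw [disjoint_self] at h2
              have h3 := (mem_Fs.mp hE).1
              rw [h2] at h3
              simp at h3
            have hins : insert E M ∈ P := by
              rw [hP, mem_filter, Finset.mem_powerset]
              constructor
              · exact Finset.insert_subset hE hMsub
              · intro I hI J hJ hne
                rcases Finset.mem_insert.mp hI with hIE | hI'
                · rcases Finset.mem_insert.mp hJ with hJE | hJ'
                  · exact absurd (hIE.trans hJE.symm) hne
                  · rw [hIE]; exact hcon J hJ'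
                · rcases Finset.mem_insert.mp hJ with hJE | hJ'
                  · rw [hJE]; exact (hcon I hI').symm
                  · exact hMmatch I hI' J hJ' hne
            have := hMmax _ hins
            rw [Finset.card_insert_of_notMem hEM] at this
            omega
          have hMne : M.Nonempty := by
            obtain ⟨J, hJ, -⟩ := hmeet E₀ hE₀
            exact ⟨J, hJ⟩
          have hcount : l ≤ M.card * ((r+1) * D) := by
            have hsub : Fs n a (r+1) d ⊆
                M.biUnion (fun J => (Fs n a (r+1) d).filter (fun E => ¬ Disjoint E J)) := by
              intro E hE
              obtain ⟨J, hJ, hJ2⟩ := hmeet E hE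
              exact Finset.mem_biUnion.mpr ⟨J, hJ, mem_filter.mpr ⟨hE, hJ2⟩⟩
            have hinner : ∀ J ∈ M,
                ((Fs n a (r+1) d).filter (fun E => ¬ Disjoint E J)).card ≤ (r+1) * D := by
              intro J hJ
              have hsub2 : (Fs n a (r+1) d).filter (fun E => ¬ Disjoint E J) ⊆
                  J.biUnion (fun v => (Fs n a (r+1) d).filter (fun E => v ∈ E)) := by
                intro E hE
                obtain ⟨hEF, hEJ⟩ := mem_filter.mp hE
                obtain ⟨v, hvE, hvJ⟩ := Finset.not_disjoint_iff.mp hEJ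
                exact Finset.mem_biUnion.mpr ⟨v, hvJ, mem_filter.mpr ⟨hEF, hvE⟩⟩
              calc ((Fs n a (r+1) d).filter (fun E => ¬ Disjoint E J)).card
                  ≤ (J.biUnion (fun v => (Fs n a (r+1) d).filter (fun E => v ∈ E))).card :=
                    Finset.card_le_card hsub2
                _ ≤ ∑ v ∈ J, ((Fs n a (r+1) d).filter (fun E => v ∈ E)).card :=
                    Finset.card_biUnion_le
                _ ≤ ∑ _v ∈ J, D := Finset.sum_le_sum (fun v _ => hmax v (Finset.mem_univ v))
                _ = (r+1) * D := by
                    rw [Finset.sum_const, smul_eq_mul, (mem_Fs.mp (hMsub hJ)).1]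
            calc l ≤ (M.biUnion (fun J => (Fs n a (r+1) d).filter (fun E => ¬ Disjoint E J))).card :=
                  Finset.card_le_card hsub
              _ ≤ ∑ J ∈ M, ((Fs n a (r+1) d).filter (fun E => ¬ Disjoint E J)).card :=
                  Finset.card_biUnion_le
              _ ≤ ∑ _J ∈ M, (r+1) * D := Finset.sum_le_sum hinner
              _ = M.card * ((r+1) * D) := by rw [Finset.sum_const, smul_eq_mul]
          refine ⟨r+1, d, Nat.succ_pos r, le_refl _, hd, le_refl _, M,
            fun I hI => mem_Fs.mp (hMsub hI), hMmatch, ?_⟩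
          have hMc0 : (0:ℝ) < (M.card : ℝ) := by
            exact_mod_cast card_pos.mpr hMne
          have hT0 : (0:ℝ) < T := by linarith
          have h1R : (l:ℝ) ≤ (M.card : ℝ) * (((r:ℝ)+1) * (D:ℝ)) := by
            exact_mod_cast hcount
          have h2R : (l:ℝ) < (M.card : ℝ) * (((r:ℝ)+1) * T) := by
            refine lt_of_le_of_lt h1R ?_
            have : ((r:ℝ)+1) * (D:ℝ) < ((r:ℝ)+1) * T :=
              mul_lt_mul_of_pos_left hcase (by positivity)
            exact mul_lt_mul_of_pos_left this hMc0
          have hsplit : (l:ℝ) = (l:ℝ) ^ ((1:ℝ)/((r:ℝ)+1)) * T := by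
            rw [hT, ← Real.rpow_add hl0R]
            have : (1:ℝ)/((r:ℝ)+1) + (1 - 1/((r:ℝ)+1)) = 1 := by ring
            rw [this, Real.rpow_one]
          have h3R : (l:ℝ) ^ ((1:ℝ)/((r:ℝ)+1)) < (M.card : ℝ) * ((r:ℝ)+1) := by
            have h4 : (l:ℝ) ^ ((1:ℝ)/((r:ℝ)+1)) * T < ((M.card : ℝ) * ((r:ℝ)+1)) * T := by
              rw [← hsplit]
              calc (l:ℝ) < (M.card : ℝ) * (((r:ℝ)+1) * T) := h2R
                _ = ((M.card : ℝ) * ((r:ℝ)+1)) * T := by ring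
            exact lt_of_mul_lt_mul_right h4 (le_of_lt hT0)
          push_cast
          rw [div_le_iff₀ (by positivity : (0:ℝ) < (r:ℝ)+1)]
          linarith [h3R]

/-- If `F(r,d)` has `l` edges, then some `F(r',d')` with `r' ≤ r`, `d' ≤ d` contains
a matching of size at least `l^{1/r}/r`. -/
theorem stmt10 (n : ℕ) (a : Fin n → ℕ) (ha : ∀ i, 0 < a i) (r d l : ℕ)
    (hr : 0 < r) (hd : 0 < d)
    (hl : ((Finset.univ : Finset (Finset (Fin n))).filter
      (fun I => I.card = r ∧ ∑ i ∈ I, a i = d)).card = l) :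
    ∃ r' d' : ℕ, 0 < r' ∧ r' ≤ r ∧ 0 < d' ∧ d' ≤ d ∧
      ∃ M : Finset (Finset (Fin n)),
        (∀ I ∈ M, I.card = r' ∧ ∑ i ∈ I, a i = d') ∧
        (∀ I ∈ M, ∀ J ∈ M, I ≠ J → Disjoint I J) ∧
        (l : ℝ) ^ ((1 : ℝ) / r) / r ≤ (M.card : ℝ) := by
  subst hl
  exact main n a ha r d hr hd
end

section
/- Let a_1, ..., a_n be positive integers with sum m, and fix a positive integer r. Then there exist positive integers r' ≤ r and d' such that the r'-uniform hypergraph F(r', d') (whose edges are the r'-element subsets I of [n] with ∑_{i∈I} a_i = d') contains a matching of size at least n/(r^2 · m^{1/r}). -/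
open Finset

namespace Stmt11
private lemma pow_le_pow_mul_choose {n r : ℕ} (h : r ≤ n) : n ^ r ≤ r ^ r * n.choose r := by
  have key : n ^ r * r.factorial ≤ r ^ r * n.descFactorial r := by
    have h1 : n ^ r * r.factorial = ∏ i ∈ range r, n * (r - i) := by
      rw [prod_mul_distrib, prod_const, card_range, ← Nat.descFactorial_eq_prod_range,
        Nat.descFactorial_self]
    have h2 : r ^ r * n.descFactorial r = ∏ i ∈ range r, r * (n - i) := by
      rw [prod_mul_distrib, prod_const, card_range, Nat.descFactorial_eq_prod_range]
    rw [h1, h2]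
    refine Finset.prod_le_prod' ?_
    intro i hi
    have hi' : i < r := mem_range.mp hi
    obtain ⟨s, hs⟩ : ∃ s, r = i + s := ⟨r - i, by omega⟩
    obtain ⟨t, ht⟩ : ∃ t, n = r + t := ⟨n - r, by omega⟩
    subst hs; subst ht
    have e1 : i + s + t - i = s + t := by omega
    have e2 : i + s - i = s := by omega
    rw [e1, e2]
    nlinarith
  have := Nat.descFactorial_eq_factorial_mul_choose n r
  rw [this] at key
  have key2 : r.factorial * n ^ r ≤ r.factorial * (r ^ r * n.choose r) := by
    calc r.factorial * n ^ r = n ^ r * r.factorial := by ring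
    _ ≤ r ^ r * (r.factorial * n.choose r) := key
    _ = r.factorial * (r ^ r * n.choose r) := by ring
  exact Nat.le_of_mul_le_mul_left key2 (Nat.factorial_pos r)


variable {n : ℕ}

def E (a : Fin n → ℕ) (k d : ℕ) : Finset (Finset (Fin n)) :=
  univ.filter fun I => I.card = k ∧ ∑ i ∈ I, a i = d

lemma mem_E {a : Fin n → ℕ} {k d : ℕ} {I : Finset (Fin n)} :
    I ∈ E a k d ↔ I.card = k ∧ ∑ i ∈ I, a i = d := by simp [E]

def good (a : Fin n → ℕ) (r : ℕ) (M : Finset (Finset (Fin n))) : Prop :=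
  (∃ r' d', 0 < r' ∧ r' ≤ r ∧ 0 < d' ∧ ∀ I ∈ M, I.card = r' ∧ ∑ i ∈ I, a i = d') ∧
  ∀ I ∈ M, ∀ J ∈ M, I ≠ J → Disjoint I J

lemma good_empty (a : Fin n → ℕ) {r : ℕ} (hr : 0 < r) : good a r ∅ :=
  ⟨⟨r, 1, hr, le_refl r, one_pos, by simp⟩, by simp⟩

open Classical in
noncomputable def nu (a : Fin n → ℕ) (r : ℕ) : ℕ :=
  (univ.filter (good a r)).sup card

lemma card_le_nu {a : Fin n → ℕ} {r : ℕ} {M : Finset (Finset (Fin n))}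
    (h : good a r M) : M.card ≤ nu a r := by
  classical
  exact Finset.le_sup (f := card) (by simp [h] : M ∈ univ.filter (good a r))

lemma exists_nu_witness (a : Fin n → ℕ) {r : ℕ} (hr : 0 < r) :
    ∃ M : Finset (Finset (Fin n)), good a r M ∧ M.card = nu a r := by
  classical
  have hne : (univ.filter (good a r)).Nonempty :=
    ⟨∅, by simp [good_empty a hr]⟩
  obtain ⟨M, hM, hMcard⟩ := Finset.exists_mem_eq_sup (univ.filter (good a r)) hne (Finset.card : Finset (Finset (Fin n)) → ℕ)
  exact ⟨M, (mem_filter.mp hM).2, hMcard.symm⟩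

lemma one_le_nu {a : Fin n → ℕ} (ha : ∀ i, 0 < a i) {r : ℕ} (hr : 0 < r) (hn : 0 < n) :
    1 ≤ nu a r := by
  have : good a r {({⟨0, hn⟩} : Finset (Fin n))} := by
    refine ⟨⟨1, a ⟨0, hn⟩, one_pos, hr, ha _, ?_⟩, ?_⟩
    · intro I hI; simp only [mem_singleton] at hI; subst hI; simp
    · intro I hI J hJ hIJ
      simp only [mem_singleton] at hI hJ; subst hI; subst hJ; exact absurd rfl hIJ
  have := card_le_nu this
  simpa using this


lemma sum_pos_of_card_pos {a : Fin n → ℕ} (ha : ∀ i, 0 < a i) {I : Finset (Fin n)}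
    (hI : 0 < I.card) : 0 < ∑ i ∈ I, a i := by
  obtain ⟨i, hi⟩ := Finset.card_pos.mp hI
  exact lt_of_lt_of_le (ha i) (Finset.single_le_sum (fun j _ => Nat.zero_le _) hi)

lemma base (a : Fin n → ℕ) (ha : ∀ i, 0 < a i) {r : ℕ} (hr : 0 < r) (hrn : r ≤ n) :
    ∃ d, 0 < d ∧ n.choose r ≤ (∑ i, a i) * (E a r d).card := by
  classical
  set m := ∑ i, a i with hm
  have hm1 : 1 ≤ m := by
    have : 0 < n := lt_of_lt_of_le hr hrn
    exact sum_pos_of_card_pos ha (by simpa using this)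
  set s : Finset (Finset (Fin n)) := univ.powersetCard r with hs
  have hcard : s.card = n.choose r := by
    simp [hs, Finset.card_powersetCard]
  have hmem : ∀ I ∈ s, (∑ i ∈ I, a i) ∈ Icc 1 m := by
    intro I hI
    have hIc : I.card = r := (Finset.mem_powersetCard_univ).mp hI
    refine mem_Icc.mpr ⟨sum_pos_of_card_pos ha (by omega), ?_⟩
    exact Finset.sum_le_sum_of_subset (Finset.subset_univ I)
  have hfib : s.card = ∑ d ∈ Icc 1 m, (s.filter fun I => ∑ i ∈ I, a i = d).card :=
    Finset.card_eq_sum_card_fiberwise hmem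
  have hne : (Icc 1 m).Nonempty := ⟨1, by simp [hm1]⟩
  obtain ⟨d, hd, hsup⟩ := Finset.exists_mem_eq_sup (Icc 1 m) hne (fun d' => (E a r d').card)
  refine ⟨d, (mem_Icc.mp hd).1, ?_⟩
  calc n.choose r = s.card := hcard.symm
    _ = ∑ d' ∈ Icc 1 m, (s.filter fun I => ∑ i ∈ I, a i = d').card := hfib
    _ ≤ ∑ d' ∈ Icc 1 m, (E a r d').card := by
        refine Finset.sum_le_sum fun d' _ => Finset.card_le_card ?_
        intro I hI
        rw [mem_filter] at hI
        exact mem_E.mpr ⟨(Finset.mem_powersetCard_univ).mp hI.1, hI.2⟩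
    _ ≤ (Icc 1 m).card * (E a r d).card := by
        have := Finset.sum_le_card_nsmul (Icc 1 m) (fun d' => (E a r d').card)
          ((E a r d).card) (fun d' hd' => by
            show _ ≤ _
            rw [← hsup]
            exact Finset.le_sup (f := fun d'' => (E a r d'').card) hd')
        simpa [smul_eq_mul] using this
    _ = m * (E a r d).card := by rw [Nat.card_Icc, Nat.add_sub_cancel]


lemma step (a : Fin n → ℕ) (ha : ∀ i, 0 < a i) {r k d : ℕ} (hk : 1 ≤ k) (hkr : k + 1 ≤ r) :
    ∃ d', 0 < d' ∧ (E a (k+1) d).card ≤ r * nu a r * (E a k d').card := by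
  classical
  by_cases hE : (E a (k+1) d).Nonempty
  swap
  · exact ⟨1, one_pos, by simp [Finset.not_nonempty_iff_eq_empty.mp hE]⟩
  obtain ⟨I₀, hI₀⟩ := hE
  have hd : 0 < d := by
    obtain ⟨hc, hs⟩ := mem_E.mp hI₀
    rw [← hs]; exact sum_pos_of_card_pos ha (by omega)
  -- maximal matching
  set 𝓜 : Finset (Finset (Finset (Fin n))) :=
    (E a (k+1) d).powerset.filter (fun M => ∀ I ∈ M, ∀ J ∈ M, I ≠ J → Disjoint I J) with h𝓜
  have h𝓜ne : 𝓜.Nonempty := ⟨∅, by simp [h𝓜]⟩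
  obtain ⟨M, hM𝓜, hMmax⟩ := Finset.exists_max_image 𝓜 Finset.card h𝓜ne
  rw [h𝓜, mem_filter, Finset.mem_powerset] at hM𝓜
  obtain ⟨hMsub, hMdisj⟩ := hM𝓜
  have hMgood : good a r M := by
    refine ⟨⟨k+1, d, by omega, hkr, hd, fun I hI => mem_E.mp (hMsub hI)⟩, hMdisj⟩
  have hMnu : M.card ≤ nu a r := card_le_nu hMgood
  set W : Finset (Fin n) := M.biUnion id with hW
  have hWcard : W.card ≤ (k+1) * M.card := by
    calc W.card ≤ ∑ I ∈ M, (id I).card := Finset.card_biUnion_le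
      _ = ∑ I ∈ M, (k+1) := by
          refine Finset.sum_congr rfl fun I hI => ?_
          exact (mem_E.mp (hMsub hI)).1
      _ = (k+1) * M.card := by rw [Finset.sum_const, smul_eq_mul, mul_comm]
  have hmeet : ∀ I ∈ E a (k+1) d, (I ∩ W).Nonempty := by
    intro I hIE
    by_contra hcon
    have hdisjW : Disjoint I W := by
      rw [Finset.disjoint_iff_inter_eq_empty]
      exact Finset.not_nonempty_iff_eq_empty.mp hcon
    have hInotM : I ∉ M := by
      intro hIM
      have hsubW : I ⊆ W := Finset.subset_biUnion_of_mem id hIM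
      have : I = ∅ := Finset.eq_empty_of_forall_notMem fun x hx =>
        (Finset.disjoint_left.mp hdisjW) hx (hsubW hx)
      have hc := (mem_E.mp hIE).1
      rw [this, Finset.card_empty] at hc
      omega
    have hins : insert I M ∈ 𝓜 := by
      rw [h𝓜, mem_filter, Finset.mem_powerset]
      constructor
      · intro J hJ
        rcases Finset.mem_insert.mp hJ with h | h
        · exact h ▸ hIE
        · exact hMsub h
      · intro J hJ K hK hJK
        rcases Finset.mem_insert.mp hJ with h1 | h1 <;>
          rcases Finset.mem_insert.mp hK with h2 | h2
        · exact absurd (h1.trans h2.symm) hJK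
        · subst h1
          refine Finset.disjoint_left.mpr fun x hx hxK => ?_
          exact (Finset.disjoint_left.mp hdisjW) hx
              (Finset.mem_biUnion.mpr ⟨K, h2, hxK⟩)
        · subst h2
          refine Finset.disjoint_left.mpr fun x hxJ hxK => ?_
          exact (Finset.disjoint_left.mp hdisjW) hxK
              (Finset.mem_biUnion.mpr ⟨J, h1, hxJ⟩)
        · exact hMdisj J h1 K h2 hJK
    have := hMmax _ hins
    rw [Finset.card_insert_of_notMem hInotM] at this
    omega
  have hWne : W.Nonempty := by
    obtain ⟨x, hx⟩ := hmeet I₀ hI₀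
    exact ⟨x, (Finset.mem_inter.mp hx).2⟩
  -- degree pigeonhole
  have hcover : (E a (k+1) d).card ≤
      ∑ w ∈ W, ((E a (k+1) d).filter (fun I => w ∈ I)).card := by
    calc (E a (k+1) d).card
        ≤ (W.biUnion (fun w => (E a (k+1) d).filter (fun I => w ∈ I))).card := by
          refine Finset.card_le_card fun I hIE => ?_
          obtain ⟨x, hx⟩ := hmeet I hIE
          rw [Finset.mem_inter] at hx
          exact Finset.mem_biUnion.mpr ⟨x, hx.2, Finset.mem_filter.mpr ⟨hIE, hx.1⟩⟩
      _ ≤ ∑ w ∈ W, ((E a (k+1) d).filter (fun I => w ∈ I)).card := Finset.card_biUnion_le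
  obtain ⟨w, hwW, hwsup⟩ := Finset.exists_mem_eq_sup W hWne
    (fun w => ((E a (k+1) d).filter (fun I => w ∈ I)).card)
  set deg := ((E a (k+1) d).filter (fun I => w ∈ I)).card with hdeg
  have hsum : (E a (k+1) d).card ≤ W.card * deg := by
    refine hcover.trans ?_
    have := Finset.sum_le_card_nsmul W
      (fun w' => ((E a (k+1) d).filter (fun I => w' ∈ I)).card) deg
      (fun w' hw' => by
        rw [← hwsup]
        exact Finset.le_sup (f := fun w'' => ((E a (k+1) d).filter (fun I => w'' ∈ I)).card) hw')
    simpa [smul_eq_mul] using this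
  -- link injection
  have hlink : deg ≤ (E a k (d - a w)).card := by
    rw [hdeg]
    refine Finset.card_le_card_of_injOn (fun I => I.erase w) ?_ ?_
    · intro I hI
      rw [Finset.mem_coe, Finset.mem_filter] at hI
      rw [Finset.mem_coe]
      obtain ⟨hIE, hwI⟩ := hI
      obtain ⟨hc, hs⟩ := mem_E.mp hIE
      refine mem_E.mpr ⟨?_, ?_⟩
      · rw [Finset.card_erase_of_mem hwI, hc]; omega
      · have h2 := Finset.add_sum_erase I a hwI
        show ∑ i ∈ I.erase w, a i = d - a w
        omega
    · intro I hI J hJ hIJ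
      rw [Finset.coe_filter, Set.mem_setOf_eq] at hI hJ
      have := congrArg (insert w) hIJ
      rwa [Finset.insert_erase hI.2, Finset.insert_erase hJ.2] at this
  have hdegpos : 1 ≤ deg := by
    have hEpos : 1 ≤ (E a (k+1) d).card := Finset.card_pos.mpr ⟨I₀, hI₀⟩
    by_contra h
    have : deg = 0 := by omega
    rw [this, mul_zero] at hsum
    omega
  have hd'pos : 0 < d - a w := by
    obtain ⟨J, hJ⟩ := Finset.card_pos.mp (lt_of_lt_of_le hdegpos hlink)
    obtain ⟨hc, hs⟩ := mem_E.mp hJ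
    rw [← hs]
    exact sum_pos_of_card_pos ha (by omega)
  refine ⟨d - a w, hd'pos, ?_⟩
  calc (E a (k+1) d).card ≤ W.card * deg := hsum
    _ ≤ ((k+1) * M.card) * deg := Nat.mul_le_mul_right _ hWcard
    _ ≤ (r * nu a r) * deg := by
        refine Nat.mul_le_mul_right _ ?_
        exact Nat.mul_le_mul hkr hMnu
    _ ≤ r * nu a r * (E a k (d - a w)).card := Nat.mul_le_mul_left _ hlink


lemma chain (a : Fin n → ℕ) (ha : ∀ i, 0 < a i) {r : ℕ} (hr : 0 < r) (hrn : r ≤ n) :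
    ∀ j, j ≤ r - 1 →
      ∃ d', 0 < d' ∧ n.choose r ≤ (∑ i, a i) * (r * nu a r) ^ j * (E a (r - j) d').card := by
  intro j
  induction j with
  | zero =>
    intro _
    obtain ⟨d, hd, hbase⟩ := base a ha hr hrn
    exact ⟨d, hd, by simpa using hbase⟩
  | succ j ih =>
    intro hj
    obtain ⟨d, hd, hchain⟩ := ih (by omega)
    have hk : 1 ≤ r - j - 1 := by omega
    have hkr : (r - j - 1) + 1 ≤ r := by omega
    obtain ⟨d', hd', hstep⟩ := step a ha (d := d) hk hkr
    refine ⟨d', hd', ?_⟩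
    have he : r - j = (r - j - 1) + 1 := by omega
    rw [he] at hchain
    have he2 : r - (j+1) = r - j - 1 := by omega
    rw [he2]
    calc n.choose r ≤ (∑ i, a i) * (r * nu a r) ^ j * (E a ((r-j-1)+1) d).card := hchain
      _ ≤ (∑ i, a i) * (r * nu a r) ^ j * ((r * nu a r) * (E a (r-j-1) d').card) :=
          Nat.mul_le_mul_left _ hstep
      _ = (∑ i, a i) * (r * nu a r) ^ (j+1) * (E a (r-j-1) d').card := by ring

lemma E_one_card_le_nu (a : Fin n → ℕ) {r : ℕ} (hr : 0 < r) {d : ℕ} (hd : 0 < d) :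
    (E a 1 d).card ≤ nu a r := by
  apply card_le_nu
  refine ⟨⟨1, d, one_pos, hr, hd, fun I hI => mem_E.mp hI⟩, ?_⟩
  intro I hI J hJ hne
  obtain ⟨x, hx⟩ := Finset.card_eq_one.mp (mem_E.mp hI).1
  obtain ⟨y, hy⟩ := Finset.card_eq_one.mp (mem_E.mp hJ).1
  subst hx; subst hy
  rw [Finset.disjoint_singleton]
  intro h; exact hne (by rw [h])

lemma main_nat (a : Fin n → ℕ) (ha : ∀ i, 0 < a i) {r : ℕ} (hr : 0 < r) (hn : 0 < n) :
    n ^ r ≤ (∑ i, a i) * (r^2 * nu a r) ^ r := by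
  have hm1 : 1 ≤ ∑ i, a i := sum_pos_of_card_pos ha (by simpa using hn)
  have hν1 : 1 ≤ nu a r := one_le_nu ha hr hn
  set m := ∑ i, a i with hm
  set ν := nu a r with hν
  by_cases hrn : r ≤ n
  · obtain ⟨d, hd, hch⟩ := chain a ha hr hrn (r-1) le_rfl
    have he : r - (r-1) = 1 := by omega
    rw [he] at hch
    have h2 : (E a 1 d).card ≤ ν := E_one_card_le_nu a hr hd
    have h3 : n.choose r ≤ m * (r * ν) ^ (r-1) * ν :=
      hch.trans (Nat.mul_le_mul_left _ h2)
    obtain ⟨r0, hr0⟩ : ∃ r0, r = r0 + 1 := ⟨r-1, by omega⟩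
    subst hr0
    have he1 : r0 + 1 - 1 = r0 := by omega
    rw [he1] at h3
    calc n ^ (r0+1) ≤ (r0+1) ^ (r0+1) * n.choose (r0+1) := pow_le_pow_mul_choose hrn
      _ ≤ (r0+1) ^ (r0+1) * (m * ((r0+1) * ν) ^ r0 * ν) := Nat.mul_le_mul_left _ h3
      _ = m * ((r0+1) ^ (2*r0+1) * ν ^ (r0+1)) := by
          rw [mul_pow]
          have : (r0+1) ^ (r0+1) * (r0+1) ^ r0 = (r0+1) ^ (2*r0+1) := by
            rw [← pow_add]; congr 1; omega
          rw [← this, pow_succ ν r0]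
          ring
      _ ≤ m * ((r0+1) ^ (2*(r0+1)) * ν ^ (r0+1)) := by
          refine Nat.mul_le_mul_left _ (Nat.mul_le_mul_right _ ?_)
          exact Nat.pow_le_pow_right (by omega) (by omega)
      _ = m * ((r0+1)^2 * ν) ^ (r0+1) := by
          rw [mul_pow, ← pow_mul]
      _ = m * ((r0+1)^2 * ν) ^ (r0+1) := rfl
  · have hnr : n ≤ r := by omega
    calc n ^ r ≤ (r^2 * ν) ^ r := by
          refine Nat.pow_le_pow_left ?_ r
          calc n ≤ r := hnr
            _ ≤ r^2 := by nlinarith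
            _ ≤ r^2 * ν := Nat.le_mul_of_pos_right _ (by omega)
      _ ≤ m * (r^2 * ν) ^ r := Nat.le_mul_of_pos_left _ (by omega)

lemma final_real {N m r ν : ℕ} (hr : 0 < r) (hm : 0 < m)
    (h : N ^ r ≤ m * (r^2 * ν) ^ r) :
    (N : ℝ) / ((r:ℝ)^2 * (m:ℝ) ^ ((1:ℝ)/r)) ≤ (ν : ℝ) := by
  have hrpos : (0:ℝ) < r := by exact_mod_cast hr
  have hmpos : (0:ℝ) < m := by exact_mod_cast hm
  have hrne : (r:ℝ) ≠ 0 := ne_of_gt hrpos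
  have hdenom : (0:ℝ) < (r:ℝ)^2 * (m:ℝ)^((1:ℝ)/r) := by positivity
  rw [div_le_iff₀ hdenom]
  have hcast : ((N:ℝ)) ^ (r:ℕ) ≤ (m:ℝ) * ((r:ℝ)^2 * (ν:ℝ)) ^ (r:ℕ) := by
    exact_mod_cast h
  have h1 : (((N:ℝ)) ^ (r:ℕ)) ^ ((1:ℝ)/r) ≤ ((m:ℝ) * ((r:ℝ)^2 * (ν:ℝ)) ^ (r:ℕ)) ^ ((1:ℝ)/r) :=
    Real.rpow_le_rpow (by positivity) hcast (by positivity)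
  have key : ∀ x : ℝ, 0 ≤ x → (x ^ (r:ℕ)) ^ ((1:ℝ)/r) = x := by
    intro x hx
    rw [← Real.rpow_natCast x r, ← Real.rpow_mul hx, mul_one_div, div_self hrne,
      Real.rpow_one]
  rw [key (N:ℝ) (by positivity),
    Real.mul_rpow (by positivity) (by positivity),
    key ((r:ℝ)^2 * (ν:ℝ)) (by positivity)] at h1
  calc (N:ℝ) ≤ (m:ℝ)^((1:ℝ)/r) * ((r:ℝ)^2 * ν) := h1
    _ = (ν:ℝ) * ((r:ℝ)^2 * (m:ℝ)^((1:ℝ)/r)) := by ring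

end Stmt11

/-- Some `F(r',d')` with `r' ≤ r` contains a matching of size at least `n/(r^2 m^{1/r})`,
where `m = ∑ a i`. -/
theorem stmt11 (n : ℕ) (a : Fin n → ℕ) (ha : ∀ i, 0 < a i) (r : ℕ) (hr : 0 < r) :
    ∃ r' d' : ℕ, 0 < r' ∧ r' ≤ r ∧ 0 < d' ∧
      ∃ M : Finset (Finset (Fin n)),
        (∀ I ∈ M, I.card = r' ∧ ∑ i ∈ I, a i = d') ∧
        (∀ I ∈ M, ∀ J ∈ M, I ≠ J → Disjoint I J) ∧
        (n : ℝ) / ((r : ℝ) ^ 2 * (∑ i, a i : ℕ) ^ ((1 : ℝ) / r)) ≤ (M.card : ℝ) := by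
  classical
  rcases Nat.eq_zero_or_pos n with hn | hn
  · subst hn
    exact ⟨1, 1, one_pos, hr, one_pos, ∅, by simp, by simp, by simp⟩
  · have hm : 0 < ∑ i, a i := Stmt11.sum_pos_of_card_pos ha (by simpa using hn)
    obtain ⟨M, hMgood, hMcard⟩ := Stmt11.exists_nu_witness a hr
    obtain ⟨⟨r', d', hr', hr'le, hd', hprop⟩, hdisj⟩ := hMgood
    refine ⟨r', d', hr', hr'le, hd', M, hprop, hdisj, ?_⟩
    rw [hMcard]
    exact Stmt11.final_real hr hm (Stmt11.main_nat a ha hr hn)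
end

section
/- Let a = (a_i)_{i=1}^n be a sequence of positive integers with ∑_{i=1}^n a_i = m (m sufficiently large). Then there exist positive integers k, r, d and pairwise disjoint r-element subsets I_1, ..., I_k of [n] such that: (1) 1 ≤ r ≤ log m; (2) k·d ≥ m/(log m)^3; and (3) ∑_{i∈I_j} a_i = d for each 1 ≤ j ≤ k. -/
open Finset
open scoped Classical

lemma fiber_bound {n : ℕ} (a : Fin n → ℕ) (S : Finset (Fin n)) (K r : ℕ)
    (hstop : ∀ j v (𝒜 : Finset (Finset (Fin n))), 1 ≤ j → j ≤ r →
      (∀ A ∈ 𝒜, A ⊆ S ∧ A.card = j ∧ ∑ i ∈ A, a i = v) →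
      ((𝒜 : Set (Finset (Fin n))).Pairwise Disjoint) → 𝒜.card ≤ (K-1)/j) :
    ∀ j, j ≤ r → ∀ v, ((S.powersetCard j).filter (fun A => ∑ i ∈ A, a i = v)).card ≤ (K-1)^j := by
  intro j
  induction j with
  | zero =>
    intro _ v
    have h : ((S.powersetCard 0).filter (fun A => ∑ i ∈ A, a i = v)) ⊆ {∅} := by
      intro A hA
      simp only [mem_filter, mem_powersetCard] at hA
      simp [Finset.card_eq_zero.1 hA.1.2]
    calc _ ≤ ({∅} : Finset (Finset (Fin n))).card := Finset.card_le_card h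
    _ = 1 := rfl
    _ ≤ (K-1)^0 := by simp
  | succ j ih =>
    intro hjr v
    set F := ((S.powersetCard (j+1)).filter (fun A => ∑ i ∈ A, a i = v)) with hF
    have hmemF : ∀ A ∈ F, A ⊆ S ∧ A.card = j + 1 ∧ ∑ i ∈ A, a i = v := by
      intro A hA
      simp only [hF, mem_filter, mem_powersetCard] at hA
      exact ⟨hA.1.1, hA.1.2, hA.2⟩
    -- candidate families
    set 𝒞 := F.powerset.filter (fun 𝒜 : Finset (Finset (Fin n)) => (↑𝒜 : Set (Finset (Fin n))).Pairwise Disjoint) with h𝒞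
    have h𝒞ne : 𝒞.Nonempty := ⟨∅, by simp [h𝒞]⟩
    obtain ⟨𝒜, h𝒜mem, h𝒜max⟩ := Finset.exists_max_image 𝒞 (fun 𝒜 => 𝒜.card) h𝒞ne
    simp only [h𝒞, mem_filter, mem_powerset] at h𝒜mem
    obtain ⟨h𝒜F, h𝒜pw⟩ := h𝒜mem
    have h𝒜card : 𝒜.card ≤ (K-1)/(j+1) := by
      refine hstop (j+1) v 𝒜 (by omega) hjr (fun A hA => hmemF A (h𝒜F hA)) h𝒜pw
    set U := 𝒜.biUnion id with hU
    have hUcard : U.card ≤ K - 1 := by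
      calc U.card ≤ ∑ A ∈ 𝒜, (id A).card := Finset.card_biUnion_le
      _ = ∑ A ∈ 𝒜, (j+1) := by
          apply Finset.sum_congr rfl
          intro A hA; exact (hmemF A (h𝒜F hA)).2.1
      _ = 𝒜.card * (j+1) := by rw [Finset.sum_const, smul_eq_mul]
      _ ≤ ((K-1)/(j+1)) * (j+1) := Nat.mul_le_mul_right _ h𝒜card
      _ ≤ K - 1 := Nat.div_mul_le_self _ _
    -- every member of F meets U
    have hmeet : ∀ B ∈ F, ∃ i ∈ U, i ∈ B := by
      intro B hB
      by_contra hcon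
      push_neg at hcon
      have hBdisj : ∀ A ∈ 𝒜, Disjoint B A := by
        intro A hA
        refine Finset.disjoint_left.2 (fun {x} hxB hxA => hcon x ?_ hxB)
        exact Finset.mem_biUnion.2 ⟨A, hA, hxA⟩
      have hBne : B.Nonempty := by
        rw [← Finset.card_pos, (hmemF B hB).2.1]; omega
      have hBnot : B ∉ 𝒜 := by
        intro hBA
        have := hBdisj B hBA
        rw [disjoint_self] at this
        rw [this] at hBne
        exact Finset.not_nonempty_empty hBne
      have hins : insert B 𝒜 ∈ 𝒞 := by
        simp only [h𝒞, mem_filter, mem_powerset]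
        constructor
        · exact Finset.insert_subset hB h𝒜F
        · rw [Finset.coe_insert]
          refine Set.Pairwise.insert h𝒜pw ?_
          intro A hA _
          exact ⟨hBdisj A hA, (hBdisj A hA).symm⟩
      have := h𝒜max _ hins
      rw [Finset.card_insert_of_notMem hBnot] at this
      omega
    -- card bound via biUnion over U
    have hsubset : F ⊆ U.biUnion (fun i => F.filter (fun A => i ∈ A)) := by
      intro B hB
      obtain ⟨i, hiU, hiB⟩ := hmeet B hB
      exact Finset.mem_biUnion.2 ⟨i, hiU, Finset.mem_filter.2 ⟨hB, hiB⟩⟩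
    have hfibers : ∀ i, (F.filter (fun A => i ∈ A)).card ≤ (K-1)^j := by
      intro i
      have hinj : (F.filter (fun A => i ∈ A)).card ≤
          (((S.powersetCard j).filter (fun A => ∑ x ∈ A, a x = v - a i))).card := by
        apply Finset.card_le_card_of_injOn (fun A => A.erase i)
        · intro A hA
          simp only [Finset.mem_coe, mem_filter] at hA
          obtain ⟨hAF, hiA⟩ := hA
          obtain ⟨hAS, hAcard, hAsum⟩ := hmemF A hAF
          simp only [Finset.mem_coe, mem_filter, mem_powersetCard]
          refine ⟨⟨Finset.Subset.trans (Finset.erase_subset _ _) hAS, ?_⟩, ?_⟩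
          · rw [Finset.card_erase_of_mem hiA, hAcard]; omega
          · have := Finset.add_sum_erase A a hiA
            omega
        · intro A hA A' hA' h
          simp only [Finset.coe_filter, Set.mem_setOf_eq] at hA hA'
          simp only at h
          have h1 : insert i (A.erase i) = insert i (A'.erase i) := by rw [h]
          rwa [Finset.insert_erase hA.2, Finset.insert_erase hA'.2] at h1
      exact hinj.trans (ih (by omega) (v - a i))
    calc F.card ≤ (U.biUnion (fun i => F.filter (fun A => i ∈ A))).card :=
          Finset.card_le_card hsubset
    _ ≤ ∑ i ∈ U, (F.filter (fun A => i ∈ A)).card := Finset.card_biUnion_le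
    _ ≤ ∑ i ∈ U, (K-1)^j := Finset.sum_le_sum (fun i _ => hfibers i)
    _ = U.card * (K-1)^j := by rw [Finset.sum_const, smul_eq_mul]
    _ ≤ (K-1) * (K-1)^j := Nat.mul_le_mul_right _ hUcard
    _ = (K-1)^(j+1) := by ring

lemma wrap_real {m kd E' : ℕ} (h : m ≤ kd * E') (hE : (E' : ℝ) ≤ (Real.log m)^3)
    (hL : 1 ≤ Real.log m) : (m : ℝ) / (Real.log m)^3 ≤ (kd : ℝ) := by
  have h3 : (0:ℝ) < (Real.log m)^3 := by positivity
  rw [div_le_iff₀ h3]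
  calc (m:ℝ) ≤ (kd : ℝ) * (E' : ℝ) := by exact_mod_cast h
  _ ≤ (kd : ℝ) * (Real.log m)^3 := by
      apply mul_le_mul_of_nonneg_left hE (by positivity)


set_option maxRecDepth 8000 in
theorem stmt12' : ∀ (n : ℕ) (a : Fin n → ℕ), (∀ i, 0 < a i) → 2^4000 ≤ ∑ i, a i →
    ∃ (k r d : ℕ) (I : Fin k → Finset (Fin n)), 0 < k ∧ 0 < d ∧
      (1 ≤ r ∧ (r : ℝ) ≤ Real.log (∑ i, a i : ℕ)) ∧
      ((∑ i, a i : ℕ) / (Real.log (∑ i, a i : ℕ)) ^ 3 ≤ ((k * d : ℕ) : ℝ)) ∧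
      (∀ j, (I j).card = r ∧ ∑ i ∈ I j, a i = d) ∧
      (∀ j j', j ≠ j' → Disjoint (I j) (I j')) := by
  intro n a hpos hm
  set m := ∑ i, a i with hmdef
  have hm1 : 1 ≤ m := le_trans (Nat.one_le_two_pow) hm
  set lg := Nat.log 2 m with hlg
  have hlg4000 : 4000 ≤ lg := Nat.le_log_of_pow_le (by norm_num) hm
  set r := 2 * lg / 3 with hr
  have hr3 : 3 * r ≤ 2 * lg ∧ 2 * lg ≤ 3 * r + 2 := by
    constructor <;> omega
  -- Real logarithm facts
  have hmR : ((2:ℝ)^(4000:ℕ)) ≤ (m:ℝ) := by exact_mod_cast hm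
  have hmpos : (0:ℝ) < (m:ℝ) := by positivity
  have hlogm2772 : (2772:ℝ) ≤ Real.log m := by
    have h1 := Real.log_le_log (by positivity) hmR
    rw [Real.log_pow] at h1
    have h2 := Real.log_two_gt_d9
    have h3 : (2772:ℝ) ≤ (4000:ℕ) * Real.log 2 := by push_cast; linarith
    linarith
  clear hmR hm
  have hlog1 : (1:ℝ) ≤ Real.log m := by linarith
  have hlgR : (lg : ℝ) * Real.log 2 ≤ Real.log m := by
    have h2 : ((2:ℕ)^lg : ℝ) ≤ (m:ℝ) := by
      exact_mod_cast Nat.pow_log_le_self 2 (by omega)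
    have h3 := Real.log_le_log (by positivity) h2
    rw [show ((2:ℕ)^lg : ℝ) = (2:ℝ)^lg by push_cast; ring, Real.log_pow] at h3
    linarith
  have hlgnn : (0:ℝ) ≤ (lg:ℝ) := Nat.cast_nonneg lg
  have hlg2R : (lg : ℝ) ≤ 2 * Real.log m := by
    have h2 := Real.log_two_gt_d9
    nlinarith [hlgR, hlgnn]
  have hrnn : (0:ℝ) ≤ (r:ℝ) := Nat.cast_nonneg r
  have hrR : (r : ℝ) ≤ Real.log m := by
    have h4 : (3:ℝ) * (r:ℝ) ≤ 2 * (lg:ℝ) := by exact_mod_cast hr3.1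
    have h5 := Real.log_two_gt_d9
    nlinarith [hlgR, hrnn, hlgnn]
  have hrE3 : ((r*r*r : ℕ) : ℝ) ≤ (Real.log m)^3 := by
    have h1 : (r:ℝ)*(r:ℝ) ≤ Real.log m * Real.log m :=
      mul_le_mul hrR hrR hrnn (by linarith)
    have h2 : (r:ℝ)*(r:ℝ)*(r:ℝ) ≤ Real.log m * Real.log m * Real.log m :=
      mul_le_mul h1 hrR hrnn (by positivity)
    have h3 : (Real.log m)^3 = Real.log m * Real.log m * Real.log m := by ring
    push_cast
    linarith
  have hcube : (2772:ℝ) * 2772 * Real.log m ≤ (Real.log m)^3 := by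
    have hy : (2772:ℝ)*2772 ≤ Real.log m * Real.log m :=
      mul_le_mul hlogm2772 hlogm2772 (by norm_num) (by linarith)
    have hz := mul_le_mul_of_nonneg_right hy (show (0:ℝ) ≤ Real.log m by linarith)
    have h3 : (Real.log m)^3 = Real.log m * Real.log m * Real.log m := by ring
    linarith
  have hlgE3 : ((lg + 1 : ℕ) : ℝ) ≤ (Real.log m)^3 := by
    push_cast
    nlinarith [hlg2R, hlogm2772, hcube]
  have h20lgE3 : ((20 * (lg + 1) : ℕ) : ℝ) ≤ (Real.log m)^3 := by
    push_cast
    nlinarith [hlg2R, hlogm2772, hcube]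
  -- dyadic classes and heavy class
  classical
  have hmap : ∀ i : Fin n, i ∈ (Finset.univ : Finset (Fin n)) →
      Nat.log 2 (a i) ∈ Finset.range (lg + 1) := by
    intro i _
    have h1 : a i ≤ m := Finset.single_le_sum (f := a) (fun i _ => Nat.zero_le _) (mem_univ i)
    have h2 := Nat.log_mono_right (b := 2) h1
    simp only [Finset.mem_range]
    omega
  have hsum : ∑ t ∈ Finset.range (lg + 1),
      ∑ i ∈ Finset.univ.filter (fun i => Nat.log 2 (a i) = t), a i = m :=
    Finset.sum_fiberwise_of_maps_to hmap a
  obtain ⟨t, ht, hmax⟩ := Finset.exists_max_image (Finset.range (lg + 1))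
      (fun t => ∑ i ∈ Finset.univ.filter (fun i => Nat.log 2 (a i) = t), a i)
      ⟨0, by simp⟩
  set S := Finset.univ.filter (fun i => Nat.log 2 (a i) = t) with hS
  set w := ∑ i ∈ S, a i with hw
  have hheavy : m ≤ (lg + 1) * w := by
    calc m = ∑ t' ∈ Finset.range (lg + 1),
        ∑ i ∈ Finset.univ.filter (fun i => Nat.log 2 (a i) = t'), a i := hsum.symm
    _ ≤ (Finset.range (lg+1)).card • w := Finset.sum_le_card_nsmul _ _ _ (fun t' ht' => hmax t' ht')
    _ = (lg + 1) * w := by rw [Finset.card_range, smul_eq_mul]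
  set x := 2^t with hxdef
  have htlg : t ≤ lg := by
    have := Finset.mem_range.1 ht
    omega
  have hxpos : 0 < x := Nat.pow_pos (by norm_num)
  have hxle : ∀ i ∈ S, x ≤ a i := by
    intro i hi
    rw [hS, Finset.mem_filter] at hi
    rw [hxdef, ← hi.2]
    exact Nat.pow_log_le_self 2 (Nat.pos_iff_ne_zero.1 (hpos i))
  have hxlt : ∀ i ∈ S, a i ≤ 2 * x - 1 := by
    intro i hi
    rw [hS, Finset.mem_filter] at hi
    have h1 := Nat.lt_pow_succ_log_self (show 1 < 2 by norm_num) (a i)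
    rw [hi.2] at h1
    have h2 : (2:ℕ)^(t+1) = 2 * x := by rw [hxdef, pow_succ]; ring
    omega
  set s := S.card with hs
  have hw1 : 1 ≤ w := by
    rcases Nat.eq_zero_or_pos w with h | h
    · rw [h, Nat.mul_zero] at hheavy; omega
    · exact h
  have hSne : S.Nonempty := by
    by_contra h
    rw [Finset.not_nonempty_iff_eq_empty] at h
    rw [hw, h, Finset.sum_empty] at hw1
    omega
  have hs1 : 1 ≤ s := Finset.card_pos.2 hSne
  have hrpos : 0 < r := by omega
  have hsumlb : ∀ (A : Finset (Fin n)), A ⊆ S → A.card * x ≤ ∑ i ∈ A, a i := by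
    intro A hA
    have := Finset.card_nsmul_le_sum A a x (fun i hi => hxle i (hA hi))
    simpa [smul_eq_mul] using this
  have hsumub : ∀ (A : Finset (Fin n)), A ⊆ S → ∑ i ∈ A, a i ≤ A.card * (2*x - 1) := by
    intro A hA
    have := Finset.sum_le_card_nsmul A a (2*x-1) (fun i hi => hxlt i (hA hi))
    simpa [smul_eq_mul] using this
  set E := r*r*r with hE
  have hEpos : 0 < E := by positivity
  set K := m / (E * x) + 1 with hK
  have hK1 : 1 ≤ K := by rw [hK]; exact Nat.succ_le_succ (Nat.zero_le _)
  have hExpos : 0 < E * x := Nat.mul_pos hEpos hxpos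
  have hmK : m < K * (E * x) := by
    have h1 : (E*x) * (m / (E*x)) + m % (E*x) = m := Nat.div_add_mod m (E*x)
    have h2 : m % (E*x) < E*x := Nat.mod_lt _ hExpos
    have h3 : K * (E*x) = (E*x) * (m/(E*x)) + (E*x) := by rw [hK]; ring
    omega
  rcases le_or_gt s r with hsr | hsr
  · -- F1 : whole class is small, use it as a single block
    refine ⟨1, s, w, fun _ => S, one_pos, by omega, ⟨hs1, ?_⟩, ?_, ?_, ?_⟩
    · have h1 : (s:ℝ) ≤ (r:ℝ) := by exact_mod_cast hsr
      linarith
    · have h2 : m ≤ (1 * w) * (lg + 1) := by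
        calc m ≤ (lg+1) * w := hheavy
        _ = (1*w) * (lg+1) := by ring
      exact wrap_real h2 hlgE3 hlog1
    · intro j
      exact ⟨rfl, rfl⟩
    · intro j j' hne
      exact absurd (Subsingleton.elim j j') hne
  rcases lt_or_ge s (4*r*K + r) with hsK | hsK
  · -- F2 : class has few elements; a single r-set of it is heavy enough
    have hrs : r ≤ s := le_of_lt hsr
    obtain ⟨A₀, hA₀S, hA₀card⟩ := Finset.exists_subset_card_eq hrs
    set d := ∑ i ∈ A₀, a i with hd
    have hdlb : r * x ≤ d := by
      have h1 := hsumlb A₀ hA₀S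
      rw [hA₀card] at h1
      exact h1
    -- natural-number chain giving m ≤ 20*(lg+1)*(r*x)
    have hc1 : w ≤ s * (2*x) := by
      have h1 := hsumub S (Finset.Subset.refl S)
      have h2 : s * (2*x-1) ≤ s * (2*x) := Nat.mul_le_mul_left s (by omega)
      exact le_trans h1 (le_trans (le_of_eq rfl) h2)
    have hc2 : m ≤ (lg+1)*((4*r*K + r)*(2*x)) := by
      calc m ≤ (lg+1)*w := hheavy
      _ ≤ (lg+1)*(s*(2*x)) := Nat.mul_le_mul_left _ hc1
      _ ≤ (lg+1)*((4*r*K + r)*(2*x)) :=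
          Nat.mul_le_mul_left _ (Nat.mul_le_mul_right _ (by omega))
    have piece1 : x * K ≤ m/E + x := by
      have e1 : m/(E*x) = m/E/x := (Nat.div_div_eq_div_mul m E x).symm
      have e2 : x * (m/E/x) ≤ m/E := by
        rw [mul_comm]
        exact Nat.div_mul_le_self (m/E) x
      calc x * K = x * (m/(E*x)) + x := by rw [hK]; ring
      _ = x * (m/E/x) + x := by rw [e1]
      _ ≤ m/E + x := by omega
    have piece2 : r * (m/E) ≤ m/(r*r) := by
      have e1 : m/E = m/(r*r)/r := by rw [hE, Nat.div_div_eq_div_mul]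
      rw [e1, mul_comm]
      exact Nat.div_mul_le_self (m/(r*r)) r
    have piece3 : 16*(lg+1) ≤ r*r := by
      have h32 : 32*r ≤ r*r := Nat.mul_le_mul_right r (by omega)
      omega
    have piece4 : (m/(r*r))*(r*r) ≤ m := Nat.div_mul_le_self m (r*r)
    have h8 : 2*(8*((lg+1)*(r*(m/E)))) ≤ m := by
      have h1 : 16*((lg+1)*(r*(m/E))) ≤ (r*r)*(m/(r*r)) := by
        calc 16*((lg+1)*(r*(m/E))) = (16*(lg+1))*(r*(m/E)) := by ring
        _ ≤ (r*r)*(r*(m/E)) := Nat.mul_le_mul_right _ piece3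
        _ ≤ (r*r)*(m/(r*r)) := Nat.mul_le_mul_left _ piece2
      calc 2*(8*((lg+1)*(r*(m/E)))) = 16*((lg+1)*(r*(m/E))) := by ring
      _ ≤ (r*r)*(m/(r*r)) := h1
      _ = (m/(r*r))*(r*r) := by ring
      _ ≤ m := piece4
    have hsplit : (lg+1)*((4*r*K + r)*(2*x))
        = 8*((lg+1)*(r*(x*K))) + 2*((lg+1)*(r*x)) := by ring
    have hbound : 8*((lg+1)*(r*(x*K)))
        ≤ 8*((lg+1)*(r*(m/E))) + 8*((lg+1)*(r*x)) := by
      have h1 : r*(x*K) ≤ r*(m/E) + r*x := by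
        calc r*(x*K) ≤ r*(m/E + x) := Nat.mul_le_mul_left r piece1
        _ = r*(m/E) + r*x := by ring
      calc 8*((lg+1)*(r*(x*K))) ≤ 8*((lg+1)*(r*(m/E) + r*x)) :=
          Nat.mul_le_mul_left _ (Nat.mul_le_mul_left _ h1)
      _ = 8*((lg+1)*(r*(m/E))) + 8*((lg+1)*(r*x)) := by ring
    have hfinal : m ≤ 20*((lg+1)*(r*x)) := by omega
    refine ⟨1, r, d, fun _ => A₀, one_pos, ?_, ⟨by omega, hrR⟩, ?_, ?_, ?_⟩
    · have : 0 < r * x := Nat.mul_pos hrpos hxpos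
      omega
    · have h2 : m ≤ (1 * d) * (20*(lg+1)) := by
        calc m ≤ 20*((lg+1)*(r*x)) := hfinal
        _ ≤ 20*((lg+1)*d) := Nat.mul_le_mul_left _ (Nat.mul_le_mul_left _ hdlb)
        _ = (1*d)*(20*(lg+1)) := by ring
      exact wrap_real h2 h20lgE3 hlog1
    · intro j
      exact ⟨hA₀card, rfl⟩
    · intro j j' hne
      exact absurd (Subsingleton.elim j j') hne
  -- Main branch : s ≥ 4rK + r
  by_cases hgood : ∃ (j v : ℕ) (𝒜 : Finset (Finset (Fin n))), 1 ≤ j ∧ j ≤ r ∧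
      (∀ A ∈ 𝒜, A ⊆ S ∧ A.card = j ∧ ∑ i ∈ A, a i = v) ∧
      ((𝒜 : Set (Finset (Fin n))).Pairwise Disjoint) ∧ (K-1)/j + 1 ≤ 𝒜.card
  · obtain ⟨j, v, 𝒜, hj1, hjr2, hmem𝒜, hpw, hcard𝒜⟩ := hgood
    obtain ⟨𝒜', h𝒜'sub, h𝒜'card⟩ := Finset.exists_subset_card_eq hcard𝒜
    set k := (K-1)/j + 1 with hk
    have hkpos : 0 < k := by rw [hk]; exact Nat.succ_pos _
    set I : Fin k → Finset (Fin n) :=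
      fun i => ((𝒜'.equivFin).symm (Fin.cast h𝒜'card.symm i) : Finset (Fin n)) with hI
    have hImem' : ∀ i, I i ∈ 𝒜' := fun i => ((𝒜'.equivFin).symm (Fin.cast h𝒜'card.symm i)).2
    have hImem : ∀ i, I i ∈ 𝒜 := fun i => h𝒜'sub (hImem' i)
    have hIinj : Function.Injective I := by
      intro i i' hii
      have h1 := (𝒜'.equivFin).symm.injective (Subtype.ext hii)
      have h2 : (Fin.cast h𝒜'card.symm i : ℕ) = (Fin.cast h𝒜'card.symm i' : ℕ) := by rw [h1]
      exact Fin.ext (by simpa using h2)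
    have hprop : ∀ i, I i ⊆ S ∧ (I i).card = j ∧ ∑ b ∈ I i, a b = v :=
      fun i => hmem𝒜 _ (hImem i)
    have hjxv : j * x ≤ v := by
      have h0 : (0:ℕ) < k := hkpos
      have hA := hprop ⟨0, h0⟩
      have h1 := hsumlb _ hA.1
      rw [hA.2.1, hA.2.2] at h1
      exact h1
    have hvpos : 0 < v := by
      have : 0 < j * x := Nat.mul_pos (by omega) hxpos
      omega
    refine ⟨k, j, v, I, hkpos, hvpos, ⟨hj1, ?_⟩, ?_, ?_, ?_⟩
    · have h1 : (j:ℝ) ≤ (r:ℝ) := by exact_mod_cast hjr2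
      linarith
    · -- k * v * E ≥ m
      have hKkj : K ≤ k * j := by
        have h1 : j * ((K-1)/j) + (K-1) % j = K - 1 := Nat.div_add_mod (K-1) j
        have h2 : (K-1) % j < j := Nat.mod_lt _ (by omega)
        have h3 : k * j = j*((K-1)/j) + j := by rw [hk]; ring
        omega
      have hchain : m ≤ (k*v)*E := by
        have c1 : K * (E*x) ≤ (k*j) * (E*x) := Nat.mul_le_mul_right _ hKkj
        have c2 : (k*j)*(E*x) = (k*(j*x))*E := by ring
        have c3 : (k*(j*x))*E ≤ (k*v)*E :=
          Nat.mul_le_mul_right _ (Nat.mul_le_mul_left _ hjxv)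
        omega
      exact wrap_real hchain hrE3 hlog1
    · intro b
      exact ⟨(hprop b).2.1, (hprop b).2.2⟩
    · intro b b' hne
      exact hpw (Finset.mem_coe.2 (hImem b)) (Finset.mem_coe.2 (hImem b'))
        (fun he => hne (hIinj he))
  · exfalso
    push_neg at hgood
    have hstop : ∀ j v (𝒜 : Finset (Finset (Fin n))), 1 ≤ j → j ≤ r →
        (∀ A ∈ 𝒜, A ⊆ S ∧ A.card = j ∧ ∑ i ∈ A, a i = v) →
        ((𝒜 : Set (Finset (Fin n))).Pairwise Disjoint) → 𝒜.card ≤ (K-1)/j := by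
      intro j v 𝒜 h1 h2 h3 h4
      have := hgood j v 𝒜 h1 h2 h3 h4
      omega
    have hcount := fiber_bound a S K r hstop r (le_refl r)
    set V := Finset.Icc (r*x) (r*(2*x-1)) with hV
    have hmapsum : ∀ A ∈ S.powersetCard r, (∑ i ∈ A, a i) ∈ V := by
      intro A hA
      rw [Finset.mem_powersetCard] at hA
      rw [hV, Finset.mem_Icc]
      constructor
      · have h1 := hsumlb A hA.1
        rw [hA.2] at h1
        exact h1
      · have h1 := hsumub A hA.1
        rw [hA.2] at h1
        exact h1
    have hfib : (S.powersetCard r).card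
        = ∑ v ∈ V, ((S.powersetCard r).filter (fun A => ∑ i ∈ A, a i = v)).card :=
      Finset.card_eq_sum_card_fiberwise hmapsum
    have hVcard : V.card ≤ r*x := by
      rw [hV, Nat.card_Icc]
      have h5 : r*(2*x) = r*(2*x-1) + r := by
        have hxx : 2*x - 1 + 1 = 2*x := by omega
        calc r*(2*x) = r*((2*x-1) + 1) := by rw [hxx]
        _ = r*(2*x-1) + r := by ring
      have h6 : r*(2*x) = 2*(r*x) := by ring
      omega
    have hup : s.choose r ≤ (r*x) * (K-1)^r := by
      have h1 : (S.powersetCard r).card ≤ V.card * (K-1)^r := by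
        rw [hfib]
        calc ∑ v ∈ V, ((S.powersetCard r).filter (fun A => ∑ i ∈ A, a i = v)).card
            ≤ ∑ _v ∈ V, (K-1)^r := Finset.sum_le_sum (fun v _ => hcount v)
        _ = V.card * (K-1)^r := by rw [Finset.sum_const, smul_eq_mul]
      rw [Finset.card_powersetCard] at h1
      exact le_trans h1 (Nat.mul_le_mul_right _ hVcard)
    have hlow : (s + 1 - r)^r ≤ r.factorial * s.choose r := by
      have h1 := Nat.pow_sub_le_descFactorial s r
      rw [Nat.descFactorial_eq_factorial_mul_choose] at h1
      exact h1
    -- r * x < 4^r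
    have hrx4 : r * x < 4^r := by
      set c := (lg - 4)/3 with hc
      have hc1 : 1332 ≤ c := by omega
      have hcpow : c - 2 < 2^(c-2) := Nat.lt_two_pow_self
      have hceq : (2:ℕ)^c = 2^(c-2) * 4 := by
        have h1 : c - 2 + 2 = c := by omega
        calc (2:ℕ)^c = 2^(c-2+2) := by rw [h1]
        _ = 2^(c-2) * 2^2 := pow_add 2 _ _
        _ = 2^(c-2)*4 := by norm_num
      have hcgeq : (c-1)*4 ≤ 2^c := by
        rw [hceq]
        exact Nat.mul_le_mul_right 4 (by omega)
      have hlgc : lg < 2^c := by omega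
      have hxle2 : x ≤ 2^lg := by
        rw [hxdef]
        exact Nat.pow_le_pow_right (by norm_num) htlg
      have hrlg : r ≤ lg := by omega
      have h1 : r * x ≤ lg * 2^lg := Nat.mul_le_mul hrlg hxle2
      have h2 : lg * 2^lg < 2^c * 2^lg :=
        mul_lt_mul_of_pos_right hlgc (Nat.pow_pos (by norm_num))
      have h3 : (2:ℕ)^c * 2^lg = 2^(c+lg) := (pow_add 2 c lg).symm
      have h4 : c + lg ≤ 2*r := by omega
      have h5 : (2:ℕ)^(c+lg) ≤ 2^(2*r) := Nat.pow_le_pow_right (by norm_num) h4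
      have h6 : (2:ℕ)^(2*r) = 4^r := by rw [pow_mul]; norm_num
      omega
    have hKr : (K-1)^r ≤ K^r := Nat.pow_le_pow_left (by omega) r
    have hKrpos : 0 < K^r := Nat.pow_pos (by omega)
    have hS1 : 4*r*K + 1 ≤ s + 1 - r := by
      have h1 : 0 < 4*r*K := by
        apply Nat.mul_pos (Nat.mul_pos (by norm_num) hrpos) (by omega)
      omega
    have hcontra : (4*r*K+1)^r < (4*r*K+1)^r := by
      calc (4*r*K+1)^r ≤ (s+1-r)^r := Nat.pow_le_pow_left hS1 r
      _ ≤ r.factorial * s.choose r := hlow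
      _ ≤ r^r * s.choose r := Nat.mul_le_mul_right _ (Nat.factorial_le_pow r)
      _ ≤ r^r * ((r*x) * (K-1)^r) := Nat.mul_le_mul_left _ hup
      _ ≤ r^r * ((r*x) * K^r) := Nat.mul_le_mul_left _ (Nat.mul_le_mul_left _ hKr)
      _ < r^r * (4^r * K^r) :=
          mul_lt_mul_of_pos_left (mul_lt_mul_of_pos_right hrx4 hKrpos)
            (Nat.pow_pos hrpos)
      _ = (4*r*K)^r := by rw [mul_pow, mul_pow]; ring
      _ ≤ (4*r*K+1)^r := Nat.pow_le_pow_left (by omega) r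
    exact absurd hcontra (lt_irrefl _)

/-- The partitioning lemma: for `m = ∑ a i` sufficiently large, there are `k` pairwise
disjoint `r`-sets, each of weight `d`, with `r ≤ log m` and `k d ≥ m/(log m)^3`. -/
theorem stmt12 : ∃ N : ℕ, ∀ (n : ℕ) (a : Fin n → ℕ), (∀ i, 0 < a i) → N ≤ ∑ i, a i →
    ∃ (k r d : ℕ) (I : Fin k → Finset (Fin n)), 0 < k ∧ 0 < d ∧
      (1 ≤ r ∧ (r : ℝ) ≤ Real.log (∑ i, a i : ℕ)) ∧
      ((∑ i, a i : ℕ) / (Real.log (∑ i, a i : ℕ)) ^ 3 ≤ ((k * d : ℕ) : ℝ)) ∧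
      (∀ j, (I j).card = r ∧ ∑ i ∈ I j, a i = d) ∧
      (∀ j j', j ≠ j' → Disjoint (I j) (I j')) := by
  exact ⟨2^4000, stmt12'⟩
end

section
/- Every graph G with m ≥ 1 edges satisfies |M(G)| = Ω(m^{1/2}); more precisely, the set of sizes of induced subgraphs of G contains at least c·m^{1/2} distinct elements for some absolute constant c > 0. -/
open Finset

section Aux
variable {V : Type} [Fintype V] [DecidableEq V] (G : SimpleGraph V) [DecidableRel G.Adj]

/-- number of edges of the subgraph induced by `U`. -/
private def fc (U : Finset V) : ℕ :=
  (G.edgeFinset.filter (fun e => ∀ v ∈ e, v ∈ U)).card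

private lemma fc_mono {U U' : Finset V} (h : U ⊆ U') : fc G U ≤ fc G U' := by
  apply Finset.card_le_card
  intro e he
  simp only [Finset.mem_filter] at he ⊢
  exact ⟨he.1, fun v hv => h (he.2 v hv)⟩

private lemma fc_empty : fc G (∅ : Finset V) = 0 := by
  unfold fc
  rw [Finset.card_eq_zero, Finset.filter_eq_empty_iff]
  intro e _ h
  exact absurd (h e.out.1 (Sym2.out_fst_mem e)) (by simp)

private lemma fc_univ : fc G (Finset.univ : Finset V) = G.edgeFinset.card := by
  unfold fc
  rw [Finset.filter_true_of_mem]
  intro e _ v _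
  exact Finset.mem_univ v

private lemma fc_insert_le (c : V) (U : Finset V) :
    fc G (insert c U) ≤ fc G U + G.degree c := by
  have hsub : (G.edgeFinset.filter (fun e => ∀ v ∈ e, v ∈ insert c U)) ⊆
      (G.edgeFinset.filter (fun e => ∀ v ∈ e, v ∈ U)) ∪ G.incidenceFinset c := by
    intro e he
    simp only [Finset.mem_filter, Finset.mem_union] at he ⊢
    by_cases hall : ∀ v ∈ e, v ∈ U
    · exact Or.inl ⟨he.1, hall⟩
    · right
      push_neg at hall
      obtain ⟨x, hx, hxU⟩ := hall
      have hxc : x = c := by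
        rcases Finset.mem_insert.mp (he.2 x hx) with h | h
        · exact h
        · exact absurd h hxU
      rw [SimpleGraph.mem_incidenceFinset]
      exact ⟨SimpleGraph.mem_edgeFinset.mp he.1, hxc ▸ hx⟩
  calc fc G (insert c U) ≤ _ := Finset.card_le_card hsub
    _ ≤ _ + (G.incidenceFinset c).card := Finset.card_union_le _ _
    _ = fc G U + G.degree c := by rw [G.card_incidenceFinset_eq_degree]; rfl

/-- The star argument: at least `deg v + 1` distinct induced-subgraph sizes. -/
private lemma star_card (v : V) :
    G.degree v + 1 ≤ (Finset.univ.powerset.image (fun U => fc G U)).card := by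
  classical
  set l := (G.neighborFinset v).toList with hl
  have hnd : l.Nodup := Finset.nodup_toList _
  have hlen : l.length = G.degree v := Finset.length_toList _
  set U : ℕ → Finset V := fun k => insert v (l.take k).toFinset with hU
  have hUmono : ∀ i j, i ≤ j → U i ⊆ U j := by
    intro i j hij
    apply Finset.insert_subset_insert
    intro x hx
    rw [List.mem_toFinset] at hx ⊢
    exact List.IsPrefix.subset (List.take_prefix_take_left hij) hx
  have hstep : ∀ k, k < G.degree v → fc G (U k) < fc G (U (k + 1)) := by
    intro k hk
    have hk' : k < l.length := by rw [hlen]; exact hk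
    set c := l[k] with hc
    have hadj : G.Adj v c := by
      have hmem : c ∈ G.neighborFinset v := by
        rw [← Finset.mem_toList]
        exact List.getElem_mem hk'
      exact (SimpleGraph.mem_neighborFinset _ _ _).mp hmem
    have hedge : s(v, c) ∈ G.edgeFinset := SimpleGraph.mem_edgeFinset.mpr hadj
    have hcmem : c ∈ U (k + 1) := by
      apply Finset.mem_insert_of_mem
      rw [List.mem_toFinset, ← List.take_concat_get' l k hk']
      exact List.mem_append_right _ (List.mem_singleton.mpr rfl)
    have hcnot : c ∉ U k := by
      intro hcU
      rcases Finset.mem_insert.mp hcU with h | h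
      · exact G.ne_of_adj hadj h.symm
      · rw [List.mem_toFinset] at h
        obtain ⟨i, hi, hieq⟩ := List.mem_iff_getElem.mp h
        have hik : i < k := lt_of_lt_of_le hi (by simp [List.length_take])
        have hi' : i < l.length := lt_trans hik hk'
        have heq : l[i] = c := by
          rw [← hieq]; exact List.getElem_take.symm
        have : i = k := (hnd.getElem_inj_iff).mp (heq.trans hc)
        omega
    apply Finset.card_lt_card
    rw [Finset.ssubset_iff_of_subset]
    · refine ⟨s(v, c), ?_, ?_⟩
      · simp only [Finset.mem_filter]
        refine ⟨hedge, ?_⟩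
        intro x hx
        rcases Sym2.mem_iff.mp hx with h | h
        · exact h ▸ Finset.mem_insert_self _ _
        · exact h ▸ hcmem
      · simp only [Finset.mem_filter, not_and, not_forall]
        intro _
        exact ⟨c, Sym2.mem_mk_right _ _, hcnot⟩
    · intro e he
      simp only [Finset.mem_filter] at he ⊢
      exact ⟨he.1, fun x hx => hUmono k (k + 1) (Nat.le_succ _) (he.2 x hx)⟩
  have hgm : ∀ i j, i ≤ j → fc G (U i) ≤ fc G (U j) := fun i j hij => fc_mono G (hUmono i j hij)
  refine le_trans (le_of_eq (Finset.card_range (G.degree v + 1)).symm)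
    (Finset.card_le_card_of_injOn (fun k => fc G (U k)) ?_ ?_)
  · intro k _
    apply Finset.mem_image_of_mem
    exact Finset.mem_powerset.mpr (Finset.subset_univ _)
  · intro i hi j hj hij
    have hij' : fc G (U i) = fc G (U j) := hij
    simp only [Finset.coe_range, Set.mem_Iio] at hi hj
    by_contra hne
    rcases lt_or_gt_of_ne hne with h | h
    · have : fc G (U i) < fc G (U j) :=
        lt_of_lt_of_le (hstep i (by omega)) (hgm (i + 1) j h)
      omega
    · have : fc G (U j) < fc G (U i) :=
        lt_of_lt_of_le (hstep j (by omega)) (hgm (j + 1) i h)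
      omega

private lemma count_steps (g : ℕ → ℕ) (D : ℕ) (h0 : g 0 = 0)
    (hstep : ∀ k, g (k + 1) ≤ g k + D) :
    ∀ n, g n ≤ D * ((Finset.range n).filter (fun i => g i < g (i + 1))).card := by
  intro n
  induction n with
  | zero => simp [h0]
  | succ k ih =>
    rw [Finset.range_add_one, Finset.filter_insert]
    by_cases h : g k < g (k + 1)
    · rw [if_pos h, Finset.card_insert_of_notMem (by simp)]
      calc g (k + 1) ≤ g k + D := hstep k
        _ ≤ D * ((Finset.range k).filter (fun i => g i < g (i + 1))).card + D :=
            Nat.add_le_add_right ih D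
        _ = _ := by ring
    · rw [if_neg h]
      exact le_trans (Nat.le_of_not_lt h) ih

end Aux

/-- Every graph with `m ≥ 1` edges has at least `c √m` distinct induced subgraph sizes. -/
theorem stmt15 : ∃ c : ℝ, 0 < c ∧
    ∀ (V : Type) [Fintype V] [DecidableEq V] (G : SimpleGraph V) [DecidableRel G.Adj]
      (m : ℕ), G.edgeFinset.card = m → 1 ≤ m →
      c * Real.sqrt m ≤
        ((Finset.univ.powerset.image (fun U : Finset V =>
          (G.edgeFinset.filter (fun e => ∀ v ∈ e, v ∈ U)).card)).card : ℝ) := by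
  classical
  refine ⟨1, one_pos, ?_⟩
  intro V _ _ G _ m hm hm1
  show (1 : ℝ) * Real.sqrt m ≤ ((Finset.univ.powerset.image (fun U => fc G U)).card : ℝ)
  set S := Finset.univ.powerset.image (fun U => fc G U) with hS
  -- V is nonempty
  have hne : Nonempty V := by
    have : G.edgeFinset.Nonempty := Finset.card_pos.mp (by omega)
    obtain ⟨e, _⟩ := this
    exact ⟨e.out.1⟩
  -- max degree vertex
  obtain ⟨v, hv⟩ := G.exists_maximal_degree_vertex
  set D := G.maxDegree with hD
  -- star bound : D + 1 ≤ S.card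
  have hstar : D + 1 ≤ S.card := by
    rw [hv]
    exact star_card G v
  -- chain
  set l := (Finset.univ : Finset V).toList with hl
  set g : ℕ → ℕ := fun k => fc G (l.take k).toFinset with hg
  have hg0 : g 0 = 0 := by simp [hg, fc_empty]
  have hgmono : ∀ i j, i ≤ j → g i ≤ g j := by
    intro i j hij
    apply fc_mono
    intro x hx
    rw [List.mem_toFinset] at hx ⊢
    exact List.IsPrefix.subset (List.take_prefix_take_left hij) hx
  have hgstep : ∀ k, g (k + 1) ≤ g k + D := by
    intro k
    by_cases hk : k < l.length
    · have : (l.take (k + 1)).toFinset = insert l[k] (l.take k).toFinset := by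
        rw [← List.take_concat_get' l k hk, List.toFinset_append]
        ext x
        simp [or_comm]
      rw [hg]
      simp only
      rw [this]
      exact le_trans (fc_insert_le G _ _)
        (Nat.add_le_add_left (G.degree_le_maxDegree _) _)
    · have : l.take (k + 1) = l.take k := by
        rw [List.take_of_length_le (by omega), List.take_of_length_le (by omega)]
      rw [hg]; simp only [this]
      exact Nat.le_add_right _ _
  have hgend : g l.length = m := by
    rw [hg]
    simp only [List.take_of_length_le (le_refl l.length)]
    rw [hl, Finset.toList_toFinset, fc_univ, hm]
  -- m ≤ D * P.card
  set P := (Finset.range l.length).filter (fun i => g i < g (i + 1)) with hP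
  have hmP : m ≤ D * P.card := hgend ▸ count_steps g D hg0 hgstep l.length
  -- P.card ≤ S.card - 1 via injection into S.erase 0
  have h0S : (0 : ℕ) ∈ S := by
    rw [hS]
    refine Finset.mem_image.mpr ⟨∅, Finset.mem_powerset.mpr (Finset.empty_subset _), fc_empty G⟩
  have hPS : P.card ≤ S.card - 1 := by
    rw [← Finset.card_erase_of_mem h0S]
    apply Finset.card_le_card_of_injOn (fun k => g (k + 1))
    · intro k hk
      rw [hP, Finset.mem_coe, Finset.mem_filter] at hk
      apply Finset.mem_erase.mpr
      constructor
      · show g (k + 1) ≠ 0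
        omega
      · rw [hS]
        exact Finset.mem_image.mpr ⟨_, Finset.mem_powerset.mpr (Finset.subset_univ _), rfl⟩
    · intro i hi j hj hij
      have hij' : g (i + 1) = g (j + 1) := hij
      rw [hP, Finset.coe_filter, Set.mem_setOf_eq] at hi hj
      by_contra hne
      rcases lt_or_gt_of_ne hne with h | h
      · have : g (i + 1) < g (j + 1) := lt_of_le_of_lt (hgmono (i + 1) j h) hj.2
        omega
      · have : g (j + 1) < g (i + 1) := lt_of_le_of_lt (hgmono (j + 1) i h) hi.2
        omega
  -- combine : m ≤ S.card * S.card
  have hfinal : m ≤ S.card * S.card := by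
    calc m ≤ D * P.card := hmP
      _ ≤ (S.card - 1) * (S.card - 1) := Nat.mul_le_mul (by omega) hPS
      _ ≤ S.card * S.card := Nat.mul_le_mul (Nat.sub_le _ _) (Nat.sub_le _ _)
  rw [one_mul]
  calc Real.sqrt m ≤ Real.sqrt ((S.card : ℝ) * S.card) := by
        apply Real.sqrt_le_sqrt
        exact_mod_cast hfinal
    _ = S.card := Real.sqrt_mul_self (Nat.cast_nonneg _)
end

section
/- Let H be a bipartite multigraph with parts X_H and Y_H such that every vertex of X_H has degree exactly d. Suppose y ∈ Y_H and 0 ≤ a < b are integers such that the set Γ_a(y) of vertices of X_H joined to y by exactly a parallel edges and the set Γ_b(y) of vertices joined to y by exactly b parallel edges both have size at least s. Then M(H) contains the set {(d−a)x + (d−b)y' : 0 ≤ x ≤ s, 0 ≤ y' ≤ s}, and hence |M(H)| ≥ s · min((d−a)/(b−a), s). -/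
/-- If every vertex of `X` has degree `d` and some `y₀ ∈ Y` has at least `s` neighbours
of multiplicity `a` and at least `s` of multiplicity `b` (`a < b`), then the
multiplication table contains all numbers `(d-a)u + (d-b)v` with `u, v ≤ s`, and has
size at least `s · min((d-a)/(b-a), s)`. -/
theorem stmt17 (X Y : Type*) [Fintype X] [Fintype Y] (w : X → Y → ℕ) (d : ℕ)
    (hdeg : ∀ x, ∑ y, w x y = d) (y0 : Y) (a b s : ℕ) (hab : a < b)
    (hsa : s ≤ (Finset.univ.filter (fun x => w x y0 = a)).card)
    (hsb : s ≤ (Finset.univ.filter (fun x => w x y0 = b)).card) :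
    (∀ u v : ℕ, u ≤ s → v ≤ s →
      ∃ (A : Finset X) (B : Finset Y),
        ∑ x ∈ A, ∑ y ∈ B, w x y = (d - a) * u + (d - b) * v) ∧
    (s : ℝ) * min (((d : ℝ) - a) / ((b : ℝ) - a)) (s : ℝ) ≤
      (((Finset.univ.powerset ×ˢ Finset.univ.powerset).image
        (fun p : Finset X × Finset Y => ∑ x ∈ p.1, ∑ y ∈ p.2, w x y)).card : ℝ) := by
  classical
  set T := ((Finset.univ.powerset ×ˢ Finset.univ.powerset).image
      (fun p : Finset X × Finset Y => ∑ x ∈ p.1, ∑ y ∈ p.2, w x y)) with hT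
  -- Part 1
  have part1 : ∀ u v : ℕ, u ≤ s → v ≤ s →
      ∃ (A : Finset X) (B : Finset Y),
        ∑ x ∈ A, ∑ y ∈ B, w x y = (d - a) * u + (d - b) * v := by
    intro u v hu hv
    obtain ⟨A₁, hA₁sub, hA₁card⟩ :=
      Finset.exists_subset_card_eq (s := Finset.univ.filter (fun x => w x y0 = a)) (le_trans hu hsa)
    obtain ⟨A₂, hA₂sub, hA₂card⟩ :=
      Finset.exists_subset_card_eq (s := Finset.univ.filter (fun x => w x y0 = b)) (le_trans hv hsb)
    have hdisj : Disjoint A₁ A₂ := by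
      rw [Finset.disjoint_left]
      intro x hx1 hx2
      have h1 := hA₁sub hx1
      have h2 := hA₂sub hx2
      simp only [Finset.mem_filter] at h1 h2
      omega
    refine ⟨A₁ ∪ A₂, Finset.univ.erase y0, ?_⟩
    have key : ∀ x : X, ∑ y ∈ Finset.univ.erase y0, w x y = d - w x y0 := by
      intro x
      have := Finset.add_sum_erase Finset.univ (w x) (Finset.mem_univ y0)
      have hd := hdeg x
      omega
    rw [Finset.sum_union hdisj]
    have e1 : ∑ x ∈ A₁, ∑ y ∈ Finset.univ.erase y0, w x y = (d - a) * u := by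
      have hc : ∀ x ∈ A₁, ∑ y ∈ Finset.univ.erase y0, w x y = d - a := by
        intro x hx
        have hx' := hA₁sub hx
        simp only [Finset.mem_filter] at hx'
        rw [key x, hx'.2]
      rw [Finset.sum_congr rfl hc, Finset.sum_const, hA₁card, smul_eq_mul, mul_comm]
    have e2 : ∑ x ∈ A₂, ∑ y ∈ Finset.univ.erase y0, w x y = (d - b) * v := by
      have hc : ∀ x ∈ A₂, ∑ y ∈ Finset.univ.erase y0, w x y = d - b := by
        intro x hx
        have hx' := hA₂sub hx
        simp only [Finset.mem_filter] at hx'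
        rw [key x, hx'.2]
      rw [Finset.sum_congr rfl hc, Finset.sum_const, hA₂card, smul_eq_mul, mul_comm]
    rw [e1, e2]
  refine ⟨part1, ?_⟩
  -- Part 2
  rcases Nat.eq_zero_or_pos s with hs | hs
  · subst hs
    simp only [Nat.cast_zero, zero_mul]
    positivity
  -- s ≥ 1, so there are vertices of multiplicity a and b, hence a < b ≤ d
  have hb_le_d : b ≤ d := by
    have hpos : 0 < (Finset.univ.filter (fun x => w x y0 = b)).card := lt_of_lt_of_le hs hsb
    obtain ⟨x, hx⟩ := Finset.card_pos.mp hpos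
    simp only [Finset.mem_filter] at hx
    calc b = w x y0 := hx.2.symm
    _ ≤ ∑ y, w x y := Finset.single_le_sum (fun _ _ => Nat.zero_le _) (Finset.mem_univ y0)
    _ = d := hdeg x
  have ha_lt_d : a < d := lt_of_lt_of_le hab hb_le_d
  -- gcd setup
  set g := Nat.gcd (d - a) (d - b) with hg
  have hda_pos : 0 < d - a := by omega
  have hg_pos : 0 < g := Nat.gcd_pos_of_pos_left _ hda_pos
  set α := (d - a) / g with hα
  set β := (d - b) / g with hβ
  have hαg : g * α = d - a := Nat.mul_div_cancel' (Nat.gcd_dvd_left _ _)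
  have hβg : g * β = d - b := Nat.mul_div_cancel' (Nat.gcd_dvd_right _ _)
  have hcop : Nat.Coprime α β := Nat.coprime_div_gcd_div_gcd hg_pos
  have hα_pos : 0 < α := by
    rcases Nat.eq_zero_or_pos α with h | h
    · rw [h, mul_zero] at hαg
      omega
    · exact h
  have hg_le : g ≤ b - a := by
    have hdvd : g ∣ (d - a) - (d - b) := Nat.dvd_sub (Nat.gcd_dvd_left _ _) (Nat.gcd_dvd_right _ _)
    have heq : (d - a) - (d - b) = b - a := by omega
    rw [heq] at hdvd
    exact Nat.le_of_dvd (by omega) hdvd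
  -- the key injectivity
  have main : ∀ u v u' v' : ℕ, v < α → v' < α → v ≤ v' →
      (d - a) * u + (d - b) * v = (d - a) * u' + (d - b) * v' → u = u' ∧ v = v' := by
    intro u v u' v' hv hv' hvv' heq
    have hBv : (d - b) * v' = (d - b) * v + (d - b) * (v' - v) := by
      rw [← Nat.mul_add]
      congr 1
      omega
    have hAu : (d - a) * u = (d - a) * u' + (d - b) * (v' - v) := by omega
    have huu' : u' ≤ u := by
      by_contra h
      push_neg at h
      have : (d - a) * u < (d - a) * u' := (Nat.mul_lt_mul_left hda_pos).mpr h
      omega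
    have hAuu : (d - a) * (u - u') = (d - b) * (v' - v) := by
      have hsub : (d - a) * (u - u') = (d - a) * u - (d - a) * u' := Nat.mul_sub _ _ _
      omega
    have hcancel : α * (u - u') = β * (v' - v) := by
      apply Nat.eq_of_mul_eq_mul_left hg_pos
      rw [← mul_assoc, ← mul_assoc, hαg, hβg]
      exact hAuu
    have hdvd : α ∣ (v' - v) * β := ⟨u - u', by rw [mul_comm (v' - v) β]; exact hcancel.symm⟩
    have hdvd' : α ∣ v' - v := Nat.Coprime.dvd_of_dvd_mul_right hcop hdvd
    have hveq : v' - v = 0 := Nat.eq_zero_of_dvd_of_lt hdvd' (by omega)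
    have hv_eq : v = v' := by omega
    refine ⟨?_, hv_eq⟩
    have : (d - a) * u = (d - a) * u' := by
      rw [hv_eq] at heq
      omega
    exact Nat.eq_of_mul_eq_mul_left hda_pos this
  -- membership of all values in T
  have hmem : ∀ u v : ℕ, u ≤ s → v ≤ s → (d - a) * u + (d - b) * v ∈ T := by
    intro u v hu hv
    obtain ⟨A, B, hAB⟩ := part1 u v hu hv
    rw [hT, Finset.mem_image]
    refine ⟨(A, B), ?_, hAB⟩
    simp only [Finset.mem_product, Finset.mem_powerset]
    exact ⟨Finset.subset_univ _, Finset.subset_univ _⟩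
  -- counting
  set k := min α (s + 1) with hk
  have hcard : (s + 1) * k ≤ T.card := by
    have hinj := Finset.card_le_card_of_injOn
      (f := fun p : ℕ × ℕ => (d - a) * p.1 + (d - b) * p.2)
      (s := Finset.range (s + 1) ×ˢ Finset.range k) (t := T)
      (fun p hp => by
        simp only [Finset.mem_coe, Finset.mem_product, Finset.mem_range] at hp
        exact hmem p.1 p.2 (by omega) (by omega))
      (by
        intro p hp q hq hfeq
        simp only [Finset.coe_product, Set.mem_prod, Finset.mem_coe, Finset.mem_range] at hp hq
        have hkα : k ≤ α := min_le_left _ _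
        obtain ⟨u, v⟩ := p
        obtain ⟨u', v'⟩ := q
        simp only at hfeq hp hq
        rcases le_total v v' with h | h
        · obtain ⟨h1, h2⟩ := main u v u' v' (by omega) (by omega) h hfeq
          simp [h1, h2]
        · obtain ⟨h1, h2⟩ := main u' v' u v (by omega) (by omega) h hfeq.symm
          simp [h1, h2])
    calc (s + 1) * k = (Finset.range (s + 1) ×ˢ Finset.range k).card := by
          rw [Finset.card_product, Finset.card_range, Finset.card_range]
    _ ≤ T.card := hinj
  -- conclude the real inequality
  have hba_pos : (0 : ℝ) < (b : ℝ) - a := by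
    have : (a : ℝ) < b := by exact_mod_cast hab
    linarith
  have hratio : ((d : ℝ) - a) / ((b : ℝ) - a) ≤ (α : ℝ) := by
    rw [div_le_iff₀ hba_pos]
    have hnat : (d - a : ℕ) ≤ α * (b - a) := by
      calc d - a = g * α := hαg.symm
      _ ≤ (b - a) * α := Nat.mul_le_mul_right _ hg_le
      _ = α * (b - a) := mul_comm _ _
    have h1 : (d : ℝ) - a = ((d - a : ℕ) : ℝ) := by
      rw [Nat.cast_sub ha_lt_d.le]
    have h2 : (b : ℝ) - a = ((b - a : ℕ) : ℝ) := by
      rw [Nat.cast_sub hab.le]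
    rw [h1, h2, ← Nat.cast_mul]
    exact_mod_cast hnat
  have hTR : ((s + 1 : ℕ) : ℝ) * (k : ℝ) ≤ (T.card : ℝ) := by
    rw [← Nat.cast_mul]
    exact_mod_cast hcard
  set r := ((d : ℝ) - a) / ((b : ℝ) - a) with hr
  have hmin1 : min r (s : ℝ) ≤ r := min_le_left _ _
  have hmin2 : min r (s : ℝ) ≤ (s : ℝ) := min_le_right _ _
  have hs0 : (0 : ℝ) ≤ (s : ℝ) := Nat.cast_nonneg _
  rcases min_cases α (s + 1) with ⟨hk1, hk2⟩ | ⟨hk1, hk2⟩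
  · -- k = α
    have hkr : (k : ℝ) = (α : ℝ) := by exact_mod_cast hk1
    have : (s : ℝ) * min r (s : ℝ) ≤ (s : ℝ) * (α : ℝ) :=
      mul_le_mul_of_nonneg_left (le_trans hmin1 hratio) hs0
    calc (s : ℝ) * min r (s : ℝ) ≤ (s : ℝ) * (α : ℝ) := this
    _ ≤ ((s + 1 : ℕ) : ℝ) * (k : ℝ) := by
        rw [hkr]
        push_cast
        nlinarith [Nat.cast_nonneg (α := ℝ) α]
    _ ≤ (T.card : ℝ) := hTR
  · -- k = s + 1
    have hkeq : k = s + 1 := by rw [hk]; exact hk1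
    have hkr : (k : ℝ) = ((s : ℝ) + 1) := by rw [hkeq]; push_cast; ring
    have : (s : ℝ) * min r (s : ℝ) ≤ (s : ℝ) * (s : ℝ) :=
      mul_le_mul_of_nonneg_left hmin2 hs0
    calc (s : ℝ) * min r (s : ℝ) ≤ (s : ℝ) * (s : ℝ) := this
    _ ≤ ((s + 1 : ℕ) : ℝ) * (k : ℝ) := by
        rw [hkr]
        push_cast
        nlinarith
    _ ≤ (T.card : ℝ) := hTR
end
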